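/- arXiv:1108.4292 — 10 statements merged into one kernel-verified Lean document; each statement's English description precedes it below -/
import Mathlib

section
/- Let X be a nonempty metric space and define the topological Hausdorff dimension dim_tH X as the infimum of all d ∈ [0,∞] such that X has a topological basis 𝒰 with dim_H(∂U) ≤ d−1 for every U ∈ 𝒰 (where dim_H ∅ := −1, i.e. the condition for d < 1 forces all basis elements to have empty boundary). Then dim_tH X ≤ dim_H X, the Hausdorff dimension of X. -/
open TopologicalSpace Set ENNReal NNReal

/-- The topological Hausdorff dimension of a metric space: the infimum of all `d ∈ [0,∞]`
such that the space has a topological basis all of whose members `U` satisfy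
`dimH (frontier U) ≤ d - 1` (with the convention that for `d < 1` this forces
`frontier U = ∅`, i.e. `dimH ∅ = -1`). -/
noncomputable def dimTH (X : Type*) [EMetricSpace X] : ℝ≥0∞ :=
  ⨅ (d : ℝ≥0∞) (_ : ∃ B : Set (Set X), IsTopologicalBasis B ∧
      ∀ U ∈ B, frontier U = ∅ ∨ dimH (frontier U) + 1 ≤ d), d

section Aux

open MeasureTheory Metric

variable {X : Type*} [MetricSpace X]

/-- The Hausdorff pre-measure at scale `δ`: infimum over countable covers by sets of
diameter at most `δ` of the sum of `diam ^ t`. -/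
noncomputable def preH (t : ℝ) (δ : ℝ≥0∞) (A : Set X) : ℝ≥0∞ :=
  ⨅ (E : ℕ → Set X) (_ : A ⊆ ⋃ n, E n) (_ : ∀ n, EMetric.diam (E n) ≤ δ),
    ∑' n, ⨆ _ : (E n).Nonempty, EMetric.diam (E n) ^ t

lemma preH_anti {t : ℝ} {A : Set X} {δ₁ δ₂ : ℝ≥0∞} (h : δ₁ ≤ δ₂) :
    preH t δ₂ A ≤ preH t δ₁ A := by
  refine le_iInf fun E => le_iInf fun hc => le_iInf fun hd => ?_
  exact iInf_le_of_le E (iInf_le_of_le hc (iInf_le_of_le (fun n => (hd n).trans h) le_rfl))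

variable [MeasurableSpace X] [BorelSpace X]

lemma hm_eq_iSup_preH (d : ℝ) (A : Set X) :
    μH[d] A = ⨆ (δ : ℝ≥0∞) (_ : 0 < δ), preH d δ A :=
  MeasureTheory.Measure.hausdorffMeasure_apply d A

lemma preH_eq_zero_of_hm {d : ℝ} {A : Set X} (h : μH[d] A = 0) {δ : ℝ≥0∞} (hδ : 0 < δ) :
    preH d δ A = 0 := by
  refine le_antisymm ?_ zero_le
  calc preH d δ A ≤ ⨆ (δ : ℝ≥0∞) (_ : 0 < δ), preH d δ A := le_iSup₂ (f := fun (δ : ℝ≥0∞) (_ : 0 < δ) => preH d δ A) δ hδ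
    _ = μH[d] A := (hm_eq_iSup_preH d A).symm
    _ = 0 := h

lemma hm_eq_zero_of_preH {d : ℝ} {A : Set X}
    (h : ∀ n : ℕ, preH d ((n : ℝ≥0∞) + 1)⁻¹ A = 0) : μH[d] A = 0 := by
  rw [hm_eq_iSup_preH]
  refine le_antisymm (iSup₂_le fun ρ hρ => ?_) zero_le
  obtain ⟨n, hn⟩ := ENNReal.exists_inv_nat_lt hρ.ne'
  have h2 : ((n : ℝ≥0∞) + 1)⁻¹ ≤ ρ :=
    le_trans (ENNReal.inv_le_inv.mpr le_self_add) hn.le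
  exact (preH_anti h2).trans_eq (h n)

/-- Key Chebyshev-type lemma (Eilenberg inequality at one scale): if the `(t+1)`-dimensional
Hausdorff measure of the space vanishes and `f` is `1`-Lipschitz, then for every `ε, δ`, the
set of levels `r` where the `t`-dimensional pre-measure of the fiber `f ⁻¹' {r}` at scale `δ`
is at least `ε` is Lebesgue-null. -/
lemma key_slice (f : X → ℝ) (hf : LipschitzWith 1 f) {t : ℝ} (ht : 0 ≤ t)
    (hA : μH[t + 1] (univ : Set X) = 0) {ε δ : ℝ≥0∞} (hε0 : ε ≠ 0) (hεt : ε ≠ ∞)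
    (hδ0 : 0 < δ) (hδ1 : δ ≤ 1) :
    volume {r : ℝ | ε ≤ preH t δ (f ⁻¹' {r})} = 0 := by
  classical
  have main : ∀ θ : ℝ≥0∞, 0 < θ →
      ε * volume {r : ℝ | ε ≤ preH t δ (f ⁻¹' {r})} ≤ 2 * θ := by
    intro θ hθ
    have h0 : preH (t + 1) δ (univ : Set X) = 0 := preH_eq_zero_of_hm hA hδ0
    have hlt : preH (t + 1) δ (univ : Set X) < θ := by rw [h0]; exact hθ
    rw [preH] at hlt
    simp only [iInf_lt_iff] at hlt
    obtain ⟨E, hEc, hEd, hEs⟩ := hlt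
    have hdmtop : ∀ n, EMetric.diam (E n) ≠ ∞ :=
      fun n => ((hEd n).trans_lt (hδ1.trans_lt ENNReal.one_lt_top)).ne
    set c : ℕ → ℝ := fun n => if h : (E n).Nonempty then f h.choose else 0 with hc
    set I : ℕ → Set ℝ := fun n =>
      Icc (c n - (EMetric.diam (E n)).toReal) (c n + (EMetric.diam (E n)).toReal) with hI
    set g : ℝ → ℝ≥0∞ := fun r => ∑' n, (I n).indicator (fun _ => EMetric.diam (E n) ^ t) r
      with hg
    have hgm : Measurable g :=
      Measurable.ennreal_tsum fun n => measurable_const.indicator measurableSet_Icc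
    have hle : ∀ r : ℝ, preH t δ (f ⁻¹' {r}) ≤ g r := by
      intro r
      have step1 : preH t δ (f ⁻¹' {r}) ≤
          ∑' n, ⨆ _ : (E n ∩ f ⁻¹' {r}).Nonempty, EMetric.diam (E n ∩ f ⁻¹' {r}) ^ t := by
        rw [preH]
        refine iInf_le_of_le (fun n => E n ∩ f ⁻¹' {r}) (iInf_le_of_le ?_ (iInf_le_of_le ?_
          le_rfl))
        · intro y hy
          obtain ⟨n, hn⟩ := mem_iUnion.mp (hEc (mem_univ y))
          exact mem_iUnion.mpr ⟨n, hn, hy⟩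
        · exact fun n => (EMetric.diam_mono inter_subset_left).trans (hEd n)
      refine step1.trans (ENNReal.tsum_le_tsum fun n => ?_)
      refine iSup_le fun hne => ?_
      have hEn : (E n).Nonempty := hne.mono inter_subset_left
      have hrI : r ∈ I n := by
        obtain ⟨y, hyE, hyf⟩ := hne
        have hyf' : f y = r := hyf
        have hx0 : hEn.choose ∈ E n := hEn.choose_spec
        have hcn : c n = f hEn.choose := by rw [hc]; exact dif_pos hEn
        have hdist : dist (f y) (f hEn.choose) ≤ (EMetric.diam (E n)).toReal := by
          have h1 := hf.dist_le_mul y hEn.choose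
          simp only [NNReal.coe_one, one_mul] at h1
          refine h1.trans ?_
          rw [dist_edist]
          exact ENNReal.toReal_mono (hdmtop n) (EMetric.edist_le_diam_of_mem hyE hx0)
        rw [Real.dist_eq, abs_le] at hdist
        rw [hI]
        constructor
        · rw [hcn]; linarith [hdist.1, hyf']
        · rw [hcn]; linarith [hdist.2, hyf']
      calc EMetric.diam (E n ∩ f ⁻¹' {r}) ^ t ≤ EMetric.diam (E n) ^ t :=
            ENNReal.rpow_le_rpow (EMetric.diam_mono inter_subset_left) ht
        _ = (I n).indicator (fun _ => EMetric.diam (E n) ^ t) r :=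
            (Set.indicator_of_mem hrI fun _ => EMetric.diam (E n) ^ t).symm
    have hint : ∫⁻ r, g r ≤ 2 * θ := by
      have h1 : ∫⁻ r, g r =
          ∑' n, EMetric.diam (E n) ^ t * volume (I n) := by
        rw [hg]
        rw [lintegral_tsum fun n =>
          (measurable_const.indicator measurableSet_Icc).aemeasurable]
        congr 1
        ext n
        rw [lintegral_indicator measurableSet_Icc, setLIntegral_const]
      rw [h1]
      have h2 : ∀ n, EMetric.diam (E n) ^ t * volume (I n) ≤
          2 * ⨆ _ : (E n).Nonempty, EMetric.diam (E n) ^ (t + 1) := by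
        intro n
        rcases (E n).eq_empty_or_nonempty with he | hne
        · have hd0 : EMetric.diam (E n) = 0 := by rw [he]; exact Metric.ediam_empty
          have : volume (I n) = 0 := by
            rw [hI]
            simp [hd0]
          rw [this, mul_zero]
          exact zero_le
        · have hvol : volume (I n) = 2 * EMetric.diam (E n) := by
            rw [hI, Real.volume_Icc]
            have : c n + (EMetric.diam (E n)).toReal - (c n - (EMetric.diam (E n)).toReal)
                = 2 * (EMetric.diam (E n)).toReal := by ring
            rw [this, ENNReal.ofReal_mul (by norm_num), ENNReal.ofReal_toReal (hdmtop n)]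
            norm_num
          have hpow : EMetric.diam (E n) ^ t * EMetric.diam (E n)
              = EMetric.diam (E n) ^ (t + 1) := by
            rcases eq_or_ne (EMetric.diam (E n)) 0 with h0 | h0
            · rw [h0, mul_zero, ENNReal.zero_rpow_of_pos (by linarith)]
            · rw [ENNReal.rpow_add t 1 h0 (hdmtop n), ENNReal.rpow_one]
          rw [iSup_pos hne, hvol, ← hpow]
          ring_nf
          exact le_rfl
      calc ∑' n, EMetric.diam (E n) ^ t * volume (I n)
          ≤ ∑' n, 2 * ⨆ _ : (E n).Nonempty, EMetric.diam (E n) ^ (t + 1) :=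
            ENNReal.tsum_le_tsum h2
        _ = 2 * ∑' n, ⨆ _ : (E n).Nonempty, EMetric.diam (E n) ^ (t + 1) :=
            ENNReal.tsum_mul_left
        _ ≤ 2 * θ := mul_le_mul_right hEs.le 2
    calc ε * volume {r : ℝ | ε ≤ preH t δ (f ⁻¹' {r})}
        ≤ ε * volume {r : ℝ | ε ≤ g r} := by
          refine mul_le_mul_right (measure_mono fun r hr => ?_) ε
          exact le_trans hr (hle r)
      _ ≤ ∫⁻ r, g r := mul_meas_ge_le_lintegral₀ hgm.aemeasurable ε
      _ ≤ 2 * θ := hint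
  have hz : ε * volume {r : ℝ | ε ≤ preH t δ (f ⁻¹' {r})} = 0 := by
    refine le_antisymm ?_ zero_le
    refine ENNReal.le_of_forall_pos_le_add fun θ hθ _ => ?_
    rw [zero_add]
    have hθ' : (0 : ℝ≥0∞) < (θ : ℝ≥0∞) / 2 :=
      ENNReal.div_pos (by exact_mod_cast hθ.ne') ENNReal.ofNat_ne_top
    have := main ((θ : ℝ≥0∞) / 2) hθ'
    rwa [ENNReal.mul_div_cancel two_ne_zero ENNReal.ofNat_ne_top] at this
  rcases mul_eq_zero.mp hz with h | h
  · exact absurd h hε0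
  · exact h

lemma sphere_preimage (x : X) (r : ℝ) : (fun y => dist y x) ⁻¹' {r} = Metric.sphere x r := rfl

/-- If `μH[1]` of the space vanishes, then around each point almost every radius gives an
empty sphere. -/
lemma bad_sphere_nonempty_null (x : X) (hA : μH[(1 : ℝ)] (univ : Set X) = 0) :
    volume {r : ℝ | (Metric.sphere x r).Nonempty} = 0 := by
  have hA' : μH[(0 : ℝ) + 1] (univ : Set X) = 0 := by
    rw [show (0 : ℝ) + 1 = 1 by norm_num]; exact hA
  have hk := key_slice (fun y => dist y x) (LipschitzWith.dist_left x) le_rfl hA'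
    (ε := 1) (δ := 1) one_ne_zero ENNReal.one_ne_top zero_lt_one le_rfl
  refine measure_mono_null (fun r hr => ?_) hk
  rw [mem_setOf_eq, sphere_preimage]
  rw [preH]
  refine le_iInf fun E => le_iInf fun hc => le_iInf fun _ => ?_
  obtain ⟨y, hy⟩ := hr
  obtain ⟨n, hn⟩ := mem_iUnion.mp (hc hy)
  calc (1 : ℝ≥0∞) = ⨆ _ : (E n).Nonempty, EMetric.diam (E n) ^ (0 : ℝ) := by
        rw [iSup_pos ⟨y, hn⟩, ENNReal.rpow_zero]
    _ ≤ ∑' n, ⨆ _ : (E n).Nonempty, EMetric.diam (E n) ^ (0 : ℝ) := ENNReal.le_tsum n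

/-- If `μH[q+1]` of the space vanishes, then around each point almost every radius gives a
sphere of zero `q`-dimensional Hausdorff measure. -/
lemma bad_sphere_dimH_null (x : X) {q : ℝ} (hq : 0 ≤ q)
    (hA : μH[q + 1] (univ : Set X) = 0) :
    volume {r : ℝ | μH[q] (Metric.sphere x r) ≠ 0} = 0 := by
  set T : ℕ → ℕ → Set ℝ := fun n m =>
    {r | ((m : ℝ≥0∞) + 1)⁻¹ ≤ preH q ((n : ℝ≥0∞) + 1)⁻¹ ((fun y => dist y x) ⁻¹' {r})} with hT
  have hTnull : ∀ n m, volume (T n m) = 0 := by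
    intro n m
    refine key_slice (fun y => dist y x) (LipschitzWith.dist_left x) hq hA ?_ ?_ ?_ ?_
    · exact ENNReal.inv_ne_zero.mpr (ENNReal.add_ne_top.mpr ⟨ENNReal.natCast_ne_top m,
        ENNReal.one_ne_top⟩)
    · exact ENNReal.inv_ne_top.mpr (zero_lt_one.trans_le le_add_self).ne'
    · exact ENNReal.inv_pos.mpr (ENNReal.add_ne_top.mpr ⟨ENNReal.natCast_ne_top n,
        ENNReal.one_ne_top⟩)
    · exact ENNReal.inv_le_one.mpr le_add_self
  refine measure_mono_null (fun r hr => ?_)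
    (measure_iUnion_null fun n => measure_iUnion_null (hTnull n))
  simp only [mem_iUnion]
  by_contra hco
  push_neg at hco
  apply hr
  refine hm_eq_zero_of_preH fun n => ?_
  rw [← sphere_preimage]
  refine le_antisymm ?_ zero_le
  refine ENNReal.le_of_forall_pos_le_add fun ε' hε' _ => ?_
  rw [zero_add]
  obtain ⟨m, hm⟩ := ENNReal.exists_inv_nat_lt (a := (ε' : ℝ≥0∞)) (by exact_mod_cast hε'.ne')
  have h1 : preH q ((n : ℝ≥0∞) + 1)⁻¹ ((fun y => dist y x) ⁻¹' {r})
      < ((m : ℝ≥0∞) + 1)⁻¹ := by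
    have := hco n m
    rw [hT] at this
    exact lt_of_not_ge this
  have h2 : ((m : ℝ≥0∞) + 1)⁻¹ ≤ (m : ℝ≥0∞)⁻¹ := ENNReal.inv_le_inv.mpr le_self_add
  exact le_trans (h1.trans_le h2).le hm.le

end Aux

open MeasureTheory Metric in
lemma basis_of_good {X : Type*} [MetricSpace X] (G : X → ℝ → Prop)
    (hG : ∀ (x : X) (a b : ℝ), 0 < a → a < b → ∃ r, a < r ∧ r < b ∧ G x r) :
    IsTopologicalBasis {U : Set X | ∃ x r, 0 < r ∧ G x r ∧ U = Metric.ball x r} := by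
  refine isTopologicalBasis_of_isOpen_of_nhds ?_ ?_
  · rintro u ⟨x, r, hr, hGr, rfl⟩
    exact isOpen_ball
  · intro a u hau hu
    obtain ⟨ε, hε, hsub⟩ := Metric.isOpen_iff.mp hu a hau
    obtain ⟨r, hr1, hr2, hr3⟩ := hG a (ε / 2) ε (by linarith) (by linarith)
    have hr0 : 0 < r := by linarith
    exact ⟨Metric.ball a r, ⟨a, r, hr0, hr3, rfl⟩, mem_ball_self hr0,
      fun y hy => hsub (Metric.ball_subset_ball hr2.le hy)⟩

open MeasureTheory in
lemma good_of_null {N : Set ℝ} (hN : volume N = 0) (a b : ℝ) (hab : a < b) :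
    ∃ r, a < r ∧ r < b ∧ r ∉ N := by
  by_contra h
  push_neg at h
  have hsub : Set.Ioo a b ⊆ N := fun r hr => h r hr.1 hr.2
  have hle : volume (Set.Ioo a b) ≤ 0 := hN ▸ measure_mono hsub
  rw [Real.volume_Ioo] at hle
  have : (0 : ℝ≥0∞) < ENNReal.ofReal (b - a) := ENNReal.ofReal_pos.mpr (by linarith)
  exact absurd (le_antisymm hle zero_le) this.ne'

open MeasureTheory in
theorem stmt0 (X : Type*) [MetricSpace X] [Nonempty X] :
    dimTH X ≤ dimH (Set.univ : Set X) := by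
  borelize X
  have hle : ∀ d : ℝ≥0∞, (∃ B : Set (Set X), IsTopologicalBasis B ∧
      ∀ U ∈ B, frontier U = ∅ ∨ dimH (frontier U) + 1 ≤ d) → dimTH X ≤ d := by
    intro d h
    exact iInf₂_le d h
  rcases lt_or_ge (dimH (Set.univ : Set X)) 1 with hD | hD
  · -- small dimension: clopen basis of balls with empty spheres
    have hA : μH[(1 : ℝ)] (Set.univ : Set X) = 0 := by
      have := hausdorffMeasure_of_dimH_lt (s := (Set.univ : Set X))
        (d := 1) (by simpa using hD)
      simpa using this
    have hbasis := basis_of_good (fun (x : X) (r : ℝ) => ¬(Metric.sphere x r).Nonempty)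
      (fun x a b ha hab => good_of_null (bad_sphere_nonempty_null x hA) a b hab)
    refine le_trans (hle 0 ⟨_, hbasis, ?_⟩) zero_le
    rintro U ⟨x, r, hr, hG, rfl⟩
    left
    have hs : Metric.sphere x r = ∅ := Set.not_nonempty_iff_eq_empty.mp hG
    exact Set.eq_empty_of_subset_empty (hs ▸ Metric.frontier_ball_subset_sphere)
  · rcases eq_or_ne (dimH (Set.univ : Set X)) ⊤ with hT | hT
    · rw [hT]; exact le_top
    · by_contra hcon
      push_neg at hcon
      obtain ⟨d, hd1, hd2⟩ := ENNReal.lt_iff_exists_nnreal_btwn.mp hcon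
      have hd1R : 1 ≤ (d : ℝ) := by
        have h1 : (1 : ℝ≥0∞) < (d : ℝ≥0∞) := lt_of_le_of_lt hD hd1
        have : (1 : ℝ≥0) < d := by exact_mod_cast h1
        exact_mod_cast this.le
      set q : ℝ := (d : ℝ) - 1 with hqdef
      have hq0 : 0 ≤ q := by rw [hqdef]; linarith
      have hq1 : q + 1 = (d : ℝ) := by rw [hqdef]; ring
      have hA : μH[q + 1] (Set.univ : Set X) = 0 := by
        rw [hq1]
        exact hausdorffMeasure_of_dimH_lt hd1
      have hbasis := basis_of_good (fun (x : X) (r : ℝ) => μH[q] (Metric.sphere x r) = 0)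
        (fun x a b ha hab => by
          obtain ⟨r, h1, h2, h3⟩ := good_of_null (bad_sphere_dimH_null x hq0 hA) a b hab
          exact ⟨r, h1, h2, not_not.mp h3⟩)
      refine absurd (hle d ⟨_, hbasis, ?_⟩) (not_le.mpr hd2)
      rintro U ⟨x, r, hr, hG, rfl⟩
      right
      have h1 : dimH (frontier (Metric.ball x r)) ≤ dimH (Metric.sphere x r) :=
        dimH_mono Metric.frontier_ball_subset_sphere
      have h2 : dimH (Metric.sphere x r) ≤ ENNReal.ofReal q := by
        have hne : μH[((q.toNNReal : ℝ≥0) : ℝ)] (Metric.sphere x r) ≠ ∞ := by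
          rw [Real.coe_toNNReal q hq0, hG]
          exact ENNReal.zero_ne_top
        exact dimH_le_of_hausdorffMeasure_ne_top hne
      calc dimH (frontier (Metric.ball x r)) + 1 ≤ ENNReal.ofReal q + 1 :=
            add_le_add_left (h1.trans h2) 1
        _ = ENNReal.ofReal (q + 1) := by
            rw [ENNReal.ofReal_add hq0 zero_le_one, ENNReal.ofReal_one]
        _ = (d : ℝ≥0∞) := by rw [hq1, ENNReal.ofReal_coe_nnreal]
end

section
/- If Y is a metric space, X ⊆ Y is a subspace, and 𝒰 is a topological basis of Y, then {U ∩ X : U ∈ 𝒰} is a topological basis of X and the boundary of U ∩ X relative to X is contained in the boundary of U relative to Y. Consequently the topological Hausdorff dimension is monotone: dim_tH X ≤ dim_tH Y. -/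
open TopologicalSpace Set ENNReal NNReal MeasureTheory

/-- Monotonicity of the topological Hausdorff dimension: a basis of `Y` restricts to a
basis of a subspace `X ⊆ Y` with smaller relative boundaries, and `dimTH X ≤ dimTH Y`. -/
theorem stmt1 (Y : Type*) [MetricSpace Y] (X : Set Y)
    (B : Set (Set Y)) (hB : IsTopologicalBasis B) :
    IsTopologicalBasis {V : Set X | ∃ U ∈ B, V = ((↑) : X → Y) ⁻¹' U} ∧
    (∀ U ∈ B, frontier (((↑) : X → Y) ⁻¹' U) ⊆ ((↑) : X → Y) ⁻¹' (frontier U)) ∧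
    dimTH X ≤ dimTH Y := by
  have hbasis : IsTopologicalBasis {V : Set X | ∃ U ∈ B, V = ((↑) : X → Y) ⁻¹' U} := by
    have := hB.isInducing (f := ((↑) : X → Y)) Topology.IsInducing.subtypeVal
    convert this using 1
    ext V
    simp [Set.mem_image, eq_comm]
  have hfr : ∀ U : Set Y, frontier (((↑) : X → Y) ⁻¹' U) ⊆ ((↑) : X → Y) ⁻¹' (frontier U) :=
    fun U => continuous_subtype_val.frontier_preimage_subset U
  refine ⟨hbasis, fun U _ => hfr U, ?_⟩
  refine le_iInf₂ fun d hd => ?_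
  obtain ⟨B', hB', hd'⟩ := hd
  refine iInf₂_le d ⟨{V : Set X | ∃ U ∈ B', V = ((↑) : X → Y) ⁻¹' U}, ?_, ?_⟩
  · have := hB'.isInducing (f := ((↑) : X → Y)) Topology.IsInducing.subtypeVal
    convert this using 1
    ext V
    simp [Set.mem_image, eq_comm]
    ext V
    simp [Set.mem_image, eq_comm]
  · rintro V ⟨U, hU, rfl⟩
    rcases hd' U hU with h | h
    · left
      have := hfr U
      rw [h] at this
      simpa [Set.subset_empty_iff] using this
    · right
      refine le_trans (add_le_add_left ?_ 1) h
      calc dimH (frontier (((↑) : X → Y) ⁻¹' U))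
          ≤ dimH (((↑) : X → Y) ⁻¹' (frontier U)) := dimH_mono (hfr U)
        _ = dimH (((↑) : X → Y) '' (((↑) : X → Y) ⁻¹' (frontier U))) :=
            (isometry_subtype_coe.dimH_image _).symm
        _ ≤ dimH (frontier U) := dimH_mono (Set.image_preimage_subset _ _)
end

section
/- Let X be a metric space and f : X → ℝ be Lipschitz with Lipschitz constant at most 1. If s ≥ 1 and the s-dimensional Hausdorff measure of X is zero, then for Lebesgue-almost every y ∈ ℝ the (s−1)-dimensional Hausdorff measure of the fiber f⁻¹(y) is zero. -/
open Set ENNReal NNReal MeasureTheory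

open Filter in
/-- Coarea consequence: if `f : X → ℝ` is `1`-Lipschitz, `s ≥ 1`, and the `s`-dimensional
Hausdorff measure of `X` vanishes, then for Lebesgue-a.e. `y ∈ ℝ` the `(s-1)`-dimensional
Hausdorff measure of the fiber `f ⁻¹ {y}` vanishes. -/
theorem stmt3 (X : Type*) [MetricSpace X] [MeasurableSpace X] [BorelSpace X]
    (f : X → ℝ) (hf : LipschitzWith 1 f) (s : ℝ) (hs : 1 ≤ s)
    (hX : μH[s] (Set.univ : Set X) = 0) :
    ∀ᵐ y : ℝ, μH[s - 1] (f ⁻¹' {y}) = 0 := by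
  classical
  have hs1 : (0:ℝ) ≤ s - 1 := by linarith
  -- extract good covers
  have hcovs : ∀ k : ℕ, ∃ t : ℕ → Set X, (Set.univ : Set X) ⊆ ⋃ n, t n ∧
      (∀ n, EMetric.diam (t n) ≤ (1 / (k+1) : ℝ≥0∞)) ∧
      ∑' n, ⨆ _ : (t n).Nonempty, EMetric.diam (t n) ^ s ≤ (1/2 : ℝ≥0∞) ^ k := by
    intro k
    rw [Measure.hausdorffMeasure_apply] at hX
    have h0 : (⨅ (t : ℕ → Set X) (_ : Set.univ ⊆ ⋃ n, t n)
        (_ : ∀ n, EMetric.diam (t n) ≤ (1/(k+1) : ℝ≥0∞)),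
        ∑' n, ⨆ _ : (t n).Nonempty, EMetric.diam (t n) ^ s) = 0 := by
      refine le_antisymm ?_ (zero_le)
      rw [← hX]
      exact le_iSup₂_of_le (1/(k+1) : ℝ≥0∞) (by simp) le_rfl
    have hlt : (⨅ (t : ℕ → Set X) (_ : Set.univ ⊆ ⋃ n, t n)
        (_ : ∀ n, EMetric.diam (t n) ≤ (1/(k+1) : ℝ≥0∞)),
        ∑' n, ⨆ _ : (t n).Nonempty, EMetric.diam (t n) ^ s) < (1/2 : ℝ≥0∞) ^ k := by
      rw [h0]; exact ENNReal.pow_pos (by norm_num) _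
    obtain ⟨t, ht⟩ := iInf_lt_iff.mp hlt
    obtain ⟨h1, ht⟩ := iInf_lt_iff.mp ht
    obtain ⟨h2, ht⟩ := iInf_lt_iff.mp ht
    exact ⟨t, h1, h2, ht.le⟩
  choose t hcov hdiam hsum using hcovs
  have hfin : ∀ k n, EMetric.diam (t k n) ≠ ∞ :=
    fun k n => ((hdiam k n).trans_lt (ENNReal.div_lt_top one_ne_top (by simp))).ne
  set c : ℕ → ℕ → ℝ := fun k n => if h : (t k n).Nonempty then f h.choose else 0 with hc
  set I : ℕ → ℕ → Set ℝ := fun k n =>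
    Icc (c k n - (EMetric.diam (t k n)).toReal) (c k n + (EMetric.diam (t k n)).toReal) with hI
  set g : ℕ → ℝ → ℝ≥0∞ := fun k y =>
    ∑' n, (I k n).indicator
      (fun _ => ⨆ _ : (t k n).Nonempty, EMetric.diam (t k n) ^ (s-1)) y with hg
  have hmeas : ∀ k, Measurable (g k) := fun k =>
    Measurable.ennreal_tsum fun n => measurable_const.indicator measurableSet_Icc
  -- Claim A
  have hA : ∀ y : ℝ, μH[s-1] (f ⁻¹' {y}) ≤ Filter.liminf (fun k => g k y) Filter.atTop := by
    intro y
    rw [Measure.hausdorffMeasure_apply]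
    refine iSup₂_le fun r hr => ?_
    refine Filter.le_liminf_of_le (by isBoundedDefault) ?_
    have hev : ∀ᶠ k : ℕ in atTop, (1/(k+1) : ℝ≥0∞) ≤ r := by
      obtain ⟨k0, hk0⟩ := ENNReal.exists_inv_nat_lt hr.ne'
      filter_upwards [eventually_ge_atTop k0] with k hk
      refine le_trans ?_ hk0.le
      rw [one_div]
      refine ENNReal.inv_le_inv.mpr ?_
      calc (k0 : ℝ≥0∞) ≤ (k : ℝ≥0∞) := by exact_mod_cast Nat.cast_le.mpr hk
        _ ≤ (k : ℝ≥0∞) + 1 := le_self_add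
    filter_upwards [hev] with k hk
    set u : ℕ → Set X := fun n => if y ∈ I k n then t k n else ∅ with hu
    have hsub : f ⁻¹' {y} ⊆ ⋃ n, u n := by
      intro x hx
      obtain ⟨n, hn⟩ := mem_iUnion.mp (hcov k (mem_univ x))
      have hne : (t k n).Nonempty := ⟨x, hn⟩
      have hyI : y ∈ I k n := by
        have hcc : c k n = f hne.choose := dif_pos hne
        have hd : dist (f x) (f hne.choose) ≤ (EMetric.diam (t k n)).toReal := by
          rw [dist_edist]
          refine ENNReal.toReal_mono (hfin k n) ?_
          calc edist (f x) (f hne.choose) ≤ edist x hne.choose := by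
                simpa using hf x hne.choose
            _ ≤ EMetric.diam (t k n) := EMetric.edist_le_diam_of_mem hn hne.choose_spec
        have hfy : f x = y := hx
        rw [Real.dist_eq, hfy, abs_le] at hd
        simp only [hI, mem_Icc, hcc]
        constructor <;> linarith [hd.1, hd.2]
      refine mem_iUnion.mpr ⟨n, ?_⟩
      simp only [hu, if_pos hyI]
      exact hn
    have hdu : ∀ n, EMetric.diam (u n) ≤ r := by
      intro n
      simp only [hu]
      split
      · exact (hdiam k n).trans hk
      · exact (EMetric.diam_empty (X := X)).le.trans zero_le
    refine le_trans (iInf₂_le_of_le u hsub (iInf_le_of_le hdu le_rfl)) ?_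
    refine ENNReal.tsum_le_tsum fun n => ?_
    by_cases hyI : y ∈ I k n
    · simp only [hu, if_pos hyI, indicator_of_mem hyI]
      exact le_rfl
    · simp [hu, if_neg hyI, indicator_of_notMem hyI]
  -- Claim B
  have hB : ∀ k, ∫⁻ y, g k y ≤ 2 * (1/2 : ℝ≥0∞) ^ k := by
    intro k
    rw [hg]
    simp only
    rw [lintegral_tsum (fun n => (measurable_const.indicator measurableSet_Icc).aemeasurable)]
    have hterm : ∀ n, (∫⁻ y, (I k n).indicator
        (fun _ => ⨆ _ : (t k n).Nonempty, EMetric.diam (t k n) ^ (s-1)) y) ≤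
        2 * ⨆ _ : (t k n).Nonempty, EMetric.diam (t k n) ^ s := by
      intro n
      rw [lintegral_indicator_const measurableSet_Icc]
      by_cases hne : (t k n).Nonempty
      · simp only [hne, iSup_pos]
        have hvol : volume (I k n) ≤ 2 * EMetric.diam (t k n) := by
          simp only [hI, Real.volume_Icc]
          have : c k n + (EMetric.diam (t k n)).toReal -
              (c k n - (EMetric.diam (t k n)).toReal) = 2 * (EMetric.diam (t k n)).toReal := by
            ring
          rw [this, ENNReal.ofReal_mul (by norm_num), ENNReal.ofReal_toReal (hfin k n)]
          norm_num
        calc EMetric.diam (t k n) ^ (s-1) * volume (I k n)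
            ≤ EMetric.diam (t k n) ^ (s-1) * (2 * EMetric.diam (t k n)) :=
              mul_le_mul_right hvol _
          _ = 2 * (EMetric.diam (t k n) ^ (s-1) * EMetric.diam (t k n) ^ (1:ℝ)) := by
              rw [ENNReal.rpow_one]; ring
          _ = 2 * EMetric.diam (t k n) ^ s := by
              rw [← ENNReal.rpow_add_of_nonneg _ _ hs1 zero_le_one]
              norm_num
      · simp [hne]
    calc (∑' n, (∫⁻ y, (I k n).indicator
          (fun _ => ⨆ _ : (t k n).Nonempty, EMetric.diam (t k n) ^ (s-1)) y))
        ≤ ∑' n, 2 * ⨆ _ : (t k n).Nonempty, EMetric.diam (t k n) ^ s :=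
          ENNReal.tsum_le_tsum hterm
      _ = 2 * ∑' n, ⨆ _ : (t k n).Nonempty, EMetric.diam (t k n) ^ s := ENNReal.tsum_mul_left
      _ ≤ 2 * (1/2 : ℝ≥0∞) ^ k := mul_le_mul_right (hsum k) _
  -- integrate
  have hF : ∫⁻ y, Filter.liminf (fun k => g k y) Filter.atTop = 0 := by
    refine le_antisymm ?_ (zero_le)
    refine le_trans (lintegral_liminf_le hmeas) ?_
    have htend : Filter.Tendsto (fun k : ℕ => 2 * (1/2 : ℝ≥0∞) ^ k) atTop (nhds 0) := by
      have : Filter.Tendsto (fun k : ℕ => ((1/2 : ℝ≥0∞)) ^ k) atTop (nhds 0) :=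
        ENNReal.tendsto_pow_atTop_nhds_zero_of_lt_one (by norm_num)
      simpa using ENNReal.Tendsto.const_mul this (Or.inr (by norm_num))
    calc Filter.liminf (fun k => ∫⁻ y, g k y) atTop
        ≤ Filter.liminf (fun k : ℕ => 2 * (1/2 : ℝ≥0∞) ^ k) atTop :=
          Filter.liminf_le_liminf (Filter.Eventually.of_forall hB)
      _ = 0 := htend.liminf_eq
  have hF0 := (lintegral_eq_zero_iff (Measurable.liminf hmeas)).mp hF
  filter_upwards [hF0] with y hy
  have hy0 : Filter.liminf (fun k => g k y) Filter.atTop = 0 := hy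
  exact le_antisymm ((hA y).trans hy0.le) (zero_le)
end

section
/- Let X be a metric space with dim_H X ≥ 1. Then for every x₀ ∈ X and every ε > 0 there exists r > 0 with dim_H(∂B) ≤ dim_H X − 1 + ε, where ∂B is the boundary of the open ball of radius r around x₀; in fact the set of radii r for which dim_H({x : d(x,x₀) = r}) ≤ dim_H X − 1 + ε fails has Lebesgue measure zero in (0,∞). -/
open Set ENNReal NNReal MeasureTheory
open Filter EMetric


/-- Eilenberg-type coarea inequality consequence: if `μH[d+1]` of the whole space vanishes,
then for a.e. `y` the fiber of a 1-Lipschitz map has `μH[d]` zero, hence `dimH ≤ d`. -/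
lemma key {X : Type*} [MetricSpace X] [MeasurableSpace X] [BorelSpace X] (f : X → ℝ) (hf : LipschitzWith 1 f)
    (d : ℝ≥0) (hd : 0 < d) (hμ : μH[(d : ℝ) + 1] (Set.univ : Set X) = 0) :
    volume {y : ℝ | ¬ dimH {x | f x = y} ≤ (d : ℝ≥0∞)} = 0 := by
  -- choose good covers
  have h0 : (⨆ (r : ℝ≥0∞) (_ : 0 < r),
      ⨅ (t : ℕ → Set X) (_ : (Set.univ : Set X) ⊆ ⋃ n, t n) (_ : ∀ n, diam (t n) ≤ r),
        ∑' n, ⨆ _ : (t n).Nonempty, diam (t n) ^ ((d : ℝ) + 1)) = 0 := by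
    simp only [EMetric.diam]; rw [← MeasureTheory.Measure.hausdorffMeasure_apply]; exact hμ
  have hcov : ∀ k : ℕ, ∃ t : ℕ → Set X, (Set.univ : Set X) ⊆ ⋃ n, t n ∧
      (∀ n, diam (t n) ≤ ((k : ℝ≥0∞) + 1)⁻¹) ∧
      ∑' n, ⨆ _ : (t n).Nonempty, diam (t n) ^ ((d : ℝ) + 1) < (2 : ℝ≥0∞)⁻¹ ^ k := by
    intro k
    have hr : (0 : ℝ≥0∞) < ((k : ℝ≥0∞) + 1)⁻¹ := by
      rw [ENNReal.inv_pos]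
      exact ENNReal.add_ne_top.2 ⟨ENNReal.natCast_ne_top k, one_ne_top⟩
    have hle : (⨅ (t : ℕ → Set X) (_ : (Set.univ : Set X) ⊆ ⋃ n, t n)
        (_ : ∀ n, diam (t n) ≤ ((k : ℝ≥0∞) + 1)⁻¹),
          ∑' n, ⨆ _ : (t n).Nonempty, diam (t n) ^ ((d : ℝ) + 1)) ≤ 0 := by
      refine le_trans ?_ h0.le
      exact le_iSup₂ (f := fun (r : ℝ≥0∞) (_ : 0 < r) =>
        ⨅ (t : ℕ → Set X) (_ : (Set.univ : Set X) ⊆ ⋃ n, t n) (_ : ∀ n, diam (t n) ≤ r),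
          ∑' n, ⨆ _ : (t n).Nonempty, diam (t n) ^ ((d : ℝ) + 1)) _ hr
    have hlt : (⨅ (t : ℕ → Set X) (_ : (Set.univ : Set X) ⊆ ⋃ n, t n)
        (_ : ∀ n, diam (t n) ≤ ((k : ℝ≥0∞) + 1)⁻¹),
          ∑' n, ⨆ _ : (t n).Nonempty, diam (t n) ^ ((d : ℝ) + 1)) < (2 : ℝ≥0∞)⁻¹ ^ k :=
      lt_of_le_of_lt hle (ENNReal.pow_pos (ENNReal.inv_pos.2 (by norm_num)) k)
    simpa only [iInf_lt_iff, exists_prop] using hlt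
  choose t htcov htdiam htsum using hcov
  -- the measurable majorant functions
  set g : ℕ → ℝ → ℝ≥0∞ := fun k y =>
    ∑' n, (closure (f '' t k n)).indicator (fun _ => diam (t k n) ^ (d : ℝ)) y with hg
  have hgmeas : ∀ k, Measurable (g k) := fun k =>
    Measurable.ennreal_tsum fun n =>
      (measurable_const.indicator isClosed_closure.measurableSet)
  -- pointwise bound on fibers
  have hpoint : ∀ y : ℝ, μH[(d : ℝ)] {x | f x = y} ≤ liminf (fun k => g k y) atTop := by
    intro y
    have hcover : μH[(d : ℝ)] {x | f x = y} ≤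
        liminf (fun k => ∑' n, diam (t k n ∩ {x | f x = y}) ^ (d : ℝ)) atTop := by
      refine MeasureTheory.Measure.hausdorffMeasure_le_liminf_tsum (d : ℝ) _
        (fun k : ℕ => (k : ℝ≥0∞)⁻¹) ENNReal.tendsto_inv_nat_nhds_zero
        (fun k n => t k n ∩ {x | f x = y}) ?_ ?_
      · filter_upwards [eventually_ge_atTop 1] with k hk i
        refine le_trans (diam_mono inter_subset_left) (le_trans (htdiam k i) ?_)
        exact ENNReal.inv_le_inv.2 (le_add_of_nonneg_right zero_le_one) |>.trans
          (ENNReal.inv_le_inv.2 le_rfl)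
      · filter_upwards with k
        intro x hx
        rcases mem_iUnion.1 (htcov k (mem_univ x)) with ⟨n, hn⟩
        exact mem_iUnion.2 ⟨n, hn, hx⟩
    refine hcover.trans (liminf_le_liminf ?_)
    filter_upwards with k
    refine ENNReal.tsum_le_tsum fun n => ?_
    rcases eq_empty_or_nonempty (t k n ∩ {x | f x = y}) with he | ⟨x, hx, hfx⟩
    · rw [he]
      simp [EMetric.diam, ENNReal.rpow_eq_zero_iff, hd, NNReal.coe_pos.2 hd]
    · have hy : y ∈ closure (f '' t k n) := subset_closure ⟨x, hx, hfx⟩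
      rw [Set.indicator_of_mem hy]
      exact ENNReal.rpow_le_rpow (diam_mono inter_subset_left) (NNReal.coe_nonneg d)
  -- integral bound
  have hint : ∀ k, ∫⁻ y, g k y ≤ (2 : ℝ≥0∞)⁻¹ ^ k := by
    intro k
    rw [hg]
    rw [lintegral_tsum fun n =>
      (measurable_const.indicator isClosed_closure.measurableSet).aemeasurable]
    refine le_trans (ENNReal.tsum_le_tsum fun n => ?_) (htsum k).le
    rw [lintegral_indicator isClosed_closure.measurableSet _, setLIntegral_const]
    rcases eq_empty_or_nonempty (t k n) with he | hne
    · simp [he]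
    · rw [iSup_pos hne]
      have hvol : volume (closure (f '' t k n)) ≤ diam (t k n) := by
        refine (Real.volume_le_diam _).trans ?_
        rw [EMetric.diam_closure]
        simpa [EMetric.diam] using hf.ediam_image_le (t k n)
      refine le_trans (mul_le_mul_right hvol _) ?_
      rcases eq_or_ne (diam (t k n)) 0 with h0' | h0'
      · simp [h0']
      · have hnt : diam (t k n) ≠ ⊤ :=
          ne_top_of_le_ne_top (ENNReal.inv_ne_top.2 (by simp : ((k : ℝ≥0∞) + 1) ≠ 0)) (htdiam k n)
        rw [ENNReal.rpow_add _ _ h0' hnt, ENNReal.rpow_one]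
  -- Fatou
  set h : ℝ → ℝ≥0∞ := fun y => liminf (fun k => g k y) atTop with hh
  have hmeas : Measurable h := Measurable.liminf hgmeas
  have hzero : ∫⁻ y, h y = 0 := by
    refine le_antisymm ?_ (zero_le)
    refine le_trans (lintegral_liminf_le hgmeas) ?_
    have : liminf (fun k => ∫⁻ y, g k y) atTop ≤ liminf (fun k => (2 : ℝ≥0∞)⁻¹ ^ k) atTop :=
      liminf_le_liminf (Eventually.of_forall hint)
    refine this.trans ?_
    rw [(ENNReal.tendsto_pow_atTop_nhds_zero_of_lt_one (by norm_num)).liminf_eq]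
  have hae : ∀ᵐ y : ℝ, h y = 0 := (lintegral_eq_zero_iff hmeas).1 hzero
  refine measure_mono_null (fun y hy => ?_) hae
  simp only [mem_setOf_eq] at hy ⊢
  intro h0'
  apply hy
  have : μH[(d : ℝ)] {x | f x = y} = 0 := le_antisymm (h0' ▸ hpoint y) (zero_le)
  exact dimH_le_of_hausdorffMeasure_ne_top (by rw [this]; exact ENNReal.zero_ne_top)


/-- In a metric space of Hausdorff dimension at least `1`, around every point there are
balls of arbitrarily small radius whose boundaries have Hausdorff dimension at most
`dimH X - 1 + ε`; in fact, the set of radii `r ∈ (0,∞)` for which the sphere of radius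
`r` fails this bound has Lebesgue measure zero. -/
theorem stmt4 (X : Type*) [MetricSpace X]
    (h : 1 ≤ dimH (Set.univ : Set X)) (x₀ : X) (ε : ℝ≥0∞) (hε : 0 < ε) :
    (∃ r : ℝ, 0 < r ∧
      dimH (frontier (Metric.ball x₀ r)) ≤ dimH (Set.univ : Set X) - 1 + ε) ∧
    volume {r : ℝ | 0 < r ∧
      ¬ dimH {x : X | dist x x₀ = r} ≤ dimH (Set.univ : Set X) - 1 + ε} = 0 := by
  borelize X
  set D := dimH (Set.univ : Set X) with hD
  by_cases htriv : D - 1 + ε = ⊤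
  · constructor
    · exact ⟨1, one_pos, by rw [htriv]; exact le_top⟩
    · have : {r : ℝ | 0 < r ∧ ¬ dimH {x : X | dist x x₀ = r} ≤ D - 1 + ε} = ∅ := by
        ext r; simp [htriv]
      rw [this, measure_empty]
  · have hDt : D ≠ ⊤ := by
      intro hDtop
      apply htriv
      rw [hDtop, ENNReal.top_sub one_ne_top, top_add]
    have hεt : ε ≠ ⊤ := by
      intro hetop
      apply htriv
      rw [hetop, add_top]
    set ε' := min ε 1 with hε'
    have hε'0 : ε' ≠ 0 := (lt_min hε one_pos).ne'
    have hε't : ε' ≠ ⊤ := ne_top_of_le_ne_top one_ne_top (min_le_right _ _)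
    set A : ℝ≥0 := D.toNNReal with hA
    set e : ℝ≥0 := ε'.toNNReal with he
    have hAD : (A : ℝ≥0∞) = D := ENNReal.coe_toNNReal hDt
    have heε : (e : ℝ≥0∞) = ε' := ENNReal.coe_toNNReal hε't
    have hA1 : 1 ≤ A := by
      rw [← ENNReal.coe_le_coe, ENNReal.coe_one, hAD]; exact h
    have he0 : 0 < e := by
      rw [← ENNReal.coe_pos, heε]; exact pos_iff_ne_zero.2 hε'0
    set d : ℝ≥0 := A + e - 1 with hd
    have hdpos : 0 < d := by
      rw [hd]
      exact tsub_pos_of_lt (lt_of_le_of_lt hA1 (lt_add_of_pos_right _ he0))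
    have hd1 : (d : ℝ≥0∞) ≤ D - 1 + ε := by
      have h1 : (d : ℝ≥0∞) = D + ε' - 1 := by
        rw [hd, ENNReal.coe_sub, ENNReal.coe_add, hAD, heε, ENNReal.coe_one]
      have h2 : D - 1 + ε = D + ε - 1 := ENNReal.sub_add_eq_add_sub h one_ne_top
      rw [h1, h2]
      exact tsub_le_tsub_right (add_le_add_right (min_le_left _ _) _) _
    have hμ : μH[(d : ℝ) + 1] (Set.univ : Set X) = 0 := by
      have hlt : dimH (Set.univ : Set X) < ((d + 1 : ℝ≥0) : ℝ≥0∞) := by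
        rw [ENNReal.coe_add, ENNReal.coe_one, ENNReal.coe_sub, ENNReal.coe_add,
          hAD, heε, ENNReal.coe_one, tsub_add_cancel_of_le]
        · exact ENNReal.lt_add_right hDt hε'0
        · rw [← hAD, ← heε, ← ENNReal.coe_add, ← ENNReal.coe_one, ENNReal.coe_le_coe]
          exact le_trans hA1 (le_add_of_nonneg_right (zero_le))
      have := hausdorffMeasure_of_dimH_lt hlt
      rwa [NNReal.coe_add, NNReal.coe_one] at this
    have hkey := key (fun x => dist x x₀) (LipschitzWith.dist_left x₀) d hdpos hμ
    have hsub : {r : ℝ | 0 < r ∧ ¬ dimH {x : X | dist x x₀ = r} ≤ D - 1 + ε} ⊆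
        {y : ℝ | ¬ dimH {x : X | dist x x₀ = y} ≤ (d : ℝ≥0∞)} := by
      rintro r ⟨_, hr⟩ hle
      exact hr (hle.trans hd1)
    refine ⟨?_, measure_mono_null hsub hkey⟩
    have hnot : ¬ (Set.Ioi (0 : ℝ) ⊆
        {y : ℝ | ¬ dimH {x : X | dist x x₀ = y} ≤ (d : ℝ≥0∞)}) := by
      intro hsub'
      have := measure_mono_null hsub' hkey
      rw [Real.volume_Ioi] at this
      exact ENNReal.top_ne_zero this
    obtain ⟨r, hr, hrS⟩ := Set.not_subset.1 hnot
    refine ⟨r, hr, ?_⟩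
    have hdim : dimH {x : X | dist x x₀ = r} ≤ (d : ℝ≥0∞) := not_not.1 hrS
    refine le_trans (le_trans (dimH_mono ?_) hdim) hd1
    exact Metric.frontier_ball_subset_sphere
end

section
/- There exists a compact set K ⊆ ℝ homeomorphic to the Cantor set and a Lipschitz surjection f : K → [0,1]. Consequently, a one-to-one assumption cannot be dropped: there is a compact metric space K with dim_tH K = 0 and a Lipschitz map f on K with dim_tH f(K) = 1 > dim_tH K. -/
open TopologicalSpace Set ENNReal NNReal MeasureTheory

open Topology


noncomputable def cdig (r : ℝ) (x : ℕ → Bool) : ℝ := ∑' n, (if x n then r ^ (n+1) else 0)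

lemma geom_summable {r : ℝ} (hr0 : 0 ≤ r) (hr1 : r < 1) :
    Summable (fun n : ℕ => r ^ (n+1)) :=
  (_root_.summable_nat_add_iff 1).2 (summable_geometric_of_lt_one hr0 hr1)

lemma cdig_summable {r : ℝ} (hr0 : 0 ≤ r) (hr1 : r < 1) (x : ℕ → Bool) :
    Summable (fun n => (if x n then r ^ (n+1) else 0 : ℝ)) := by
  refine Summable.of_nonneg_of_le (fun n => ?_) (fun n => ?_) (geom_summable hr0 hr1)
  · split <;> positivity
  · split
    · exact le_rfl
    · positivity

lemma cdig_sub_ge {r : ℝ} (hr0 : 0 ≤ r) (hr1 : r < 1) {x y : ℕ → Bool} {n : ℕ}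
    (hlt : ∀ k < n, x k = y k) (hx : x n = true) (hy : y n = false) :
    r ^ (n+1) - r ^ (n+2) * (1 - r)⁻¹ ≤ cdig r x - cdig r y := by
  set c : ℕ → ℝ := fun k => (if x k then r^(k+1) else 0) - (if y k then r^(k+1) else 0) with hc
  have hsx := cdig_summable hr0 hr1 x
  have hsy := cdig_summable hr0 hr1 y
  have hsc : Summable c := hsx.sub hsy
  have hsum : cdig r x - cdig r y = ∑' k, c k := (hsx.tsum_sub hsy).symm
  rw [hsum, ← Summable.sum_add_tsum_nat_add (n+1) hsc]
  have hhead : ∑ k ∈ Finset.range (n+1), c k = r ^ (n+1) := by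
    rw [Finset.sum_eq_single n]
    · simp [hc, hx, hy]
    · intro b hb hbn
      have hb' : b < n := lt_of_le_of_ne (Nat.lt_succ_iff.mp (Finset.mem_range.mp hb)) hbn
      simp [hc, hlt b hb']
    · intro h; exact absurd (Finset.self_mem_range_succ n) h
  have htail : -(r ^ (n+2) * (1 - r)⁻¹) ≤ ∑' k, c (k + (n+1)) := by
    have h1 : ∀ k : ℕ, -(r ^ (k + (n+1) + 1)) ≤ c (k + (n+1)) := by
      intro k
      simp only [hc]
      have h01 : (0:ℝ) ≤ r ^ (k + (n+1) + 1) := by positivity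
      split <;> split <;> simp <;> linarith
    have hs1 : Summable (fun k : ℕ => -(r ^ (k + (n+1) + 1))) :=
      ((_root_.summable_nat_add_iff (n+1)).2 (geom_summable hr0 hr1)).neg
    have h2 := Summable.tsum_le_tsum h1 hs1 ((_root_.summable_nat_add_iff (n+1)).2 hsc)
    refine le_trans (le_of_eq ?_) h2
    rw [tsum_neg, neg_inj]
    have : ∀ k : ℕ, r ^ (k + (n+1) + 1) = r ^ (n+2) * r ^ k := by
      intro k; rw [← pow_add]; ring_nf
    simp_rw [this]
    rw [_root_.tsum_mul_left, tsum_geometric_of_lt_one hr0 hr1]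
  linarith
-- appended to a.lean later
noncomputable def gmap (x : ℕ → Bool) : ℝ := cdig (1/2) x + cdig (1/3) x

lemma half_sub_nonneg {x y : ℕ → Bool} {n : ℕ}
    (hlt : ∀ k < n, x k = y k) (hx : x n = true) (hy : y n = false) :
    0 ≤ cdig (1/2) x - cdig (1/2) y := by
  have h := cdig_sub_ge (by norm_num) (by norm_num : (1/2:ℝ) < 1) hlt hx hy
  have : (1/2:ℝ) ^ (n+1) - (1/2:ℝ) ^ (n+2) * (1 - 1/2)⁻¹ = 0 := by
    rw [pow_succ ((1:ℝ)/2) (n+1)]; ring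
  linarith
lemma third_sub_pos {x y : ℕ → Bool} {n : ℕ}
    (hlt : ∀ k < n, x k = y k) (hx : x n = true) (hy : y n = false) :
    0 < cdig (1/3) x - cdig (1/3) y := by
  have h := cdig_sub_ge (by norm_num) (by norm_num : (1/3:ℝ) < 1) hlt hx hy
  have h2 : (0:ℝ) < (1/3:ℝ) ^ (n+1) - (1/3:ℝ) ^ (n+2) * (1 - 1/3)⁻¹ := by
    rw [pow_succ ((1:ℝ)/3) (n+1)]
    have : (0:ℝ) < (1/3:ℝ)^(n+1) := by positivity
    nlinarith
  linarith

lemma key_aux {x y : ℕ → Bool} {n : ℕ}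
    (hlt : ∀ k < n, x k = y k) (hx : x n = true) (hy : y n = false) :
    0 ≤ cdig (1/2) x - cdig (1/2) y ∧ cdig (1/2) x - cdig (1/2) y ≤ gmap x - gmap y ∧
      0 < gmap x - gmap y := by
  have h2 := half_sub_nonneg hlt hx hy
  have h3 := third_sub_pos hlt hx hy
  unfold gmap
  refine ⟨h2, by linarith, by linarith⟩

lemma least_diff {x y : ℕ → Bool} (h : x ≠ y) :
    ∃ n, (∀ k < n, x k = y k) ∧ x n ≠ y n := by
  have he : ∃ n, x n ≠ y n := by
    by_contra hc
    push_neg at hc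
    exact h (funext hc)
  refine ⟨Nat.find he, fun k hk => ?_, Nat.find_spec he⟩
  have := Nat.find_min he hk
  simpa using this

lemma bool_resolve {a b : Bool} (h : a ≠ b) (ha : a = true) : b = false := by
  cases hb : b
  · rfl
  · exact absurd (by rw [ha, hb]) h
lemma bool_resolve' {a b : Bool} (h : a ≠ b) (ha : a = false) : b = true := by
  cases hb : b
  · exact absurd (by rw [ha, hb]) h
  · rfl

lemma lip_key (x y : ℕ → Bool) : |cdig (1/2) x - cdig (1/2) y| ≤ |gmap x - gmap y| := by
  rcases eq_or_ne x y with rfl | h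
  · simp
  obtain ⟨n, hlt, hne⟩ := least_diff h
  cases hx : x n
  · have hy := bool_resolve' hne hx
    obtain ⟨h1, h2, h3⟩ := key_aux (fun k hk => (hlt k hk).symm) hy hx
    rw [abs_sub_comm (cdig (1/2) x), abs_sub_comm (gmap x)]
    rw [abs_of_nonneg h1, abs_of_pos h3]
    linarith
  · have hy := bool_resolve hne hx
    obtain ⟨h1, h2, h3⟩ := key_aux hlt hx hy
    rw [abs_of_nonneg h1, abs_of_pos h3]
    linarith

lemma gmap_injective : Function.Injective gmap := by
  intro x y hxy
  by_contra h
  obtain ⟨n, hlt, hne⟩ := least_diff h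
  cases hx : x n
  · have hy := bool_resolve' hne hx
    have := (key_aux (fun k hk => (hlt k hk).symm) hy hx).2.2
    rw [hxy] at this; simp at this
  · have hy := bool_resolve hne hx
    have := (key_aux hlt hx hy).2.2
    rw [hxy] at this; simp at this

lemma cdig_continuous {r : ℝ} (hr0 : 0 ≤ r) (hr1 : r < 1) : Continuous (cdig r) := by
  apply continuous_tsum (u := fun n => r ^ (n+1))
  · intro i
    exact Continuous.comp (continuous_of_discreteTopology
      (f := fun b : Bool => if b then r ^ (i+1) else (0:ℝ))) (continuous_apply i)
  · exact geom_summable hr0 hr1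
  · intro n x
    rw [Real.norm_eq_abs]
    cases xn : x n
    · simp [xn]; positivity
    · simp [xn, abs_of_nonneg (by positivity : (0:ℝ) ≤ r^(n+1))]

lemma gmap_continuous : Continuous gmap :=
  (cdig_continuous (by norm_num) (by norm_num)).add
    (cdig_continuous (by norm_num) (by norm_num))
lemma tsum_half_pow : ∑' n : ℕ, ((1:ℝ)/2) ^ (n+1) = 1 := by
  have h : ∀ n : ℕ, ((1:ℝ)/2) ^ (n+1) = (1/2) * (1/2)^n := fun n => by ring
  simp_rw [h]
  rw [_root_.tsum_mul_left, tsum_geometric_of_lt_one (by norm_num) (by norm_num)]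
  norm_num

lemma cdig_half_mem_Icc (x : ℕ → Bool) : cdig (1/2) x ∈ Icc (0:ℝ) 1 := by
  constructor
  · exact tsum_nonneg fun n => by split <;> positivity
  · refine le_trans (Summable.tsum_le_tsum (fun n => ?_) (cdig_summable (by norm_num) (by norm_num) x)
      (geom_summable (by norm_num) (by norm_num))) (le_of_eq tsum_half_pow)
    split
    · exact le_rfl
    · positivity

noncomputable def gr (t : ℝ) : ℕ → ℝ
  | 0 => 0
  | (n+1) => gr t n + (if gr t n + (1/2)^(n+1) ≤ t then (1/2)^(n+1) else 0)

noncomputable def gb (t : ℝ) (n : ℕ) : Bool := decide (gr t n + (1/2)^(n+1) ≤ t)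

lemma gr_sum (t : ℝ) (n : ℕ) :
    ∑ k ∈ Finset.range n, (if gb t k then ((1:ℝ)/2)^(k+1) else 0) = gr t n := by
  induction n with
  | zero => simp [gr]
  | succ n ih =>
    rw [Finset.sum_range_succ, ih]
    simp only [gb, gr, decide_eq_true_eq]

lemma gr_invariant {t : ℝ} (ht : t ∈ Icc (0:ℝ) 1) (n : ℕ) :
    gr t n ≤ t ∧ t ≤ gr t n + (1/2)^n := by
  induction n with
  | zero => simpa [gr] using ht
  | succ n ih =>
    obtain ⟨ih1, ih2⟩ := ih
    by_cases h : gr t n + (1/2)^(n+1) ≤ t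
    · have hgr : gr t (n+1) = gr t n + (1/2)^(n+1) := by rw [gr, if_pos h]
      have hp : ((1:ℝ)/2)^n = 2 * (1/2)^(n+1) := by rw [pow_succ]; ring
      constructor
      · rw [hgr]; exact h
      · rw [hgr]; rw [hp] at ih2; linarith
    · have hgr : gr t (n+1) = gr t n := by rw [gr, if_neg h, add_zero]
      push_neg at h
      constructor
      · rw [hgr]; exact ih1
      · rw [hgr]; linarith
lemma cdig_half_surj {t : ℝ} (ht : t ∈ Icc (0:ℝ) 1) : ∃ x, cdig (1/2) x = t := by
  refine ⟨gb t, ?_⟩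
  have hs := cdig_summable (r := 1/2) (by norm_num) (by norm_num) (gb t)
  have h1 : Filter.Tendsto (fun n => gr t n) Filter.atTop (𝓝 (cdig (1/2) (gb t))) := by
    have := hs.hasSum.tendsto_sum_nat
    simpa only [gr_sum t, cdig] using this
  have h2 : Filter.Tendsto (fun n => gr t n) Filter.atTop (𝓝 t) := by
    have h0 : Filter.Tendsto (fun n => gr t n - t) Filter.atTop (𝓝 0) := by
      apply squeeze_zero_norm (a := fun n => ((1:ℝ)/2)^n)
      · intro n
        obtain ⟨hA, hB⟩ := gr_invariant ht n
        rw [Real.norm_eq_abs, abs_le]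
        constructor <;> linarith
      · exact tendsto_pow_atTop_nhds_zero_of_lt_one (by norm_num) (by norm_num)
    have := h0.add_const t
    simpa using this
  exact tendsto_nhds_unique h1 h2
lemma Ioo_basis : IsTopologicalBasis {s : Set ℝ | ∃ a b : ℝ, s = Ioo a b} := by
  refine isTopologicalBasis_of_isOpen_of_nhds ?_ ?_
  · rintro s ⟨a, b, rfl⟩; exact isOpen_Ioo
  · intro a u hau hu
    obtain ⟨ε, hε, hb⟩ := Metric.isOpen_iff.mp hu a hau
    refine ⟨Ioo (a-ε) (a+ε), ⟨_, _, rfl⟩, ⟨by linarith, by linarith⟩, ?_⟩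
    rw [← Real.ball_eq_Ioo]; exact hb

lemma dimTH_Icc01 : dimTH (Icc (0:ℝ) 1) = 1 := by
  apply le_antisymm
  · unfold dimTH
    refine iInf₂_le 1 ⟨Set.preimage (Subtype.val : Icc (0:ℝ) 1 → ℝ) ''
      {s | ∃ a b : ℝ, s = Ioo a b}, Ioo_basis.isInducing IsInducing.subtypeVal, ?_⟩
    rintro U ⟨s, ⟨a, b, rfl⟩, rfl⟩
    right
    have h1 : frontier (Subtype.val ⁻¹' Ioo a b : Set (Icc (0:ℝ) 1)) ⊆
        Subtype.val ⁻¹' frontier (Ioo a b) :=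
      continuous_subtype_val.frontier_preimage_subset _
    have h2 : frontier (Ioo a b) ⊆ ({a, b} : Set ℝ) := by
      rcases lt_or_ge a b with h | h
      · rw [frontier_Ioo h]
      · rw [Ioo_eq_empty h.not_gt, frontier_empty]; exact empty_subset _
    have hc : (frontier (Subtype.val ⁻¹' Ioo a b : Set (Icc (0:ℝ) 1))).Countable := by
      refine Set.Countable.mono (h1.trans (preimage_mono h2)) ?_
      exact (((finite_singleton b).insert a).countable).preimage Subtype.val_injective
    rw [hc.dimH_zero, zero_add]
  · refine le_iInf fun d => le_iInf fun hP => ?_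
    obtain ⟨B, hB, hfr⟩ := hP
    haveI : ConnectedSpace (Icc (0:ℝ) 1) :=
      Subtype.connectedSpace ⟨⟨0, by constructor <;> norm_num⟩, isPreconnected_Icc⟩
    set p0 : Icc (0:ℝ) 1 := ⟨0, by constructor <;> norm_num⟩ with hp0def
    set p1 : Icc (0:ℝ) 1 := ⟨1, by constructor <;> norm_num⟩ with hp1def
    have hne : p0 ≠ p1 := by
      simp only [hp0def, hp1def, Ne, Subtype.ext_iff]
      norm_num
    obtain ⟨U, hUB, hp0U, hsub⟩ := hB.exists_subset_of_mem_open
      (show p0 ∈ ({p1}ᶜ : Set _) from hne) isOpen_compl_singleton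
    rcases hfr U hUB with hfe | hd
    · exfalso
      have hcl : IsClopen U := isClopen_iff_frontier_eq_empty.mpr hfe
      rcases isClopen_iff.mp hcl with h | h
      · rw [h] at hp0U; exact hp0U
      · rw [h] at hsub; exact (hsub (mem_univ p1)) rfl
    · exact le_trans le_add_self hd

/-- There is a compact set `K ⊆ ℝ` homeomorphic to the Cantor set and a Lipschitz
surjection of `K` onto `[0,1]`; consequently `dimTH K = 0` while the image has
topological Hausdorff dimension `1`. -/
theorem stmt6 :
    ∃ K : Set ℝ, IsCompact K ∧ Nonempty (K ≃ₜ (ℕ → Bool)) ∧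
      ∃ (f : K → ℝ) (C : ℝ≥0), LipschitzWith C f ∧ Set.range f = Set.Icc (0 : ℝ) 1 ∧
        dimTH K = 0 ∧ dimTH (Set.range f) = 1 := by
  have gcont := gmap_continuous
  have hK : IsCompact (Set.range gmap) := isCompact_range gcont
  have hemb : IsEmbedding gmap := (gcont.isClosedEmbedding gmap_injective).isEmbedding
  let e : (ℕ → Bool) ≃ₜ (Set.range gmap) := hemb.toHomeomorph
  have hval : ∀ x : ℕ → Bool, ((e x : Set.range gmap) : ℝ) = gmap x := fun x => rfl
  have hrange : Set.range (fun k : Set.range gmap => cdig (1/2) (e.symm k)) = Icc (0:ℝ) 1 := by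
    ext t
    constructor
    · rintro ⟨k, rfl⟩; exact cdig_half_mem_Icc _
    · intro ht
      obtain ⟨x, hx⟩ := cdig_half_surj ht
      exact ⟨e x, by simp only []; rw [e.symm_apply_apply]; exact hx⟩
  refine ⟨Set.range gmap, hK, ⟨e.symm⟩, fun k => cdig (1/2) (e.symm k), 1, ?_, hrange, ?_, ?_⟩
  · apply LipschitzWith.of_dist_le_mul
    intro a b
    rw [NNReal.coe_one, one_mul, Subtype.dist_eq, Real.dist_eq, Real.dist_eq]
    have ha : (a : ℝ) = gmap (e.symm a) := by rw [← hval (e.symm a), e.apply_symm_apply]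
    have hb : (b : ℝ) = gmap (e.symm b) := by rw [← hval (e.symm b), e.apply_symm_apply]
    rw [ha, hb]
    exact lip_key _ _
  · refine le_antisymm ?_ (zero_le (α := ℝ≥0∞))
    haveI : CompactSpace (Set.range gmap) := isCompact_iff_compactSpace.mp hK
    haveI : TotallyDisconnectedSpace (Set.range gmap) :=
      totallyDisconnectedSpace_subtype_iff.mpr (hemb.isTotallyDisconnected_range.mpr inferInstance)
    unfold dimTH
    exact iInf₂_le 0 ⟨{s | IsClopen s}, isTopologicalBasis_isClopen,
      fun U hU => Or.inl hU.frontier_eq⟩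
  · rw [hrange]
    exact dimTH_Icc01
end

section
/- Let X be a nonempty separable metric space. Then dim_tH X equals the infimum of all d such that there exists a subset A ⊆ X with dim_H A ≤ d−1 and such that X \ A has a topological basis consisting of sets with empty boundary (i.e. X \ A has topological dimension ≤ 0). Moreover this infimum is attained. -/
open TopologicalSpace Set ENNReal NNReal MeasureTheory

section Sep

variable {X : Type*} [MetricSpace X]

/-- Auxiliary separating open set. -/
noncomputable def sepL (A B : Set X) : Set X :=
  {z | 2 * EMetric.infEdist z A < EMetric.infEdist z B}

lemma isOpen_sepL (A B : Set X) : IsOpen (sepL A B) := by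
  apply isOpen_lt
  · exact (ENNReal.continuous_const_mul (by norm_num)).comp EMetric.continuous_infEdist
  · exact EMetric.continuous_infEdist

lemma sepL_disjoint (A B : Set X) : sepL A B ∩ sepL B A = ∅ := by
  ext z
  simp only [sepL, mem_inter_iff, mem_setOf_eq, mem_empty_iff_false, iff_false, not_and]
  intro h1 h2
  have hb : EMetric.infEdist z B ≤ 2 * EMetric.infEdist z B :=
    le_mul_of_one_le_left zero_le one_le_two
  have ha : EMetric.infEdist z A ≤ 2 * EMetric.infEdist z A :=
    le_mul_of_one_le_left zero_le one_le_two
  exact absurd ((hb.trans_lt h2).trans_le (ha.trans h1.le)) (lt_irrefl _)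

lemma mem_sepL {A B : Set X} {z : X} (hA : z ∈ A) (hB : z ∉ closure B) : z ∈ sepL A B := by
  have h1 : EMetric.infEdist z A = 0 := EMetric.infEdist_zero_of_mem hA
  have h2 : EMetric.infEdist z B ≠ 0 := fun hc =>
    hB (EMetric.mem_closure_iff_infEdist_zero.2 hc)
  simp only [sepL, mem_setOf_eq, h1, mul_zero]
  exact pos_iff_ne_zero.2 h2

lemma closure_sepL_subset (A B : Set X) :
    closure (sepL A B) ⊆ {z | 2 * EMetric.infEdist z A ≤ EMetric.infEdist z B} := by
  have hcl : IsClosed {z : X | 2 * EMetric.infEdist z A ≤ EMetric.infEdist z B} :=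
    isClosed_le ((ENNReal.continuous_const_mul (by norm_num)).comp
      EMetric.continuous_infEdist) EMetric.continuous_infEdist
  refine closure_minimal (fun z hz => ?_) hcl
  exact le_of_lt (show 2 * EMetric.infEdist z A < EMetric.infEdist z B from hz)

lemma closure_sepL_inter {A B : Set X} (hA : A.Nonempty) :
    closure (sepL A B) ∩ closure (sepL B A) ⊆ closure A ∩ closure B := by
  rintro z ⟨h1, h2⟩
  have h1' := closure_sepL_subset A B h1
  have h2' := closure_sepL_subset B A h2
  simp only [mem_setOf_eq] at h1' h2'
  set a := EMetric.infEdist z A with ha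
  set b := EMetric.infEdist z B with hb
  have hafin : a ≠ ⊤ := by
    obtain ⟨w, hw⟩ := hA
    exact ne_top_of_le_ne_top (edist_ne_top z w) (EMetric.infEdist_le_edist_of_mem hw)
  have hab : a ≤ b := le_trans (le_mul_of_one_le_left zero_le one_le_two) h1'
  have hba : b ≤ a := le_trans (le_mul_of_one_le_left zero_le one_le_two) h2'
  have h2a : 2 * a ≤ a := h1'.trans hba
  have ha0 : a = 0 := by
    have : a + a = a + 0 := by
      rw [add_zero, ← two_mul]
      exact le_antisymm h2a (le_mul_of_one_le_left zero_le one_le_two)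
    exact (ENNReal.add_right_inj hafin).1 this
  have hb0 : b = 0 := le_antisymm (hba.trans_eq ha0) zero_le
  constructor
  · rw [EMetric.mem_closure_iff_infEdist_zero]; exact ha0
  · rw [EMetric.mem_closure_iff_infEdist_zero]; exact hb0

lemma open_inter_closure_empty {U V : Set X} (hU : IsOpen U) (h : U ∩ V = ∅) :
    U ∩ closure V = ∅ := by
  ext z
  simp only [mem_inter_iff, mem_empty_iff_false, iff_false, not_and]
  intro hzU hzV
  rcases mem_closure_iff.1 hzV U hU hzU with ⟨w, hw1, hw2⟩
  exact absurd (Set.mem_inter hw1 hw2) (by simp [h])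

/-- The main two-sided separation construction. -/
lemma sep_combine {Sa Sb : Set X} (hane : Sa.Nonempty)
    (hab : Sa ∩ closure Sb = ∅) (hba : closure Sa ∩ Sb = ∅) :
    ∃ G H : Set X, IsOpen G ∧ IsOpen H ∧ Sa ⊆ G ∧ Sb ⊆ H ∧ G ∩ H = ∅ ∧
      closure G ∩ closure H ⊆ closure Sa ∩ closure Sb := by
  refine ⟨sepL Sa Sb, sepL Sb Sa, isOpen_sepL _ _, isOpen_sepL _ _, ?_, ?_,
    sepL_disjoint _ _, closure_sepL_inter hane⟩
  · intro z hz
    refine mem_sepL hz fun hc => ?_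
    exact absurd (Set.mem_inter hz hc) (by simp [hab])
  · intro z hz
    refine mem_sepL hz fun hc => ?_
    exact absurd (Set.mem_inter hc hz) (by simp [hba])

end Sep

section ZDT

variable {X : Type*} [MetricSpace X]

/-- "Zero-dimensional trace": every point of `Y` has arbitrarily small ambient-open
neighbourhoods whose frontier misses `Y`. -/
def ZDT (Y : Set X) : Prop :=
  ∀ y ∈ Y, ∀ V : Set X, IsOpen V → y ∈ V →
    ∃ U : Set X, IsOpen U ∧ y ∈ U ∧ U ⊆ V ∧ frontier U ∩ Y = ∅

lemma ZDT.mono {Y S : Set X} (h : ZDT Y) (hS : S ⊆ Y) : ZDT S := by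
  intro y hy V hV hyV
  obtain ⟨U, h1, h2, h3, h4⟩ := h y (hS hy) V hV hyV
  refine ⟨U, h1, h2, h3, ?_⟩
  have hsub : frontier U ∩ S ⊆ frontier U ∩ Y := inter_subset_inter_right _ hS
  rw [h4] at hsub
  exact eq_empty_of_subset_empty hsub

/-- Clopen separation inside a zero-dimensional trace set. -/
lemma clopen_separation [SeparableSpace X] {F C₀ D₀ : Set X} (hF : ZDT F)
    (hC : IsClosed C₀) (hD : IsClosed D₀) (hdisj : F ∩ C₀ ∩ D₀ = ∅) :
    ∃ G : Set X, IsOpen G ∧ F ∩ C₀ ⊆ F ∩ G ∧ F ∩ G ∩ D₀ = ∅ ∧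
      closure (F ∩ G) ∩ F ⊆ F ∩ G := by
  haveI : SecondCountableTopology X := UniformSpace.secondCountable_of_separable X
  rcases eq_empty_or_nonempty F with hFe | hFne
  · exact ⟨∅, isOpen_empty, by simp [hFe], by simp, by simp⟩
  have hch : ∀ z : F, ∃ U : Set X, IsOpen U ∧ (z : X) ∈ U ∧ frontier U ∩ F = ∅ ∧
      (U ∩ F ∩ C₀ = ∅ ∨ U ∩ F ∩ D₀ = ∅) := by
    rintro ⟨z, hz⟩
    by_cases hzD : z ∈ D₀
    · have hzC : z ∉ C₀ := fun hc => by
        have : z ∈ F ∩ C₀ ∩ D₀ := ⟨⟨hz, hc⟩, hzD⟩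
        simp [hdisj] at this
      obtain ⟨U, h1, h2, h3, h4⟩ := hF z hz C₀ᶜ hC.isOpen_compl hzC
      refine ⟨U, h1, h2, h4, Or.inl ?_⟩
      rw [eq_empty_iff_forall_notMem]
      rintro w ⟨⟨hw, -⟩, hwc⟩
      exact (h3 hw) hwc
    · obtain ⟨U, h1, h2, h3, h4⟩ := hF z hz D₀ᶜ hD.isOpen_compl hzD
      refine ⟨U, h1, h2, h4, Or.inr ?_⟩
      rw [eq_empty_iff_forall_notMem]
      rintro w ⟨⟨hw, -⟩, hwc⟩
      exact (h3 hw) hwc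
  choose Uz hUo hUm hUf hUd using hch
  obtain ⟨T, hTc, hTeq⟩ := TopologicalSpace.isOpen_iUnion_countable Uz hUo
  have hcov : F ⊆ ⋃ i, Uz i := fun z hz =>
    mem_iUnion.2 ⟨⟨z, hz⟩, hUm ⟨z, hz⟩⟩
  have hTne : T.Nonempty := by
    obtain ⟨z, hz⟩ := hFne
    have : z ∈ ⋃ i ∈ T, Uz i := hTeq.symm ▸ hcov hz
    rcases mem_iUnion₂.1 this with ⟨i, hi, _⟩
    exact ⟨i, hi⟩
  obtain ⟨f, hf⟩ := hTc.exists_eq_range hTne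
  set u : ℕ → Set X := fun n => Uz (f n) with hu
  have hucov : F ⊆ ⋃ n, u n := by
    intro z hz
    have : z ∈ ⋃ i ∈ T, Uz i := hTeq.symm ▸ hcov hz
    rcases mem_iUnion₂.1 this with ⟨i, hi, hzi⟩
    rw [hf] at hi
    rcases hi with ⟨n, rfl⟩
    exact mem_iUnion.2 ⟨n, hzi⟩
  have huo : ∀ n, IsOpen (u n) := fun n => hUo _
  have huf : ∀ n, frontier (u n) ∩ F = ∅ := fun n => hUf _
  have hud : ∀ n, u n ∩ F ∩ C₀ = ∅ ∨ u n ∩ F ∩ D₀ = ∅ := fun n => hUd _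
  -- disjointified pieces
  set g : ℕ → Set X := fun n => u n \ ⋃ (j : ℕ) (_ : j < n), closure (u j) with hg
  have hgo : ∀ n, IsOpen (g n) := by
    intro n
    apply (huo n).sdiff
    exact (Set.finite_Iio n).isClosed_biUnion fun j _ => isClosed_closure
  have hgu : ∀ n, g n ⊆ u n := fun n => diff_subset
  -- least-index membership
  have hleast : ∀ z ∈ F, ∃ n, z ∈ g n ∧ z ∈ u n := by
    intro z hz
    have hex : ∃ n, z ∈ u n := mem_iUnion.1 (hucov hz)
    classical
    let n := Nat.find hex
    refine ⟨n, ⟨Nat.find_spec hex, ?_⟩, Nat.find_spec hex⟩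
    intro hc
    rcases mem_iUnion₂.1 hc with ⟨j, hj, hzj⟩
    have hzuj : z ∉ u j := Nat.find_min hex hj
    have : z ∈ frontier (u j) ∩ F := by
      refine ⟨?_, hz⟩
      rw [(huo j).frontier_eq]
      exact ⟨hzj, hzuj⟩
    simp [huf j] at this
  -- pairwise disjointness of the pieces
  have hgdisj : ∀ {i j : ℕ}, i ≠ j → g i ∩ g j = ∅ := by
    have key : ∀ {i j : ℕ}, i < j → g i ∩ g j = ∅ := by
      intro i j hij
      rw [eq_empty_iff_forall_notMem]
      rintro z ⟨hzi, hzj⟩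
      exact hzj.2 (mem_iUnion₂.2 ⟨i, hij, subset_closure (hgu i hzi)⟩)
    intro i j hij
    rcases lt_or_gt_of_ne hij with h | h
    · exact key h
    · rw [inter_comm]; exact key h
  classical
  set S : Set ℕ := {n | u n ∩ F ∩ D₀ = ∅} with hS
  refine ⟨⋃ n ∈ S, g n, isOpen_biUnion fun n _ => hgo n, ?_, ?_, ?_⟩
  · rintro z ⟨hzF, hzC⟩
    obtain ⟨n, hzg, hzu⟩ := hleast z hzF
    have hnS : n ∈ S := by
      rcases hud n with h | h
      · exfalso
        have : z ∈ u n ∩ F ∩ C₀ := ⟨⟨hzu, hzF⟩, hzC⟩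
        simp [h] at this
      · exact h
    exact ⟨hzF, mem_iUnion₂.2 ⟨n, hnS, hzg⟩⟩
  · rw [eq_empty_iff_forall_notMem]
    rintro z ⟨⟨hzF, hzG⟩, hzD⟩
    rcases mem_iUnion₂.1 hzG with ⟨n, hnS, hzg⟩
    have : z ∈ u n ∩ F ∩ D₀ := ⟨⟨hgu n hzg, hzF⟩, hzD⟩
    simp only [hS, mem_setOf_eq] at hnS
    simp [hnS] at this
  · rintro z ⟨hzc, hzF⟩
    obtain ⟨n₀, hzg, hzu⟩ := hleast z hzF
    refine ⟨hzF, ?_⟩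
    by_cases hn₀ : n₀ ∈ S
    · exact mem_iUnion₂.2 ⟨n₀, hn₀, hzg⟩
    · exfalso
      have hdise : g n₀ ∩ (F ∩ ⋃ n ∈ S, g n) = ∅ := by
        rw [eq_empty_iff_forall_notMem]
        rintro w ⟨hwg, -, hwG⟩
        rcases mem_iUnion₂.1 hwG with ⟨m, hmS, hwm⟩
        have hmn : m ≠ n₀ := fun hc => hn₀ (hc ▸ hmS)
        have : w ∈ g n₀ ∩ g m := ⟨hwg, hwm⟩
        rw [hgdisj fun hc => hmn hc.symm] at this
        exact this
      have := open_inter_closure_empty (hgo n₀) hdise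
      have hzin : z ∈ g n₀ ∩ closure (F ∩ ⋃ n ∈ S, g n) := ⟨hzg, hzc⟩
      rw [this] at hzin
      exact hzin

end ZDT

section L1

variable {X : Type*} [MetricSpace X]

/-- Countable closed sum theorem for zero-dimensional traces. -/
lemma zdt_iUnion_closed [SeparableSpace X] {Y : Set X} (F : ℕ → Set X)
    (hY : Y = ⋃ n, F n) (hcl : ∀ n, closure (F n) ∩ Y ⊆ F n) (hzd : ∀ n, ZDT (F n)) :
    ZDT Y := by
  intro y hy V hV hyV
  obtain ⟨c, hc, hball⟩ := Metric.isOpen_iff.1 hV y hyV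
  have hFY : ∀ n, F n ⊆ Y := fun n => hY ▸ subset_iUnion F n
  -- the invariant for the recursive construction
  set Inv : Set X × Set X → Prop := fun p =>
    IsOpen p.1 ∧ IsOpen p.2 ∧ y ∈ p.1 ∧ Vᶜ ⊆ p.2 ∧ p.1 ∩ p.2 = ∅ ∧
      closure p.1 ∩ closure p.2 ∩ Y = ∅ with hInv
  -- base case
  have hbase : Inv (Metric.ball y (c / 4), {z | c / 2 < dist z y}) := by
    have hopen2 : IsOpen {z : X | c / 2 < dist z y} :=
      isOpen_lt continuous_const (continuous_id.dist continuous_const)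
    refine ⟨Metric.isOpen_ball, hopen2, Metric.mem_ball_self (by linarith), ?_, ?_, ?_⟩
    · intro z hz
      simp only [mem_setOf_eq]
      by_contra hlt
      push_neg at hlt
      exact hz (hball (by simp only [Metric.mem_ball]; linarith))
    · rw [eq_empty_iff_forall_notMem]
      rintro z ⟨hz1, hz2⟩
      rw [Metric.mem_ball] at hz1
      simp only [mem_setOf_eq] at hz2
      linarith
    · rw [eq_empty_iff_forall_notMem]
      rintro z ⟨⟨hz1, hz2⟩, -⟩
      have h1 : dist z y ≤ c / 4 :=
        Metric.closure_ball_subset_closedBall hz1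
      have h2 : c / 2 ≤ dist z y := by
        have hcl2 : closure {z : X | c / 2 < dist z y} ⊆ {z : X | c / 2 ≤ dist z y} := by
          refine closure_minimal (fun w hw => le_of_lt (show c / 2 < dist w y from hw)) ?_
          exact isClosed_le continuous_const (continuous_id.dist continuous_const)
        exact hcl2 hz2
      linarith
  -- the inductive step
  have hstep : ∀ (n : ℕ) (p : Set X × Set X), Inv p →
      ∃ q : Set X × Set X, Inv q ∧ p.1 ⊆ q.1 ∧ p.2 ⊆ q.2 ∧ F n ⊆ q.1 ∪ q.2 := by
    rintro n ⟨G, H⟩ ⟨hGo, hHo, hyG, hVH, hGH, hclGH⟩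
    have hdisj : F n ∩ closure G ∩ closure H = ∅ := by
      rw [eq_empty_iff_forall_notMem]
      rintro z ⟨⟨hz1, hz2⟩, hz3⟩
      have : z ∈ closure G ∩ closure H ∩ Y := ⟨⟨hz2, hz3⟩, hFY n hz1⟩
      rw [hclGH] at this; exact this
    obtain ⟨GP, hGPo, hGPC, hGPD, hGPcl⟩ :=
      clopen_separation (hzd n) isClosed_closure isClosed_closure hdisj
    set P : Set X := F n ∩ GP with hP
    set Q : Set X := F n ∩ GPᶜ with hQ
    have hPQ : P ∪ Q = F n := by
      rw [hP, hQ, ← inter_union_distrib_left, union_compl_self, inter_univ]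
    have hPQd : P ∩ Q = ∅ := by
      rw [eq_empty_iff_forall_notMem]
      rintro z ⟨⟨-, h1⟩, ⟨-, h2⟩⟩
      exact h2 h1
    -- closedness of P and Q in Y
    have hPcl : closure P ∩ Y ⊆ P := by
      rintro z ⟨hz1, hz2⟩
      have hzF : z ∈ F n := hcl n ⟨closure_mono inter_subset_left hz1, hz2⟩
      exact hGPcl ⟨hz1, hzF⟩
    have hQcl : closure Q ∩ Y ⊆ Q := by
      rintro z ⟨hz1, hz2⟩
      have hzF : z ∈ F n := hcl n ⟨closure_mono inter_subset_left hz1, hz2⟩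
      refine ⟨hzF, ?_⟩
      have : closure Q ⊆ GPᶜ :=
        closure_minimal inter_subset_right (isClosed_compl_iff.2 hGPo)
      exact this hz1
    -- the eight disjointness facts
    have hGclH : G ∩ closure H = ∅ := open_inter_closure_empty hGo hGH
    have hHclG : H ∩ closure G = ∅ :=
      open_inter_closure_empty hHo (by rw [inter_comm]; exact hGH)
    have hQclG : Q ∩ closure G = ∅ := by
      rw [eq_empty_iff_forall_notMem]
      rintro z ⟨hzQ, hzG⟩
      have hzP : z ∈ P := hGPC ⟨hzQ.1, hzG⟩
      have : z ∈ P ∩ Q := ⟨hzP, hzQ⟩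
      rw [hPQd] at this; exact this
    have hPclH : P ∩ closure H = ∅ := by
      rw [eq_empty_iff_forall_notMem]
      rintro z ⟨hzP, hzH⟩
      have : z ∈ F n ∩ GP ∩ closure H := ⟨hzP, hzH⟩
      rw [hGPD] at this; exact this
    have hGQ : G ∩ closure Q = ∅ := by
      apply open_inter_closure_empty hGo
      rw [eq_empty_iff_forall_notMem]
      rintro z ⟨hzG, hzQ⟩
      have : z ∈ Q ∩ closure G := ⟨hzQ, subset_closure hzG⟩
      rw [hQclG] at this; exact this
    have hHP : H ∩ closure P = ∅ := by
      apply open_inter_closure_empty hHo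
      rw [eq_empty_iff_forall_notMem]
      rintro z ⟨hzH, hzP⟩
      have : z ∈ P ∩ closure H := ⟨hzP, subset_closure hzH⟩
      rw [hPclH] at this; exact this
    have hPclQ : P ∩ closure Q = ∅ := by
      rw [eq_empty_iff_forall_notMem]
      rintro z ⟨hzP, hzQ⟩
      have hzY : z ∈ Y := hFY n hzP.1
      have : z ∈ P ∩ Q := ⟨hzP, hQcl ⟨hzQ, hzY⟩⟩
      rw [hPQd] at this; exact this
    have hQclP : Q ∩ closure P = ∅ := by
      rw [eq_empty_iff_forall_notMem]
      rintro z ⟨hzQ, hzP⟩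
      have hzY : z ∈ Y := hFY n hzQ.1
      have : z ∈ P ∩ Q := ⟨hPcl ⟨hzP, hzY⟩, hzQ⟩
      rw [hPQd] at this; exact this
    -- apply the separation construction
    have hane : (G ∪ P).Nonempty := ⟨y, Or.inl hyG⟩
    have hab : (G ∪ P) ∩ closure (H ∪ Q) = ∅ := by
      rw [closure_union, eq_empty_iff_forall_notMem]
      rintro z ⟨hz1, hz2⟩
      rcases hz1 with hzG | hzP <;> rcases hz2 with hzH | hzQ
      · have hx : z ∈ G ∩ closure H := ⟨hzG, hzH⟩
        rw [hGclH] at hx; exact hx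
      · have hx : z ∈ G ∩ closure Q := ⟨hzG, hzQ⟩
        rw [hGQ] at hx; exact hx
      · have hx : z ∈ P ∩ closure H := ⟨hzP, hzH⟩
        rw [hPclH] at hx; exact hx
      · have hx : z ∈ P ∩ closure Q := ⟨hzP, hzQ⟩
        rw [hPclQ] at hx; exact hx
    have hba : closure (G ∪ P) ∩ (H ∪ Q) = ∅ := by
      rw [closure_union, eq_empty_iff_forall_notMem]
      rintro z ⟨hz1, hz2⟩
      rcases hz1 with hzG | hzP <;> rcases hz2 with hzH | hzQ
      · have hx : z ∈ H ∩ closure G := ⟨hzH, hzG⟩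
        rw [hHclG] at hx; exact hx
      · have hx : z ∈ Q ∩ closure G := ⟨hzQ, hzG⟩
        rw [hQclG] at hx; exact hx
      · have hx : z ∈ H ∩ closure P := ⟨hzH, hzP⟩
        rw [hHP] at hx; exact hx
      · have hx : z ∈ Q ∩ closure P := ⟨hzQ, hzP⟩
        rw [hQclP] at hx; exact hx
    obtain ⟨G', H', hG'o, hH'o, hsubG, hsubH, hG'H', hclsub⟩ := sep_combine hane hab hba
    refine ⟨(G', H'), ⟨hG'o, hH'o, hsubG (Or.inl hyG), fun z hz => hsubH (Or.inl (hVH hz)),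
      hG'H', ?_⟩, fun z hz => hsubG (Or.inl hz), fun z hz => hsubH (Or.inl hz), ?_⟩
    · rw [eq_empty_iff_forall_notMem]
      rintro z ⟨⟨hz1, hz2⟩, hzY⟩
      have := hclsub ⟨hz1, hz2⟩
      rw [closure_union, closure_union] at this
      rcases this.1 with hzG | hzP <;> rcases this.2 with hzH | hzQ
      · have : z ∈ closure G ∩ closure H ∩ Y := ⟨⟨hzG, hzH⟩, hzY⟩
        rw [hclGH] at this; exact this
      · have hQ' : z ∈ Q := hQcl ⟨hzQ, hzY⟩
        have : z ∈ Q ∩ closure G := ⟨hQ', hzG⟩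
        rw [hQclG] at this; exact this
      · have hP' : z ∈ P := hPcl ⟨hzP, hzY⟩
        have : z ∈ P ∩ closure H := ⟨hP', hzH⟩
        rw [hPclH] at this; exact this
      · have hP' : z ∈ P := hPcl ⟨hzP, hzY⟩
        have : z ∈ P ∩ closure Q := ⟨hP', hzQ⟩
        rw [hPclQ] at this; exact this
    · intro z hz
      rw [← hPQ] at hz
      rcases hz with hzP | hzQ
      · exact Or.inl (hsubG (Or.inr hzP))
      · exact Or.inr (hsubH (Or.inr hzQ))
  -- build the sequence
  choose! step hstep1 hstep2 hstep3 hstep4 using hstep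
  let seq : ℕ → {p : Set X × Set X // Inv p} := fun n =>
    Nat.rec ⟨(Metric.ball y (c / 4), {z | c / 2 < dist z y}), hbase⟩
      (fun n ih => ⟨step n ih.1, hstep1 n ih.1 ih.2⟩) n
  have hseq_succ : ∀ n, (seq (n + 1)).1 = step n (seq n).1 := fun n => rfl
  set Gs : ℕ → Set X := fun n => (seq n).1.1 with hGs
  set Hs : ℕ → Set X := fun n => (seq n).1.2 with hHs
  have hInvn : ∀ n, Inv ((seq n).1) := fun n => (seq n).2
  have hmonoG : ∀ n, Gs n ⊆ Gs (n + 1) := fun n => hstep2 n (seq n).1 (seq n).2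
  have hmonoH : ∀ n, Hs n ⊆ Hs (n + 1) := fun n => hstep3 n (seq n).1 (seq n).2
  have hcover : ∀ n, F n ⊆ Gs (n + 1) ∪ Hs (n + 1) := fun n => hstep4 n (seq n).1 (seq n).2
  have hmonoG' : ∀ {n m}, n ≤ m → Gs n ⊆ Gs m := by
    intro n m h
    induction h with
    | refl => exact subset_rfl
    | step h ih => exact fun z hz => hmonoG _ (ih hz)
  have hmonoH' : ∀ {n m}, n ≤ m → Hs n ⊆ Hs m := by
    intro n m h
    induction h with
    | refl => exact subset_rfl
    | step h ih => exact fun z hz => hmonoH _ (ih hz)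
  set U : Set X := ⋃ n, Gs n with hU
  set W : Set X := ⋃ n, Hs n with hW
  have hUo : IsOpen U := isOpen_iUnion fun n => (hInvn n).1
  have hWo : IsOpen W := isOpen_iUnion fun n => (hInvn n).2.1
  have hUW : U ∩ W = ∅ := by
    rw [eq_empty_iff_forall_notMem]
    rintro z ⟨hz1, hz2⟩
    rcases mem_iUnion.1 hz1 with ⟨n, hn⟩
    rcases mem_iUnion.1 hz2 with ⟨m, hm⟩
    have h1 : z ∈ Gs (max n m) := hmonoG' (le_max_left n m) hn
    have h2 : z ∈ Hs (max n m) := hmonoH' (le_max_right n m) hm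
    have := (hInvn (max n m)).2.2.2.2.1
    rw [eq_empty_iff_forall_notMem] at this
    exact this z ⟨h1, h2⟩
  refine ⟨U, hUo, mem_iUnion.2 ⟨0, Metric.mem_ball_self (by linarith)⟩, ?_, ?_⟩
  · intro z hz
    by_contra hzV
    have hzW : z ∈ Hs 0 := (hInvn 0).2.2.2.1 hzV
    have : z ∈ U ∩ W := ⟨hz, mem_iUnion.2 ⟨0, hzW⟩⟩
    rw [hUW] at this; exact this
  · rw [eq_empty_iff_forall_notMem]
    rintro z ⟨hzf, hzY⟩
    rw [hUo.frontier_eq] at hzf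
    have hzU : z ∉ U := hzf.2
    rcases mem_iUnion.1 (hY ▸ hzY) with ⟨n, hn⟩
    rcases hcover n hn with hzG | hzH
    · exact hzU (mem_iUnion.2 ⟨n + 1, hzG⟩)
    · have hWU : W ∩ closure U = ∅ :=
        open_inter_closure_empty hWo (by rw [inter_comm]; exact hUW)
      have : z ∈ W ∩ closure U := ⟨mem_iUnion.2 ⟨n + 1, hzH⟩, hzf.1⟩
      rw [hWU] at this; exact this

end L1

section L5

variable {X : Type*} [MetricSpace X]

/-- Separation theorem: if the complement of `A` is zero-dimensional (in the trace sense),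
then every point has arbitrarily small neighbourhoods with frontier inside `A`. -/
lemma exists_small_frontier [SeparableSpace X] {A : Set X} (h : ZDT Aᶜ)
    (x : X) (V : Set X) (hV : IsOpen V) (hxV : x ∈ V) :
    ∃ U : Set X, IsOpen U ∧ x ∈ U ∧ U ⊆ V ∧ frontier U ⊆ A := by
  obtain ⟨c, hc, hball⟩ := Metric.isOpen_iff.1 hV x hxV
  set Z : Set X := Aᶜ with hZ
  set U₀ : Set X := Metric.ball x (c / 4) with hU₀
  set H₀ : Set X := {z | c / 2 < dist z x} with hH₀
  have hU₀o : IsOpen U₀ := Metric.isOpen_ball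
  have hH₀o : IsOpen H₀ := isOpen_lt continuous_const (continuous_id.dist continuous_const)
  have hclU₀ : closure U₀ ⊆ {z | dist z x ≤ c / 4} := fun z hz =>
    Metric.closure_ball_subset_closedBall hz
  have hclH₀ : closure H₀ ⊆ {z | c / 2 ≤ dist z x} := by
    refine closure_minimal (fun w hw => le_of_lt (show c / 2 < dist w x from hw)) ?_
    exact isClosed_le continuous_const (continuous_id.dist continuous_const)
  have hdisj : Z ∩ closure U₀ ∩ closure H₀ = ∅ := by
    rw [eq_empty_iff_forall_notMem]
    rintro z ⟨⟨-, hz1⟩, hz2⟩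
    have h1 := hclU₀ hz1
    have h2 := hclH₀ hz2
    simp only [mem_setOf_eq] at h1 h2
    linarith
  obtain ⟨GP, hGPo, hGPC, hGPD, hGPcl⟩ :=
    clopen_separation h isClosed_closure isClosed_closure hdisj
  set P : Set X := Z ∩ GP with hP
  set Q : Set X := Z ∩ GPᶜ with hQ
  have hPQ : P ∪ Q = Z := by
    rw [hP, hQ, ← inter_union_distrib_left, union_compl_self, inter_univ]
  have hPQd : P ∩ Q = ∅ := by
    rw [eq_empty_iff_forall_notMem]
    rintro z ⟨⟨-, h1⟩, ⟨-, h2⟩⟩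
    exact h2 h1
  have hPclZ : closure P ∩ Z ⊆ P := fun z hz => hGPcl hz
  have hQclZ : closure Q ∩ Z ⊆ Q := by
    rintro z ⟨hz1, hz2⟩
    refine ⟨hz2, ?_⟩
    have : closure Q ⊆ GPᶜ :=
      closure_minimal inter_subset_right (isClosed_compl_iff.2 hGPo)
    exact this hz1
  -- the separation facts
  have hU₀clH₀ : U₀ ∩ closure H₀ = ∅ := by
    rw [eq_empty_iff_forall_notMem]
    rintro z ⟨hz1, hz2⟩
    have h2 := hclH₀ hz2
    rw [Metric.mem_ball] at hz1
    simp only [mem_setOf_eq] at h2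
    linarith
  have hH₀clU₀ : H₀ ∩ closure U₀ = ∅ := by
    rw [eq_empty_iff_forall_notMem]
    rintro z ⟨hz1, hz2⟩
    have h2 := hclU₀ hz2
    simp only [hH₀, mem_setOf_eq] at hz1
    simp only [mem_setOf_eq] at h2
    linarith
  have hQclU₀ : Q ∩ closure U₀ = ∅ := by
    rw [eq_empty_iff_forall_notMem]
    rintro z ⟨hzQ, hzU⟩
    have hzP : z ∈ P := hGPC ⟨hzQ.1, hzU⟩
    have hx : z ∈ P ∩ Q := ⟨hzP, hzQ⟩
    rw [hPQd] at hx; exact hx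
  have hPclH₀ : P ∩ closure H₀ = ∅ := by
    rw [eq_empty_iff_forall_notMem]
    rintro z ⟨hzP, hzH⟩
    have hx : z ∈ Z ∩ GP ∩ closure H₀ := ⟨hzP, hzH⟩
    rw [hGPD] at hx; exact hx
  have hU₀Q : U₀ ∩ closure Q = ∅ := by
    apply open_inter_closure_empty hU₀o
    rw [eq_empty_iff_forall_notMem]
    rintro z ⟨hzU, hzQ⟩
    have hx : z ∈ Q ∩ closure U₀ := ⟨hzQ, subset_closure hzU⟩
    rw [hQclU₀] at hx; exact hx
  have hH₀P : H₀ ∩ closure P = ∅ := by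
    apply open_inter_closure_empty hH₀o
    rw [eq_empty_iff_forall_notMem]
    rintro z ⟨hzH, hzP⟩
    have hx : z ∈ P ∩ closure H₀ := ⟨hzP, subset_closure hzH⟩
    rw [hPclH₀] at hx; exact hx
  have hPclQ : P ∩ closure Q = ∅ := by
    rw [eq_empty_iff_forall_notMem]
    rintro z ⟨hzP, hzQ⟩
    have hx : z ∈ P ∩ Q := ⟨hzP, hQclZ ⟨hzQ, hzP.1⟩⟩
    rw [hPQd] at hx; exact hx
  have hQclP : Q ∩ closure P = ∅ := by
    rw [eq_empty_iff_forall_notMem]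
    rintro z ⟨hzQ, hzP⟩
    have hx : z ∈ P ∩ Q := ⟨hPclZ ⟨hzP, hzQ.1⟩, hzQ⟩
    rw [hPQd] at hx; exact hx
  have hane : (U₀ ∪ P).Nonempty := ⟨x, Or.inl (Metric.mem_ball_self (by linarith))⟩
  have hab : (U₀ ∪ P) ∩ closure (H₀ ∪ Q) = ∅ := by
    rw [closure_union, eq_empty_iff_forall_notMem]
    rintro z ⟨hz1, hz2⟩
    rcases hz1 with hzU | hzP <;> rcases hz2 with hzH | hzQ
    · have hx : z ∈ U₀ ∩ closure H₀ := ⟨hzU, hzH⟩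
      rw [hU₀clH₀] at hx; exact hx
    · have hx : z ∈ U₀ ∩ closure Q := ⟨hzU, hzQ⟩
      rw [hU₀Q] at hx; exact hx
    · have hx : z ∈ P ∩ closure H₀ := ⟨hzP, hzH⟩
      rw [hPclH₀] at hx; exact hx
    · have hx : z ∈ P ∩ closure Q := ⟨hzP, hzQ⟩
      rw [hPclQ] at hx; exact hx
  have hba : closure (U₀ ∪ P) ∩ (H₀ ∪ Q) = ∅ := by
    rw [closure_union, eq_empty_iff_forall_notMem]
    rintro z ⟨hz1, hz2⟩
    rcases hz1 with hzU | hzP <;> rcases hz2 with hzH | hzQ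
    · have hx : z ∈ H₀ ∩ closure U₀ := ⟨hzH, hzU⟩
      rw [hH₀clU₀] at hx; exact hx
    · have hx : z ∈ Q ∩ closure U₀ := ⟨hzQ, hzU⟩
      rw [hQclU₀] at hx; exact hx
    · have hx : z ∈ H₀ ∩ closure P := ⟨hzH, hzP⟩
      rw [hH₀P] at hx; exact hx
    · have hx : z ∈ Q ∩ closure P := ⟨hzQ, hzP⟩
      rw [hQclP] at hx; exact hx
  obtain ⟨G', H', hG'o, hH'o, hsubG, hsubH, hG'H', hclsub⟩ := sep_combine hane hab hba
  refine ⟨G', hG'o, hsubG (Or.inl (Metric.mem_ball_self (by linarith))), ?_, ?_⟩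
  · intro z hz
    by_contra hzV
    have hzH₀ : z ∈ H₀ := by
      simp only [hH₀, mem_setOf_eq]
      by_contra hlt
      push_neg at hlt
      exact hzV (hball (by simp only [Metric.mem_ball]; linarith))
    have hx : z ∈ G' ∩ H' := ⟨hz, hsubH (Or.inl hzH₀)⟩
    rw [hG'H'] at hx; exact hx
  · intro z hz
    by_contra hzA
    have hzZ : z ∈ Z := hzA
    rw [hG'o.frontier_eq] at hz
    rw [← hPQ] at hzZ
    rcases hzZ with hzP | hzQ
    · exact hz.2 (hsubG (Or.inr hzP))
    · have hH'clG' : H' ∩ closure G' = ∅ :=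
        open_inter_closure_empty hH'o (by rw [inter_comm]; exact hG'H')
      have hx : z ∈ H' ∩ closure G' := ⟨hsubH (Or.inr hzQ), hz.1⟩
      rw [hH'clG'] at hx; exact hx

end L5

section ZDiff

variable {X : Type*} [MetricSpace X]

/-- Generic fact: frontier of a preimage under a continuous map. -/
lemma frontier_preimage_subset {Y' : Type*} [TopologicalSpace Y'] {f : Y' → X}
    (hf : Continuous f) (U : Set X) : frontier (f ⁻¹' U) ⊆ f ⁻¹' (frontier U) := by
  intro z hz
  have h1 : z ∈ closure (f ⁻¹' U) := hz.1
  have h2 : z ∉ interior (f ⁻¹' U) := hz.2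
  have h3 : f z ∈ closure U := hf.closure_preimage_subset U h1
  have h4 : f z ∉ interior U := fun hc =>
    h2 (preimage_interior_subset_interior_preimage hf hc)
  exact ⟨h3, h4⟩

/-- From a clopen basis of the subspace to the trace property. -/
lemma zdt_of_subtype_basis {Y : Set X} {B : Set (Set ↥Y)}
    (hB : IsTopologicalBasis B) (hfr : ∀ W ∈ B, frontier W = ∅) : ZDT Y := by
  intro y hy V hV hyV
  obtain ⟨c, hc, hball⟩ := Metric.isOpen_iff.1 hV y hyV
  set a : ↥Y := ⟨y, hy⟩ with ha
  set O : Set ↥Y := ((↑) : ↥Y → X) ⁻¹' Metric.ball y (c / 4) with hO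
  have hOo : IsOpen O := Metric.isOpen_ball.preimage continuous_subtype_val
  have haO : a ∈ O := by
    simp only [hO, mem_preimage]
    exact Metric.mem_ball_self (by linarith)
  obtain ⟨W, hWB, haW, hWO⟩ := hB.exists_subset_of_mem_open haO hOo
  have hWo : IsOpen W := hB.isOpen hWB
  have hWclopen : IsClopen W := isClopen_iff_frontier_eq_empty.2 (hfr W hWB)
  set Ws : Set X := ((↑) : ↥Y → X) '' W with hWs
  have hWsY : Ws ⊆ Y := by
    rintro z ⟨w, -, rfl⟩
    exact w.2
  have hWsball : Ws ⊆ Metric.ball y (c / 4) := by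
    rintro z ⟨w, hw, rfl⟩
    exact hWO hw
  have hyWs : y ∈ Ws := ⟨a, haW, rfl⟩
  -- Ws is open in Y : ∃ Go open with Ws = Y ∩ Go
  obtain ⟨Go, hGoo, hGoW⟩ := isOpen_induced_iff.1 hWo
  have hWsGo : Ws = Y ∩ Go := by
    rw [hWs, ← hGoW, Subtype.image_preimage_coe]
  -- Ws is closed in Y
  have hWscl : closure Ws ∩ Y ⊆ Ws := by
    rintro z ⟨hz1, hz2⟩
    have : (⟨z, hz2⟩ : ↥Y) ∈ closure W := by
      rw [Topology.IsInducing.subtypeVal.closure_eq_preimage_closure_image W]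
      exact hz1
    rw [hWclopen.1.closure_eq] at this
    exact ⟨⟨z, hz2⟩, this, rfl⟩
  set H₀ : Set X := {z | c / 2 < dist z y} with hH₀
  have hH₀o : IsOpen H₀ := isOpen_lt continuous_const (continuous_id.dist continuous_const)
  have hclH₀ : closure H₀ ⊆ {z | c / 2 ≤ dist z y} := by
    refine closure_minimal (fun w hw => le_of_lt (show c / 2 < dist w y from hw)) ?_
    exact isClosed_le continuous_const (continuous_id.dist continuous_const)
  have hclWs : closure Ws ⊆ {z | dist z y ≤ c / 4} := by
    refine closure_minimal (fun w hw => ?_)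
      (isClosed_le (continuous_id.dist continuous_const) continuous_const)
    exact le_of_lt (Metric.mem_ball.1 (hWsball hw))
  set Sb : Set X := (Y \ Ws) ∪ H₀ with hSb
  have hane : Ws.Nonempty := ⟨y, hyWs⟩
  have hab : Ws ∩ closure Sb = ∅ := by
    rw [hSb, closure_union, eq_empty_iff_forall_notMem]
    rintro z ⟨hz1, hz2 | hz2⟩
    · -- z ∈ Ws ∩ closure (Y \ Ws)
      rw [hWsGo] at hz1
      have : Go ∩ (Y \ Ws) = ∅ := by
        rw [eq_empty_iff_forall_notMem]
        rintro w ⟨hw1, hw2, hw3⟩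
        exact hw3 (hWsGo ▸ ⟨hw2, hw1⟩)
      have hoc := open_inter_closure_empty hGoo this
      have hx : z ∈ Go ∩ closure (Y \ Ws) := ⟨hz1.2, hz2⟩
      rw [hoc] at hx; exact hx
    · have h1 := hWsball hz1
      have h2 := hclH₀ hz2
      rw [Metric.mem_ball] at h1
      simp only [mem_setOf_eq] at h2
      linarith
  have hba : closure Ws ∩ Sb = ∅ := by
    rw [hSb, eq_empty_iff_forall_notMem]
    rintro z ⟨hz1, hz2 | hz2⟩
    · exact hz2.2 (hWscl ⟨hz1, hz2.1⟩)
    · have h1 := hclWs hz1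
      simp only [hH₀, mem_setOf_eq] at hz2
      simp only [mem_setOf_eq] at h1
      linarith
  obtain ⟨G', H', hG'o, hH'o, hsubG, hsubH, hG'H', hclsub⟩ := sep_combine hane hab hba
  refine ⟨G', hG'o, hsubG hyWs, ?_, ?_⟩
  · intro z hz
    by_contra hzV
    have hzH₀ : z ∈ H₀ := by
      simp only [hH₀, mem_setOf_eq]
      by_contra hlt
      push_neg at hlt
      exact hzV (hball (by simp only [Metric.mem_ball]; linarith))
    have hx : z ∈ G' ∩ H' := ⟨hz, hsubH (Or.inr hzH₀)⟩
    rw [hG'H'] at hx; exact hx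
  · rw [eq_empty_iff_forall_notMem]
    rintro z ⟨hzf, hzY⟩
    rw [hG'o.frontier_eq] at hzf
    by_cases hzW : z ∈ Ws
    · exact hzf.2 (hsubG hzW)
    · have hH'clG' : H' ∩ closure G' = ∅ :=
        open_inter_closure_empty hH'o (by rw [inter_comm]; exact hG'H')
      have hx : z ∈ H' ∩ closure G' := ⟨hsubH (Or.inl ⟨hzY, hzW⟩), hzf.1⟩
      rw [hH'clG'] at hx; exact hx

/-- From the trace property to a clopen basis of the subspace. -/
lemma subtype_basis_of_zdt {Y : Set X} (h : ZDT Y) :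
    ∃ B : Set (Set ↥Y), IsTopologicalBasis B ∧ ∀ W ∈ B, frontier W = ∅ := by
  set B : Set (Set ↥Y) :=
    {W | ∃ U : Set X, IsOpen U ∧ frontier U ∩ Y = ∅ ∧ W = ((↑) : ↥Y → X) ⁻¹' U} with hB
  have hfr : ∀ W ∈ B, frontier W = ∅ := by
    rintro W ⟨U, hUo, hUf, rfl⟩
    rw [eq_empty_iff_forall_notMem]
    intro z hz
    have := frontier_preimage_subset continuous_subtype_val U hz
    have hx : (z : X) ∈ frontier U ∩ Y := ⟨this, z.2⟩
    rw [hUf] at hx; exact hx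
  refine ⟨B, isTopologicalBasis_of_isOpen_of_nhds ?_ ?_, hfr⟩
  · rintro W ⟨U, hUo, -, rfl⟩
    exact hUo.preimage continuous_subtype_val
  · intro a u hau huo
    obtain ⟨O, hOo, hOu⟩ := isOpen_induced_iff.1 huo
    have haO : (a : X) ∈ O := by
      have : a ∈ ((↑) : ↥Y → X) ⁻¹' O := hOu.symm ▸ hau
      exact this
    obtain ⟨U, hUo, haU, hUO, hUf⟩ := h a a.2 O hOo haO
    exact ⟨((↑) : ↥Y → X) ⁻¹' U, ⟨U, hUo, hUf, rfl⟩, haU, by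
      rw [← hOu]; exact fun w hw => hUO hw⟩

end ZDiff

section Hull

variable {X : Type*} [MetricSpace X]

lemma rpow_add_le_aux {a b : ℝ≥0∞} {q : ℝ} (hq : 0 ≤ q) :
    (a + b) ^ q ≤ 2 ^ q * a ^ q + 2 ^ q * b ^ q := by
  have h1 : a + b ≤ 2 * max a b := by
    rcases le_total a b with h | h
    · calc a + b ≤ b + b := by exact add_le_add_left h b
        _ = 2 * b := (two_mul b).symm
        _ ≤ 2 * max a b := mul_le_mul_right (le_max_right a b) 2
    · calc a + b ≤ a + a := by exact add_le_add_right h a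
        _ = 2 * a := (two_mul a).symm
        _ ≤ 2 * max a b := mul_le_mul_right (le_max_left a b) 2
  calc (a + b) ^ q ≤ (2 * max a b) ^ q := ENNReal.rpow_le_rpow h1 hq
    _ = 2 ^ q * (max a b) ^ q := ENNReal.mul_rpow_of_nonneg _ _ hq
    _ ≤ 2 ^ q * (a ^ q + b ^ q) := by
        apply mul_le_mul_right
        rcases le_total a b with h | h
        · rw [max_eq_right h]; exact le_add_self
        · rw [max_eq_left h]; exact self_le_add_right _ _
    _ = 2 ^ q * a ^ q + 2 ^ q * b ^ q := by rw [mul_add]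

variable [MeasurableSpace X] [BorelSpace X]

/-- Open-cover approximation of a Hausdorff-null set at a fixed scale. -/
lemma null_open_approx {q : ℝ} (hq : 0 < q) {s : Set X} (hs : μH[q] s = 0)
    {ρ ε : ℝ≥0∞} (hρ0 : 0 < ρ) (hε0 : 0 < ε) (hεt : ε ≠ ∞) :
    ∃ u : ℕ → Set X, (∀ n, IsOpen (u n)) ∧ s ⊆ ⋃ n, u n ∧
      (∀ n, EMetric.diam (u n) ≤ ρ) ∧
      ∑' n, EMetric.diam (u n) ^ q ≤ ε := by
  have h2q0 : (2 : ℝ≥0∞) ^ q ≠ 0 := by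
    simp only [Ne, ENNReal.rpow_eq_zero_iff]
    push_neg
    exact ⟨fun h => absurd h (by norm_num), fun h => absurd h (by norm_num)⟩
  have h2qt : (2 : ℝ≥0∞) ^ q ≠ ∞ := ENNReal.rpow_ne_top_of_nonneg hq.le (by norm_num)
  set ε₁ : ℝ≥0∞ := ε / (2 ^ q * 3) with hε₁
  have hε₁0 : 0 < ε₁ := ENNReal.div_pos (ne_of_gt hε0) (by
    exact ENNReal.mul_ne_top h2qt (by norm_num))
  have hε₁t : ε₁ ≠ ∞ :=
    (ENNReal.div_lt_top hεt (mul_ne_zero h2q0 (by norm_num))).ne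
  -- extract a cover of `s` of mesh `ρ/2` with small sum
  have hρ2 : (0 : ℝ≥0∞) < ρ / 2 := ENNReal.div_pos (ne_of_gt hρ0) (by norm_num)
  have h0 : (⨆ (r : ℝ≥0∞) (_ : 0 < r),
      ⨅ (t : ℕ → Set X) (_ : s ⊆ ⋃ n, t n) (_ : ∀ n, EMetric.diam (t n) ≤ r),
        ∑' n, ⨆ _ : (t n).Nonempty, EMetric.diam (t n) ^ q) = 0 := by
    exact (MeasureTheory.Measure.hausdorffMeasure_apply _ _).symm.trans hs
  have h1 : (⨅ (t : ℕ → Set X) (_ : s ⊆ ⋃ n, t n) (_ : ∀ n, EMetric.diam (t n) ≤ ρ / 2),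
      ∑' n, ⨆ _ : (t n).Nonempty, EMetric.diam (t n) ^ q) = 0 := by
    refine le_antisymm ?_ zero_le
    rw [← h0]
    exact le_iSup₂ (f := fun (r : ℝ≥0∞) (_ : 0 < r) =>
      ⨅ (t : ℕ → Set X) (_ : s ⊆ ⋃ n, t n) (_ : ∀ n, EMetric.diam (t n) ≤ r),
        ∑' n, ⨆ _ : (t n).Nonempty, EMetric.diam (t n) ^ q) (ρ / 2) hρ2
  have h2 : (⨅ (t : ℕ → Set X) (_ : s ⊆ ⋃ n, t n) (_ : ∀ n, EMetric.diam (t n) ≤ ρ / 2),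
      ∑' n, ⨆ _ : (t n).Nonempty, EMetric.diam (t n) ^ q) < ε₁ := h1 ▸ hε₁0
  obtain ⟨t, ht⟩ := iInf_lt_iff.1 h2
  obtain ⟨hcov, ht2⟩ := iInf_lt_iff.1 ht
  obtain ⟨hmesh, hsum⟩ := iInf_lt_iff.1 ht2
  -- thickening radii
  set base : ℕ → ℝ≥0∞ := fun n => ε₁ * 2⁻¹ ^ (n + 1) with hbase
  have hbase0 : ∀ n, base n ≠ 0 := fun n =>
    mul_ne_zero (ne_of_gt hε₁0) (pow_ne_zero _ (by norm_num))
  have hbaset : ∀ n, base n ≠ ∞ := fun n =>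
    ENNReal.mul_ne_top hε₁t (ENNReal.pow_ne_top (by norm_num))
  set η : ℕ → ℝ≥0∞ := fun n => base n ^ (1 / q) with hη
  have hη0 : ∀ n, η n ≠ 0 := by
    intro n
    simp only [hη, Ne, ENNReal.rpow_eq_zero_iff, not_or, not_and]
    constructor
    · intro h; exact absurd h (hbase0 n)
    · intro h; exact absurd h (hbaset n)
  have hηt : ∀ n, η n ≠ ∞ := fun n =>
    ENNReal.rpow_ne_top_of_nonneg (by positivity) (hbaset n)
  have hηq : ∀ n, η n ^ q = base n := by
    intro n
    rw [hη, ← ENNReal.rpow_mul, one_div, inv_mul_cancel₀ (ne_of_gt hq), ENNReal.rpow_one]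
  set m : ℕ → ℝ≥0∞ := fun n => min (ρ / 4) (η n) with hm
  have hm0 : ∀ n, m n ≠ 0 := fun n => by
    simp only [hm, Ne, min_eq_iff, not_or]
    constructor
    · rintro ⟨h, -⟩
      exact absurd h (ne_of_gt (ENNReal.div_pos (ne_of_gt hρ0) (by norm_num)))
    · rintro ⟨h, -⟩
      exact absurd h (hη0 n)
  have hmt : ∀ n, m n ≠ ∞ := fun n =>
    (lt_of_le_of_lt (min_le_right _ _) (lt_top_iff_ne_top.2 (hηt n))).ne
  set δ : ℕ → ℝ≥0 := fun n => (m n).toNNReal / 2 with hδ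
  have hδ0 : ∀ n, 0 < δ n := fun n => by
    have : (m n).toNNReal ≠ 0 := by
      simp only [Ne, ENNReal.toNNReal_eq_zero_iff, not_or]
      exact ⟨hm0 n, hmt n⟩
    positivity
  have h2δ : ∀ n, 2 * (δ n : ℝ≥0∞) = m n := by
    intro n
    have : ((δ n : ℝ≥0) : ℝ≥0∞) = m n / 2 := by
      rw [hδ, ENNReal.coe_div (by norm_num : (2 : ℝ≥0) ≠ 0), ENNReal.coe_toNNReal (hmt n)]
      norm_num
    rw [this]
    exact ENNReal.mul_div_cancel' (by norm_num) (by norm_num)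
  set u : ℕ → Set X := fun n => Metric.thickening (δ n) (t n) with hu
  refine ⟨u, fun n => Metric.isOpen_thickening, ?_, ?_, ?_⟩
  · refine hcov.trans (iUnion_mono fun n => ?_)
    exact Metric.self_subset_thickening (by exact_mod_cast hδ0 n) (t n)
  · intro n
    calc EMetric.diam (u n) ≤ EMetric.diam (t n) + 2 * (δ n : ℝ≥0∞) :=
          Metric.ediam_thickening_le (δ n)
      _ ≤ ρ / 2 + ρ / 2 := by
          refine add_le_add (hmesh n) ?_
          rw [h2δ n]
          refine (min_le_left _ _).trans ?_
          rw [div_eq_mul_inv, div_eq_mul_inv]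
          exact mul_le_mul_right (by
            rw [ENNReal.inv_le_inv]; norm_num) ρ
      _ = ρ := ENNReal.add_halves ρ
  · have hptwise : ∀ n, EMetric.diam (u n) ^ q ≤
        2 ^ q * (⨆ _ : (t n).Nonempty, EMetric.diam (t n) ^ q) + 2 ^ q * base n := by
      intro n
      rcases eq_empty_or_nonempty (t n) with hemp | hne
      · have : u n = ∅ := by
          show Metric.thickening (↑(δ n)) (t n) = ∅
          rw [hemp]; exact Metric.thickening_empty _
        rw [this]
        rw [show EMetric.diam (∅ : Set X) = 0 from Metric.ediam_empty]
        rw [ENNReal.zero_rpow_of_pos hq]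
        exact zero_le
      · have hd : EMetric.diam (u n) ^ q ≤ (EMetric.diam (t n) + m n) ^ q := by
          apply ENNReal.rpow_le_rpow _ hq.le
          rw [← h2δ n]
          exact Metric.ediam_thickening_le (δ n)
        refine hd.trans ((rpow_add_le_aux hq.le).trans ?_)
        rw [iSup_pos hne]
        refine add_le_add le_rfl (mul_le_mul_right ?_ _)
        calc (m n) ^ q ≤ (η n) ^ q := ENNReal.rpow_le_rpow (min_le_right _ _) hq.le
          _ = base n := hηq n
    calc ∑' n, EMetric.diam (u n) ^ q
        ≤ ∑' n, (2 ^ q * (⨆ _ : (t n).Nonempty, EMetric.diam (t n) ^ q) + 2 ^ q * base n) :=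
          ENNReal.tsum_le_tsum hptwise
      _ = 2 ^ q * (∑' n, ⨆ _ : (t n).Nonempty, EMetric.diam (t n) ^ q) +
            2 ^ q * ∑' n, base n := by
          rw [ENNReal.tsum_add, ENNReal.tsum_mul_left, ENNReal.tsum_mul_left]
      _ ≤ 2 ^ q * ε₁ + 2 ^ q * (ε₁ * 1) := by
          refine add_le_add (mul_le_mul_right hsum.le _) (mul_le_mul_right ?_ _)
          rw [hbase, ENNReal.tsum_mul_left]
          refine mul_le_mul_right ?_ ε₁
          rw [ENNReal.tsum_geometric_add_one, ENNReal.one_sub_inv_two, inv_inv,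
            ENNReal.inv_mul_cancel (by norm_num) (by norm_num)]
      _ ≤ 2 ^ q * 3 * ε₁ := by
          rw [mul_one]
          calc 2 ^ q * ε₁ + 2 ^ q * ε₁ = 2 ^ q * 2 * ε₁ := by ring
            _ ≤ 2 ^ q * 3 * ε₁ := by
                refine mul_le_mul_left (mul_le_mul_right ?_ _) ε₁
                norm_num
      _ = ε := by
          rw [hε₁]
          exact ENNReal.mul_div_cancel (mul_ne_zero h2q0 (by norm_num))
            (ENNReal.mul_ne_top h2qt (by norm_num))

end Hull
section Hull2

variable {X : Type*} [MetricSpace X] [MeasurableSpace X] [BorelSpace X]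

lemma exists_isGδ_superset_null {q : ℝ} (hq : 0 < q) {s : Set X} (hs : μH[q] s = 0) :
    ∃ t : Set X, s ⊆ t ∧ IsGδ t ∧ μH[q] t = 0 := by
  have happrox : ∀ k : ℕ, ∃ u : ℕ → Set X, (∀ n, IsOpen (u n)) ∧ s ⊆ ⋃ n, u n ∧
      (∀ n, EMetric.diam (u n) ≤ ((k : ℝ≥0∞) + 1)⁻¹) ∧
      ∑' n, EMetric.diam (u n) ^ q ≤ ((k : ℝ≥0∞) + 1)⁻¹ := by
    intro k
    refine null_open_approx hq hs ?_ ?_ ?_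
    · exact ENNReal.inv_pos.2 (by simp)
    · exact ENNReal.inv_pos.2 (by simp)
    · exact ENNReal.inv_ne_top.2 (by simp)
  choose u huo hucov humesh husum using happrox
  refine ⟨⋂ k, ⋃ n, u k n, ?_, ?_, ?_⟩
  · exact subset_iInter fun k => hucov k
  · exact IsGδ.iInter fun k => (isOpen_iUnion (huo k)).isGδ
  · rw [← nonpos_iff_eq_zero, MeasureTheory.Measure.hausdorffMeasure_apply]
    refine iSup₂_le fun r hr => ?_
    have key : ∀ k : ℕ, ((k : ℝ≥0∞) + 1)⁻¹ ≤ r →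
        (⨅ (t : ℕ → Set X) (_ : (⋂ k, ⋃ n, u k n) ⊆ ⋃ n, t n)
          (_ : ∀ n, EMetric.diam (t n) ≤ r),
            ∑' n, ⨆ _ : (t n).Nonempty, EMetric.diam (t n) ^ q) ≤ ((k : ℝ≥0∞) + 1)⁻¹ := by
      intro k hk
      refine le_trans (iInf_le_of_le (u k) (iInf_le_of_le (iInter_subset _ k)
        (iInf_le_of_le (fun n => (humesh k n).trans hk) le_rfl))) ?_
      refine le_trans (ENNReal.tsum_le_tsum fun n => ?_) (husum k)
      exact iSup_le fun _ => le_rfl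
    refine ENNReal.le_of_forall_pos_le_add fun ε' hε' _ => ?_
    rw [zero_add]
    have hpos : (0 : ℝ≥0∞) < min r ε' := lt_min hr (by exact_mod_cast hε')
    obtain ⟨k, hk⟩ := ENNReal.exists_inv_nat_lt (ne_of_gt hpos)
    have hk1 : ((k : ℝ≥0∞) + 1)⁻¹ ≤ (k : ℝ≥0∞)⁻¹ :=
      ENNReal.inv_le_inv' le_self_add
    have hkr : ((k : ℝ≥0∞) + 1)⁻¹ ≤ r := hk1.trans ((le_of_lt hk).trans (min_le_left _ _))
    calc _ ≤ ((k : ℝ≥0∞) + 1)⁻¹ := key k hkr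
      _ ≤ (k : ℝ≥0∞)⁻¹ := hk1
      _ ≤ min r ε' := le_of_lt hk
      _ ≤ ε' := min_le_right _ _

lemma exists_isGδ_superset_dimH_le (s : Set X) :
    ∃ t : Set X, s ⊆ t ∧ IsGδ t ∧ dimH t ≤ dimH s := by
  rcases eq_top_or_lt_top (dimH s) with htop | hlt
  · exact ⟨univ, subset_univ s, IsGδ.univ, by rw [htop]; exact le_top⟩
  set D : ℝ≥0∞ := dimH s with hD
  set qf : ℕ → ℝ≥0 := fun n => D.toNNReal + ((n : ℝ≥0) + 1)⁻¹ with hqf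
  have hq0 : ∀ n, (0 : ℝ) < (qf n : ℝ) := by
    intro n
    have : (0 : ℝ≥0) < qf n := by
      rw [hqf]
      positivity
    exact_mod_cast this
  have hcoe : ∀ n : ℕ, ((((n : ℝ≥0) + 1)⁻¹ : ℝ≥0) : ℝ≥0∞) = ((n : ℝ≥0∞) + 1)⁻¹ := by
    intro n
    rw [ENNReal.coe_inv (by positivity)]
    norm_cast
    simp
  have hqcast : ∀ n : ℕ, (qf n : ℝ≥0∞) = D + ((n : ℝ≥0∞) + 1)⁻¹ := by
    intro n
    rw [hqf, ENNReal.coe_add, hcoe n, ENNReal.coe_toNNReal hlt.ne]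
  have hqD : ∀ n, D < (qf n : ℝ≥0∞) := by
    intro n
    rw [hqcast n]
    refine ENNReal.lt_add_right hlt.ne ?_
    exact ENNReal.inv_ne_zero.2 (ENNReal.add_ne_top.2 ⟨ENNReal.natCast_ne_top n, ENNReal.one_ne_top⟩)
  have hnull : ∀ n, μH[(qf n : ℝ)] s = 0 := fun n =>
    hausdorffMeasure_of_dimH_lt (by exact_mod_cast hqD n)
  have hhull : ∀ n : ℕ, ∃ t : Set X, s ⊆ t ∧ IsGδ t ∧ μH[(qf n : ℝ)] t = 0 := fun n =>
    exists_isGδ_superset_null (hq0 n) (hnull n)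
  choose t hts htG htnull using hhull
  refine ⟨⋂ n, t n, subset_iInter hts, IsGδ.iInter htG, ?_⟩
  have hdim : ∀ n, dimH (⋂ k, t k) ≤ (qf n : ℝ≥0∞) := by
    intro n
    apply dimH_le_of_hausdorffMeasure_ne_top
    have hle : μH[(qf n : ℝ)] (⋂ k, t k) ≤ μH[(qf n : ℝ)] (t n) :=
      measure_mono (iInter_subset _ n)
    rw [htnull n] at hle
    rw [nonpos_iff_eq_zero.1 hle]
    exact ENNReal.zero_ne_top
  refine ENNReal.le_of_forall_pos_le_add fun ε' hε' _ => ?_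
  obtain ⟨k, hk⟩ := ENNReal.exists_inv_nat_lt (a := (ε' : ℝ≥0∞)) (by exact_mod_cast ne_of_gt hε')
  refine (hdim k).trans ?_
  rw [hqcast k]
  refine add_le_add le_rfl ?_
  have hk1 : ((k : ℝ≥0∞) + 1)⁻¹ ≤ (k : ℝ≥0∞)⁻¹ := ENNReal.inv_le_inv' le_self_add
  exact (hk1.trans hk.le)

end Hull2
section DirB

variable {X : Type*} [MetricSpace X] [Nonempty X] [SeparableSpace X]

/-- From an admissible basis to a decomposition witness. -/
lemma exists_A_of_basis {d : ℝ≥0∞} {B : Set (Set X)} (hB : IsTopologicalBasis B)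
    (hBd : ∀ U ∈ B, frontier U = ∅ ∨ dimH (frontier U) + 1 ≤ d) :
    ∃ A : Set X, (A = ∅ ∨ dimH A + 1 ≤ d) ∧ ZDT Aᶜ := by
  haveI : SecondCountableTopology X := UniformSpace.secondCountable_of_separable X
  obtain ⟨Vb, hVbc, hVbne', hVbb⟩ := exists_countable_basis X
  have hVbne : Vb.Nonempty := by
    rcases hVbb.exists_subset_of_mem_open (mem_univ (Classical.arbitrary X)) isOpen_univ with
      ⟨v, hv, -, -⟩
    exact ⟨v, hv⟩
  obtain ⟨Vf, hVf⟩ := hVbc.exists_eq_range hVbne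
  classical
  set W : ℕ × ℕ → Prop := fun p => ∃ U, U ∈ B ∧ Vf p.1 ⊆ U ∧ U ⊆ Vf p.2 with hW
  set S : ℕ × ℕ → Set X := fun p => if h : W p then frontier h.choose else ∅ with hS
  set A : Set X := ⋃ p, S p with hA
  have hSB : ∀ (p : ℕ × ℕ) (hp : W p), S p = frontier hp.choose := by
    intro p hp
    simp only [hS]
    rw [dif_pos hp]
  refine ⟨A, ?_, ?_⟩
  · by_cases hall : ∀ p, S p = ∅
    · exact Or.inl (iUnion_eq_empty.2 hall)
    · push_neg at hall
      obtain ⟨p₀, hp₀⟩ := hall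
      have hWp₀ : W p₀ := by
        by_contra hc
        obtain ⟨z, hz⟩ := hp₀
        simp only [hS, dif_neg hc] at hz
        exact hz
      have hfr₀ := (hWp₀.choose_spec).1
      have hd1 : (1 : ℝ≥0∞) ≤ d := by
        rcases hBd _ hfr₀ with hemp | hle
        · exfalso
          obtain ⟨z, hz⟩ := hp₀
          rw [hSB p₀ hWp₀, hemp] at hz
          exact hz
        · exact le_trans le_add_self hle
      right
      have hAdim : dimH A = ⨆ p, dimH (S p) := dimH_iUnion S
      rw [hAdim, ENNReal.iSup_add]
      refine iSup_le fun p => ?_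
      by_cases hp : W p
      · rw [hSB p hp]
        rcases hBd _ hp.choose_spec.1 with hemp | hle
        · rw [hemp, dimH_empty, zero_add]; exact hd1
        · exact hle
      · simp only [hS, dif_neg hp, dimH_empty, zero_add]
        exact hd1
  · intro y hy V hV hyV
    obtain ⟨Vm, hVmb, hyVm, hVmV⟩ := hVbb.exists_subset_of_mem_open hyV hV
    obtain ⟨U, hUB, hyU, hUVm⟩ := hB.exists_subset_of_mem_open hyVm (hVbb.isOpen hVmb)
    obtain ⟨Vn, hVnb, hyVn, hVnU⟩ := hVbb.exists_subset_of_mem_open hyU (hB.isOpen hUB)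
    rw [hVf] at hVmb hVnb
    obtain ⟨m, hm⟩ := hVmb
    obtain ⟨n, hn⟩ := hVnb
    have hWnm : W (n, m) := ⟨U, hUB, by rw [hn]; exact hVnU, by rw [hm]; exact hUVm⟩
    set U' := hWnm.choose with hU'
    obtain ⟨hU'B, hU'1, hU'2⟩ := hWnm.choose_spec
    refine ⟨U', hB.isOpen hU'B, hU'1 (by rw [hn]; exact hyVn), ?_, ?_⟩
    · refine subset_trans hU'2 ?_
      rw [hm]; exact hVmV
    · rw [eq_empty_iff_forall_notMem]
      rintro z ⟨hz1, hz2⟩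
      apply hz2
      rw [hA]
      refine mem_iUnion.2 ⟨(n, m), ?_⟩
      rw [hSB (n, m) hWnm]
      exact hz1

end DirB

/-- Decomposition theorem: for a nonempty separable metric space,
`dimTH X = inf {d : ∃ A ⊆ X, dimH A ≤ d - 1 and X \ A has a basis of sets with empty
boundary}`, and the infimum is attained. -/
theorem stmt9 (X : Type*) [MetricSpace X] [Nonempty X] [SeparableSpace X] :
    (dimTH X = ⨅ (d : ℝ≥0∞) (_ : ∃ A : Set X,
        (A = ∅ ∨ dimH A + 1 ≤ d) ∧
        ∃ B : Set (Set ↥(Aᶜ)), IsTopologicalBasis B ∧ ∀ U ∈ B, frontier U = ∅), d) ∧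
    ∃ A : Set X, (A = ∅ ∨ dimH A + 1 ≤ dimTH X) ∧
      ∃ B : Set (Set ↥(Aᶜ)), IsTopologicalBasis B ∧ ∀ U ∈ B, frontier U = ∅ := by

  classical
  set Q : ℝ≥0∞ → Prop := fun d => ∃ B : Set (Set X), IsTopologicalBasis B ∧
      ∀ U ∈ B, frontier U = ∅ ∨ dimH (frontier U) + 1 ≤ d with hQdef
  set R : ℝ≥0∞ → Prop := fun d => ∃ A : Set X, (A = ∅ ∨ dimH A + 1 ≤ d) ∧
      ∃ B : Set (Set ↥(Aᶜ)), IsTopologicalBasis B ∧ ∀ U ∈ B, frontier U = ∅ with hRdef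
  have hdim : dimTH X = ⨅ (d : ℝ≥0∞) (_ : Q d), d := rfl
  -- Q implies R
  have key1 : ∀ d, Q d → R d := by
    rintro d ⟨B, hB, hBd⟩
    obtain ⟨A, hA1, hA2⟩ := exists_A_of_basis hB hBd
    obtain ⟨B', hB'1, hB'2⟩ := subtype_basis_of_zdt hA2
    exact ⟨A, hA1, B', hB'1, hB'2⟩
  -- R implies Q
  have key2 : ∀ d, R d → Q d := by
    rintro d ⟨A, hA1, B', hB'1, hB'2⟩
    have hzdt : ZDT Aᶜ := zdt_of_subtype_basis hB'1 hB'2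
    refine ⟨{U : Set X | IsOpen U ∧ frontier U ⊆ A},
      isTopologicalBasis_of_isOpen_of_nhds (fun U hU => hU.1) ?_, ?_⟩
    · intro x u hxu huo
      obtain ⟨U, h1, h2, h3, h4⟩ := exists_small_frontier hzdt x u huo hxu
      exact ⟨U, ⟨h1, h4⟩, h2, h3⟩
    · rintro U ⟨-, hUfr⟩
      rcases hA1 with rfl | hd
      · exact Or.inl (eq_empty_of_subset_empty hUfr)
      · exact Or.inr (le_trans (add_le_add_left (dimH_mono hUfr) 1) hd)
  constructor
  · rw [hdim]
    exact le_antisymm (le_iInf₂ fun d hd => iInf₂_le d (key2 d hd))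
      (le_iInf₂ fun d hd => iInf₂_le d (key1 d hd))
  -- attainment
  by_cases h1 : ∃ d, Q d ∧ d < 1
  · obtain ⟨d, ⟨B, hB, hBd⟩, hd1⟩ := h1
    have hfr : ∀ U ∈ B, frontier U = ∅ := by
      intro U hU
      rcases hBd U hU with h | h
      · exact h
      · exact absurd (lt_of_le_of_lt (le_trans le_add_self h) hd1) (lt_irrefl _)
    have hzdt : ZDT ((∅ : Set X)ᶜ) := by
      intro y hy V hV hyV
      obtain ⟨U, hUB, hyU, hUV⟩ := hB.exists_subset_of_mem_open hyV hV
      exact ⟨U, hB.isOpen hUB, hyU, hUV, by rw [hfr U hUB]; exact empty_inter _⟩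
    obtain ⟨B', hB'1, hB'2⟩ := subtype_basis_of_zdt hzdt
    exact ⟨∅, Or.inl rfl, B', hB'1, hB'2⟩
  · push_neg at h1
    by_cases hDtop : dimTH X = ⊤
    · have hempty : IsEmpty ↥((univ : Set X)ᶜ) := Set.isEmpty_coe_sort.2 compl_univ
      refine ⟨univ, Or.inr (by rw [hDtop]; exact le_top),
        (∅ : Set (Set ↥((univ : Set X)ᶜ))), ?_, fun U hU => absurd hU (notMem_empty U)⟩
      exact isTopologicalBasis_of_isOpen_of_nhds
        (fun u hu => absurd hu (notMem_empty u)) (fun a => (hempty.false a).elim)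
    · -- main case : 1 ≤ dimTH X < ⊤
      set D : ℝ≥0∞ := dimTH X with hD
      have hsel : ∀ n : ℕ, ∃ d, Q d ∧ d < D + ((n : ℝ≥0∞) + 1)⁻¹ := by
        intro n
        have hlt : D < D + ((n : ℝ≥0∞) + 1)⁻¹ := by
          refine ENNReal.lt_add_right hDtop ?_
          exact ENNReal.inv_ne_zero.2
            (ENNReal.add_ne_top.2 ⟨ENNReal.natCast_ne_top n, ENNReal.one_ne_top⟩)
        have hlt2 : (⨅ (d : ℝ≥0∞) (_ : Q d), d) < D + ((n : ℝ≥0∞) + 1)⁻¹ := by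
          rw [← hdim]; exact hlt
        obtain ⟨d, hd⟩ := iInf_lt_iff.1 hlt2
        obtain ⟨hQd, hdlt⟩ := iInf_lt_iff.1 hd
        exact ⟨d, hQd, hdlt⟩
      choose ds hQs hlts using hsel
      have hAn : ∀ n : ℕ, ∃ A : Set X, (dimH A + 1 ≤ ds n) ∧ ZDT Aᶜ := by
        intro n
        obtain ⟨B, hB, hBd⟩ := hQs n
        obtain ⟨A, hA1, hA2⟩ := exists_A_of_basis hB hBd
        refine ⟨A, ?_, hA2⟩
        rcases hA1 with rfl | h
        · rw [dimH_empty, zero_add]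
          exact h1 _ (hQs n)
        · exact h
      choose An hAd hAz using hAn
      borelize X
      have hHn : ∀ n : ℕ, ∃ H : Set X, An n ⊆ H ∧ IsGδ H ∧ dimH H ≤ dimH (An n) :=
        fun n => exists_isGδ_superset_dimH_le (An n)
      choose Hn hHsub hHG hHdim using hHn
      set A : Set X := ⋂ n, Hn n with hA
      have hdimA : dimH A + 1 ≤ D := by
        refine ENNReal.le_of_forall_pos_le_add fun ε hε _ => ?_
        obtain ⟨k, hk⟩ := ENNReal.exists_inv_nat_lt
          (a := (ε : ℝ≥0∞)) (by exact_mod_cast hε.ne')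
        calc dimH A + 1 ≤ dimH (Hn k) + 1 :=
              add_le_add_left (dimH_mono (iInter_subset _ k)) 1
          _ ≤ dimH (An k) + 1 := add_le_add_left (hHdim k) 1
          _ ≤ ds k := hAd k
          _ ≤ D + ((k : ℝ≥0∞) + 1)⁻¹ := (hlts k).le
          _ ≤ D + ε := add_le_add le_rfl ((ENNReal.inv_le_inv' le_self_add).trans hk.le)
      have hzdtA : ZDT Aᶜ := by
        have hC : ∀ n : ℕ, ∃ C : ℕ → Set X, (∀ k, IsClosed (C k)) ∧ (Hn n)ᶜ = ⋃ k, C k := by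
          intro n
          obtain ⟨T, hTo, hTc, hTeq⟩ := hHG n
          obtain ⟨g, hg⟩ := (hTc.insert univ).exists_eq_range (insert_nonempty _ _)
          refine ⟨fun k => (g k)ᶜ, ?_, ?_⟩
          · intro k
            show IsClosed ((g k)ᶜ)
            have hgk : g k ∈ insert univ T := by rw [hg]; exact mem_range_self k
            rcases hgk with h | h
            · rw [h]; exact isClosed_compl_iff.2 isOpen_univ
            · exact isClosed_compl_iff.2 (hTo _ h)
          · have hinter : Hn n = ⋂ k, g k := by
              rw [hTeq, ← sInter_range, ← hg, sInter_insert, univ_inter]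
            rw [hinter, compl_iInter]
        choose C hCcl hCeq using hC
        set e : ℕ ≃ ℕ × ℕ := (Denumerable.eqv (ℕ × ℕ)).symm with he
        set Fm : ℕ → Set X := fun j => C (e j).1 (e j).2 with hFm
        have hsubF : ∀ n k, C n k ⊆ Aᶜ := by
          intro n k
          have h1 : C n k ⊆ (Hn n)ᶜ := by
            rw [hCeq n]; exact subset_iUnion _ k
          refine h1.trans (compl_subset_compl.2 ?_)
          rw [hA]; exact iInter_subset _ n
        apply zdt_iUnion_closed Fm
        · apply Subset.antisymm
          · intro z hz
            have hz' : z ∈ ⋃ n, (Hn n)ᶜ := by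
              rw [← compl_iInter]; exact hz
            rcases mem_iUnion.1 hz' with ⟨n, hn⟩
            rw [hCeq n] at hn
            rcases mem_iUnion.1 hn with ⟨k, hk⟩
            refine mem_iUnion.2 ⟨e.symm (n, k), ?_⟩
            simp only [hFm, Equiv.apply_symm_apply]
            exact hk
          · intro z hz
            rcases mem_iUnion.1 hz with ⟨j, hj⟩
            exact hsubF (e j).1 (e j).2 hj
        · intro j
          rw [(hCcl (e j).1 (e j).2).closure_eq]
          exact inter_subset_left
        · intro j
          refine (hAz (e j).1).mono ?_
          have h1 : C (e j).1 (e j).2 ⊆ (Hn (e j).1)ᶜ := by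
            rw [hCeq (e j).1]; exact subset_iUnion _ (e j).2
          exact h1.trans (compl_subset_compl.2 (hHsub (e j).1))
      obtain ⟨B', hB'1, hB'2⟩ := subtype_basis_of_zdt hzdtA
      exact ⟨A, Or.inr hdimA, B', hB'1, hB'2⟩
end

section
/- Let X be a separable metric space which is the union of countably many closed subsets X_n. Then dim_tH X = sup_n dim_tH X_n (countable stability of the topological Hausdorff dimension for closed sets). -/
open TopologicalSpace Set ENNReal NNReal MeasureTheory Metric EMetric

section Aux

variable {α : Type*} [MetricSpace α]


/-- Separated sets in a metric space have disjoint open neighborhoods. -/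
lemma sepNhds {s t : Set α} (h1 : closure s ∩ t = ∅) (h2 : s ∩ closure t = ∅) :
    ∃ U V : Set α, IsOpen U ∧ IsOpen V ∧ s ⊆ U ∧ t ⊆ V ∧ Disjoint U V := by
  refine ⟨{x | infEdist x s < infEdist x t}, {x | infEdist x t < infEdist x s},
    isOpen_lt continuous_infEdist continuous_infEdist,
    isOpen_lt continuous_infEdist continuous_infEdist, ?_, ?_, ?_⟩
  · intro x hx
    have h0 : infEdist x s = 0 := infEdist_zero_of_mem hx
    have hxt : x ∉ closure t := fun hc => by
      have : x ∈ s ∩ closure t := ⟨hx, hc⟩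
      simp [h2] at this
    have : 0 < infEdist x t := infEdist_pos_iff_notMem_closure.2 hxt
    simpa [h0] using this
  · intro x hx
    have h0 : infEdist x t = 0 := infEdist_zero_of_mem hx
    have hxs : x ∉ closure s := fun hc => by
      have : x ∈ closure s ∩ t := ⟨hc, hx⟩
      simp [h1] at this
    have : 0 < infEdist x s := infEdist_pos_iff_notMem_closure.2 hxs
    simpa [h0] using this
  · rw [Set.disjoint_left]
    intro x hx hx'
    have hx1 : infEdist x s < infEdist x t := hx
    have hx2 : infEdist x t < infEdist x s := hx'
    exact absurd (hx1.trans hx2) (lt_irrefl _)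

/-- A space is zero-dimensional: every point has arbitrarily small clopen neighborhoods. -/
def IsZD' (Y : Type*) [TopologicalSpace Y] : Prop :=
  ∀ (x : Y) (O : Set Y), IsOpen O → x ∈ O → ∃ V : Set Y, IsClopen V ∧ x ∈ V ∧ V ⊆ O

lemma isZD_mono' {Y : Type*} [TopologicalSpace Y] {s t : Set Y} (hst : s ⊆ t)
    (h : IsZD' t) : IsZD' s := by
  intro x O hO hxO
  rcases isOpen_induced_iff.1 hO with ⟨O', hO', rfl⟩
  obtain ⟨V, hV, hxV, hVsub⟩ := h (Set.inclusion hst x) (Subtype.val ⁻¹' O')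
    (hO'.preimage continuous_subtype_val) hxO
  exact ⟨Set.inclusion hst ⁻¹' V, hV.preimage (continuous_inclusion hst), hxV,
    fun y hy => hVsub hy⟩

/-- Relative zero-dimensionality: points of `Z` have small neighborhoods (in `α`)
whose frontier misses `Z`. -/
def ZDSet' {α : Type*} [TopologicalSpace α] (Z : Set α) : Prop :=
  ∀ x ∈ Z, ∀ O : Set α, IsOpen O → x ∈ O →
    ∃ V : Set α, IsOpen V ∧ x ∈ V ∧ V ⊆ O ∧ frontier V ∩ Z = ∅

lemma zdset_of_isZD' {Z : Set α} (h : IsZD' Z) : ZDSet' Z := by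
  intro x hx O hO hxO
  obtain ⟨V, hV, hxV, hVsub⟩ := h ⟨x, hx⟩ (Subtype.val ⁻¹' O)
    (hO.preimage continuous_subtype_val) hxO
  rcases isOpen_induced_iff.1 hV.2 with ⟨O', hO', rfl⟩
  set Vi : Set α := Subtype.val '' (Subtype.val ⁻¹' O' : Set Z) with hVi
  have hViO' : Vi = O' ∩ Z := by
    simp [hVi, Set.image_preimage_eq_inter_range, Subtype.range_coe]
  have hViZ : Vi ⊆ Z := by rw [hViO']; exact inter_subset_right
  have hViO : Vi ⊆ O := by
    rintro _ ⟨y, hy, rfl⟩; exact hVsub hy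
  -- closed part
  rcases (isClosed_induced_iff.1 hV.1) with ⟨C, hC, hCeq⟩
  have hViC : Vi = C ∩ Z := by
    rw [hVi, ← hCeq]
    simp [Set.image_preimage_eq_inter_range, Subtype.range_coe, Set.inter_comm]
  have h1 : closure Vi ∩ (Z \ Vi) = ∅ := by
    apply Set.eq_empty_of_subset_empty
    rintro y ⟨hyc, hyZ, hyV⟩
    exact hyV (by rw [hViC]; exact ⟨(hC.closure_subset_iff.2 (by rw [hViC]; exact inter_subset_left)) hyc, hyZ⟩)
  have h2 : Vi ∩ closure (Z \ Vi) = ∅ := by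
    apply Set.eq_empty_of_subset_empty
    rintro y ⟨hyV, hyc⟩
    have hyO' : y ∈ O' := by rw [hViO'] at hyV; exact hyV.1
    have : O' ∩ closure (Z \ Vi) ⊆ closure (O' ∩ (Z \ Vi)) := hO'.inter_closure
    have hdisj : O' ∩ (Z \ Vi) = ∅ := by
      apply Set.eq_empty_of_subset_empty
      rintro z ⟨hz1, hz2, hz3⟩
      exact hz3 (by rw [hViO']; exact ⟨hz1, hz2⟩)
    have := this ⟨hyO', hyc⟩
    rw [hdisj] at this; simpa using this
  obtain ⟨U1, U2, hU1, hU2, hsub1, hsub2, hdisj⟩ := sepNhds h1 h2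
  refine ⟨U1 ∩ O, hU1.inter hO, ⟨hsub1 ⟨⟨x, hx⟩, hxV, rfl⟩, hxO⟩, inter_subset_right, ?_⟩
  apply Set.eq_empty_of_subset_empty
  rintro z ⟨hzf, hzZ⟩
  by_cases hzV : z ∈ Vi
  · exact hzf.2 ((((hU1.inter hO).interior_eq).symm ▸ ⟨hsub1 hzV, hViO hzV⟩ : z ∈ interior (U1 ∩ O)))
  · have hz2 : z ∈ U2 := hsub2 ⟨hzZ, hzV⟩
    have : U2 ∩ closure (U1 ∩ O) ⊆ closure (U2 ∩ (U1 ∩ O)) := hU2.inter_closure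
    have h0 : U2 ∩ (U1 ∩ O) = ∅ := by
      apply Set.eq_empty_of_subset_empty
      rintro w ⟨hw2, hw1, _⟩
      exact (Set.disjoint_left.1 hdisj hw1) hw2
    have := this ⟨hz2, hzf.1⟩
    rw [h0] at this; simpa using this




lemma hkey {A W' : Set α} (hA : IsOpen A) (h : W' ∩ closure A = ∅) : closure W' ∩ A = ∅ := by
  have h1 : W' ⊆ (closure A)ᶜ := by
    intro x hx hc
    have : x ∈ W' ∩ closure A := ⟨hx, hc⟩
    rw [h] at this; exact this
  have h2 : closure W' ⊆ closure (closure A)ᶜ := closure_mono h1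
  rw [closure_compl] at h2
  apply Set.eq_empty_of_subset_empty
  rintro x ⟨hx1, hx2⟩
  exact (h2 hx1) (interior_maximal subset_closure hA hx2)

lemma lemmaA [SecondCountableTopology α] {Z E F : Set α} (hZ : ZDSet' Z)
    (hE : IsClosed E) (hF : IsClosed F) (hEF : Disjoint E F) :
    ∃ U V : Set α, IsOpen U ∧ IsOpen V ∧ Disjoint U V ∧ E ⊆ U ∧ F ⊆ V ∧ Z ⊆ U ∪ V := by
  obtain ⟨G, hG, hEG, hGF⟩ := normal_exists_closure_subset hE hF.isOpen_compl
    (fun x hx hc => Set.disjoint_left.1 hEF hx hc)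
  obtain ⟨H, hH, hFH, hHG⟩ := normal_exists_closure_subset hF
    isClosed_closure.isOpen_compl (fun x hx hc => hGF hc hx)
  have hGHcl : closure G ∩ closure H = ∅ := by
    apply Set.eq_empty_of_subset_empty
    rintro x ⟨hx1, hx2⟩; exact hHG hx2 hx1
  -- the basic small neighborhoods of points of Z
  have hW : ∀ z ∈ Z, ∃ W : Set α, IsOpen W ∧ z ∈ W ∧ frontier W ∩ Z = ∅ ∧
      (W ∩ closure H = ∅ ∨ W ∩ closure G = ∅) := by
    intro z hz
    by_cases hzH : z ∈ closure H
    · have hzG : z ∉ closure G := fun hc => by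
        have : z ∈ closure G ∩ closure H := ⟨hc, hzH⟩
        rw [hGHcl] at this; exact this
      obtain ⟨W, hWo, hzW, hWsub, hWf⟩ := hZ z hz (closure G)ᶜ
        isClosed_closure.isOpen_compl hzG
      exact ⟨W, hWo, hzW, hWf, Or.inr (by
        apply Set.eq_empty_of_subset_empty; rintro x ⟨hx1, hx2⟩; exact hWsub hx1 hx2)⟩
    · obtain ⟨W, hWo, hzW, hWsub, hWf⟩ := hZ z hz (closure H)ᶜ
        isClosed_closure.isOpen_compl hzH
      exact ⟨W, hWo, hzW, hWf, Or.inl (by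
        apply Set.eq_empty_of_subset_empty; rintro x ⟨hx1, hx2⟩; exact hWsub hx1 hx2)⟩
  by_cases hZne : Z = ∅
  · refine ⟨G, H, hG, hH, ?_, hEG, hFH, by simp [hZne]⟩
    rw [Set.disjoint_left]
    intro x hxG hxH
    have : x ∈ closure G ∩ closure H := ⟨subset_closure hxG, subset_closure hxH⟩
    rw [hGHcl] at this; exact this
  -- choose the neighborhoods
  have hZne' : Z.Nonempty := Set.nonempty_iff_ne_empty.2 hZne
  choose! W hWo hWmem hWf hWtag using hW
  have hcov : Z ⊆ ⋃ z : Z, W z := fun z hz =>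
    Set.mem_iUnion.2 ⟨⟨z, hz⟩, hWmem z hz⟩
  obtain ⟨T, hTc, hTeq⟩ := TopologicalSpace.isOpen_iUnion_countable
    (fun z : Z => W z) (fun z => hWo z z.2)
  obtain ⟨z0, hz0⟩ := hZne'
  have hT'c : (insert (⟨z0, hz0⟩ : Z) T).Countable := hTc.insert _
  have hT'ne : (insert (⟨z0, hz0⟩ : Z) T).Nonempty := ⟨_, Set.mem_insert _ _⟩
  obtain ⟨f, hf⟩ := Set.Countable.exists_eq_range hT'c hT'ne
  set w : ℕ → Set α := fun n => W (f n) with hw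
  have hwo : ∀ n, IsOpen (w n) := fun n => hWo _ (f n).2
  have hwf : ∀ n, frontier (w n) ∩ Z = ∅ := fun n => hWf _ (f n).2
  have hwtag : ∀ n, w n ∩ closure H = ∅ ∨ w n ∩ closure G = ∅ := fun n => hWtag _ (f n).2
  have hcov' : Z ⊆ ⋃ n, w n := by
    intro z hz
    have h1 : z ∈ ⋃ i ∈ T, W i := hTeq ▸ hcov hz
    obtain ⟨i, hiT, hzi⟩ := Set.mem_iUnion₂.1 h1
    have : i ∈ insert (⟨z0, hz0⟩ : Z) T := Set.mem_insert_of_mem _ hiT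
    rw [hf] at this
    obtain ⟨n, rfl⟩ := this
    exact Set.mem_iUnion.2 ⟨n, hzi⟩
  -- disjointification
  set Tn : ℕ → Set α := fun n => w n \ ⋃ j ∈ Set.Iio n, closure (w j) with hTn
  have hTno : ∀ n, IsOpen (Tn n) := fun n =>
    (hwo n).sdiff (Set.Finite.isClosed_biUnion (Set.finite_Iio n) fun j _ => isClosed_closure)
  have hTnsub : ∀ n, Tn n ⊆ w n := fun n => Set.diff_subset
  have hTndisj : ∀ m n, m < n → Tn m ∩ Tn n = ∅ := by
    intro m n hmn
    apply Set.eq_empty_of_subset_empty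
    rintro x ⟨hx1, hx2⟩
    exact hx2.2 (Set.mem_biUnion hmn (subset_closure (hTnsub m hx1)))
  set U1 : Set α := ⋃ n ∈ {n : ℕ | w n ∩ closure H = ∅}, Tn n with hU1def
  set V1 : Set α := ⋃ n ∈ {n : ℕ | ¬ (w n ∩ closure H = ∅)}, Tn n with hV1def
  have hU1o : IsOpen U1 := isOpen_biUnion fun n _ => hTno n
  have hV1o : IsOpen V1 := isOpen_biUnion fun n _ => hTno n
  have hU1H : U1 ∩ closure H = ∅ := by
    apply Set.eq_empty_of_subset_empty
    rintro x ⟨hx1, hx2⟩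
    obtain ⟨n, hn, hxn⟩ := Set.mem_iUnion₂.1 hx1
    have : x ∈ w n ∩ closure H := ⟨hTnsub n hxn, hx2⟩
    rw [hn] at this; exact this
  have hV1G : V1 ∩ closure G = ∅ := by
    apply Set.eq_empty_of_subset_empty
    rintro x ⟨hx1, hx2⟩
    obtain ⟨n, hn, hxn⟩ := Set.mem_iUnion₂.1 hx1
    have htag := (hwtag n).resolve_left hn
    have : x ∈ w n ∩ closure G := ⟨hTnsub n hxn, hx2⟩
    rw [htag] at this; exact this
  have hU1V1 : U1 ∩ V1 = ∅ := by
    apply Set.eq_empty_of_subset_empty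
    rintro x ⟨hx1, hx2⟩
    obtain ⟨m, hm, hxm⟩ := Set.mem_iUnion₂.1 hx1
    obtain ⟨n, hn, hxn⟩ := Set.mem_iUnion₂.1 hx2
    have hmn : m ≠ n := fun h => hn (h ▸ hm)
    rcases hmn.lt_or_gt with h | h
    · have := hTndisj m n h; have hx : x ∈ Tn m ∩ Tn n := ⟨hxm, hxn⟩
      rw [this] at hx; exact hx
    · have := hTndisj n m h; have hx : x ∈ Tn n ∩ Tn m := ⟨hxn, hxm⟩
      rw [this] at hx; exact hx
  have hZU1V1 : Z ⊆ U1 ∪ V1 := by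
    intro z hz
    have hex : ∃ n, z ∈ w n := Set.mem_iUnion.1 (hcov' hz)
    classical
    set n := Nat.find hex with hndef
    have hzn : z ∈ w n := Nat.find_spec hex
    have hzT : z ∈ Tn n := by
      refine ⟨hzn, ?_⟩
      intro hc
      obtain ⟨j, hj, hzj⟩ := Set.mem_iUnion₂.1 hc
      have hznotj : z ∉ w j := Nat.find_min hex hj
      have : z ∈ frontier (w j) := by
        rw [(hwo j).frontier_eq, Set.mem_diff]
        exact ⟨hzj, hznotj⟩
      have : z ∈ frontier (w j) ∩ Z := ⟨this, hz⟩
      rw [hwf j] at this; exact this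
    by_cases htag : w n ∩ closure H = ∅
    · exact Or.inl (Set.mem_biUnion htag hzT)
    · exact Or.inr (Set.mem_biUnion htag hzT)
  -- assemble
  refine ⟨U1 ∪ (G \ closure V1), V1 ∪ (H \ closure U1),
    hU1o.union (hG.sdiff isClosed_closure), hV1o.union (hH.sdiff isClosed_closure), ?_, ?_, ?_, ?_⟩
  · rw [Set.disjoint_left]
    rintro x (hx | hx) (hy | hy)
    · have : x ∈ U1 ∩ V1 := ⟨hx, hy⟩; rw [hU1V1] at this; exact this
    · exact hy.2 (subset_closure hx)
    · exact hx.2 (subset_closure hy)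
    · have : x ∈ closure G ∩ closure H := ⟨subset_closure hx.1, subset_closure hy.1⟩
      rw [hGHcl] at this; exact this
  · intro x hx
    refine Or.inr ⟨hEG hx, fun hc => ?_⟩
    have hVG := hkey hG hV1G
    have : x ∈ closure V1 ∩ G := ⟨hc, hEG hx⟩
    rw [hVG] at this; exact this
  · intro x hx
    refine Or.inr ⟨hFH hx, fun hc => ?_⟩
    have hUH := hkey hH hU1H
    have : x ∈ closure U1 ∩ H := ⟨hc, hFH hx⟩
    rw [hUH] at this; exact this
  · intro z hz
    rcases hZU1V1 hz with h | h
    · exact Or.inl (Or.inl h)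
    · exact Or.inr (Or.inl h)







lemma lemmaB [SecondCountableTopology α] (C : ℕ → Set α) (hclo : ∀ k, IsClosed (C k))
    (hcov : ⋃ k, C k = Set.univ) (hzd : ∀ k, ZDSet' (C k)) : IsZD' α := by
  classical
  -- main separation statement
  have hsep : ∀ E F : Set α, IsClosed E → IsClosed F → Disjoint E F →
      ∃ U : Set α, IsClopen U ∧ E ⊆ U ∧ U ∩ F = ∅ := by
    intro E F hE hF hEF
    set Good : ℕ → Set α × Set α → Prop := fun n p =>
      IsOpen p.1 ∧ IsOpen p.2 ∧ E ⊆ p.1 ∧ F ⊆ p.2 ∧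
        Disjoint (closure p.1) (closure p.2) ∧ ∀ j ≤ n, C j ⊆ p.1 ∪ p.2 with hGood
    have step : ∀ k (E' F' : Set α), IsClosed E' → IsClosed F' → Disjoint E' F' →
        E ⊆ E' → F ⊆ F' →
        ∃ p : Set α × Set α, IsOpen p.1 ∧ IsOpen p.2 ∧ E' ⊆ p.1 ∧ F' ⊆ p.2 ∧
          Disjoint (closure p.1) (closure p.2) ∧ C k ⊆ p.1 ∪ p.2 := by
      intro k E' F' hE' hF' hEF' _ _
      obtain ⟨U', V', hU'o, hV'o, hUV', hEU', hFV', hCk⟩ := lemmaA (hzd k) hE' hF' hEF'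
      set E'' : Set α := E' ∪ (C k \ V') with hE''def
      set F'' : Set α := F' ∪ (C k \ U') with hF''def
      have hE''c : IsClosed E'' := hE'.union ((hclo k).sdiff hV'o)
      have hF''c : IsClosed F'' := hF'.union ((hclo k).sdiff hU'o)
      have hE''U : E'' ⊆ U' := by
        rintro x (hx | ⟨hx1, hx2⟩)
        · exact hEU' hx
        · rcases hCk hx1 with h | h
          · exact h
          · exact absurd h hx2
      have hF''V : F'' ⊆ V' := by
        rintro x (hx | ⟨hx1, hx2⟩)
        · exact hFV' hx
        · rcases hCk hx1 with h | h
          · exact absurd h hx2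
          · exact h
      have hdisj'' : Disjoint E'' F'' := Set.disjoint_left.2 fun x hx hy =>
        Set.disjoint_left.1 hUV' (hE''U hx) (hF''V hy)
      obtain ⟨U, hUo, hEU, hUcl⟩ := normal_exists_closure_subset hE''c
        hF''c.isOpen_compl (fun x hx hc => Set.disjoint_left.1 hdisj'' hx hc)
      obtain ⟨W, hWo, hFW, hWcl⟩ := normal_exists_closure_subset hF''c
        isClosed_closure.isOpen_compl (fun x hx hc => (hUcl hc) hx)
      refine ⟨(U, W), hUo, hWo, fun x hx => hEU (Or.inl hx), fun x hx => hFW (Or.inl hx),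
        Set.disjoint_left.2 fun x hx hc => (hWcl hc) hx, ?_⟩
      intro x hx
      by_cases hxV : x ∈ V'
      · exact Or.inr (hFW (Or.inr ⟨hx, fun hc => Set.disjoint_left.1 hUV' hc hxV⟩))
      · exact Or.inl (hEU (Or.inr ⟨hx, hxV⟩))
    have hbase : ∃ p, Good 0 p := by
      obtain ⟨p, h1, h2, h3, h4, h5, h6⟩ := step 0 E F hE hF hEF subset_rfl subset_rfl
      exact ⟨p, h1, h2, h3, h4, h5, fun j hj => by
        interval_cases j
        exact h6⟩
    have hrec : ∀ n (p : Set α × Set α), Good n p →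
        ∃ q : Set α × Set α, Good (n + 1) q ∧ p.1 ⊆ q.1 ∧ p.2 ⊆ q.2 := by
      intro n p hp
      obtain ⟨ho1, ho2, hEp, hFp, hdp, hCp⟩ := hp
      obtain ⟨q, h1, h2, h3, h4, h5, h6⟩ := step (n + 1) (closure p.1) (closure p.2)
        isClosed_closure isClosed_closure hdp
        (hEp.trans subset_closure) (hFp.trans subset_closure)
      refine ⟨q, ⟨h1, h2, hEp.trans (subset_closure.trans h3),
          hFp.trans (subset_closure.trans h4), h5, ?_⟩,
        subset_closure.trans h3, subset_closure.trans h4⟩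
      intro j hj
      rcases Nat.lt_or_ge j (n + 1) with h | h
      · exact (hCp j (Nat.lt_succ_iff.1 h)).trans
          (Set.union_subset_union (subset_closure.trans h3) (subset_closure.trans h4))
      · have : j = n + 1 := le_antisymm hj h
        subst this; exact h6
    -- build the sequence
    set g : ℕ → Set α × Set α := fun n =>
      Nat.rec (Classical.choose hbase)
        (fun n ih => if h : Good n ih then Classical.choose (hrec n ih h) else ih) n with hg
    have hg0 : Good 0 (g 0) := Classical.choose_spec hbase
    have hgsucc : ∀ n, Good n (g n) → Good (n + 1) (g (n + 1)) ∧ (g n).1 ⊆ (g (n + 1)).1 ∧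
        (g n).2 ⊆ (g (n + 1)).2 := by
      intro n hn
      have heq : g (n + 1) = if h : Good n (g n) then Classical.choose (hrec n (g n) h)
          else g n := rfl
      rw [heq, dif_pos hn]
      obtain ⟨h1, h2, h3⟩ := Classical.choose_spec (hrec n (g n) hn)
      exact ⟨h1, h2, h3⟩
    have hgood : ∀ n, Good n (g n) := by
      intro n; induction n with
      | zero => exact hg0
      | succ n ih => exact (hgsucc n ih).1
    have hmon1 : Monotone fun n => (g n).1 := monotone_nat_of_le_succ fun n => (hgsucc n (hgood n)).2.1
    have hmon2 : Monotone fun n => (g n).2 := monotone_nat_of_le_succ fun n => (hgsucc n (hgood n)).2.2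
    set U : Set α := ⋃ n, (g n).1 with hUdef
    set Wt : Set α := ⋃ n, (g n).2 with hWdef
    have hUo : IsOpen U := isOpen_iUnion fun n => (hgood n).1
    have hWo : IsOpen Wt := isOpen_iUnion fun n => (hgood n).2.1
    have hUW : U ∩ Wt = ∅ := by
      apply Set.eq_empty_of_subset_empty
      rintro x ⟨hx1, hx2⟩
      obtain ⟨m, hm⟩ := Set.mem_iUnion.1 hx1
      obtain ⟨n, hn⟩ := Set.mem_iUnion.1 hx2
      have h1 : x ∈ (g (max m n)).1 := hmon1 (le_max_left m n) hm
      have h2 : x ∈ (g (max m n)).2 := hmon2 (le_max_right m n) hn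
      exact Set.disjoint_left.1 (hgood (max m n)).2.2.2.2.1
        (subset_closure h1) (subset_closure h2)
    have hUWuniv : U ∪ Wt = Set.univ := by
      apply Set.eq_univ_of_forall
      intro x
      have : x ∈ ⋃ k, C k := hcov ▸ Set.mem_univ x
      obtain ⟨k, hk⟩ := Set.mem_iUnion.1 this
      rcases (hgood k).2.2.2.2.2 k le_rfl hk with h | h
      · exact Or.inl (Set.mem_iUnion.2 ⟨k, h⟩)
      · exact Or.inr (Set.mem_iUnion.2 ⟨k, h⟩)
    have hUcomp : Uᶜ = Wt := by
      ext x
      constructor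
      · intro hx
        rcases (Set.eq_univ_iff_forall.1 hUWuniv x) with h | h
        · exact absurd h hx
        · exact h
      · intro hx hc
        have : x ∈ U ∩ Wt := ⟨hc, hx⟩
        rw [hUW] at this; exact this
    refine ⟨U, ⟨?_, hUo⟩, ?_, ?_⟩
    · rw [← isOpen_compl_iff, hUcomp]; exact hWo
    · exact fun x hx => Set.mem_iUnion.2 ⟨0, (hgood 0).2.2.1 hx⟩
    · apply Set.eq_empty_of_subset_empty
      rintro x ⟨hx1, hx2⟩
      have : x ∈ Wt := Set.mem_iUnion.2 ⟨0, (hgood 0).2.2.2.1 hx2⟩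
      have hx : x ∈ U ∩ Wt := ⟨hx1, this⟩
      rw [hUW] at hx; exact hx
  -- conclude zero-dimensionality
  intro x O hO hxO
  obtain ⟨U, hU, hxU, hUO⟩ := hsep {x} Oᶜ isClosed_singleton hO.isClosed_compl
    (Set.disjoint_left.2 fun y hy hc => hc (by rwa [Set.mem_singleton_iff.1 hy]))
  refine ⟨U, hU, hxU rfl, fun y hy => ?_⟩
  by_contra hc
  have : y ∈ U ∩ Oᶜ := ⟨hy, hc⟩
  rw [hUO] at this; exact this


lemma exists_countable_subbasis' {Y : Type*} [TopologicalSpace Y] [SecondCountableTopology Y]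
    {B : Set (Set Y)} (hB : IsTopologicalBasis B) :
    ∃ B' : Set (Set Y), B' ⊆ B ∧ B'.Countable ∧ IsTopologicalBasis B' := by
  classical
  set C := countableBasis Y with hC
  have hCb : IsTopologicalBasis C := isBasis_countableBasis Y
  have hCc : C.Countable := countable_countableBasis Y
  set P : Set Y × Set Y → Prop := fun q => ∃ U ∈ B, q.1 ⊆ U ∧ U ⊆ q.2 with hP
  set pick : Set Y × Set Y → Set Y := fun q => if h : P q then h.choose else ∅ with hpick
  set B' : Set (Set Y) := pick '' ((C ×ˢ C) ∩ {q | P q}) with hB'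
  have hpickmem : ∀ q, P q → pick q ∈ B ∧ q.1 ⊆ pick q ∧ pick q ⊆ q.2 := by
    intro q hq
    rw [hpick]; simp only [dif_pos hq]
    exact ⟨hq.choose_spec.1, hq.choose_spec.2.1, hq.choose_spec.2.2⟩
  have hsub : B' ⊆ B := by
    rintro _ ⟨q, ⟨_, hq⟩, rfl⟩
    exact (hpickmem q hq).1
  refine ⟨B', hsub, (((hCc.prod hCc).mono inter_subset_left).image pick), ?_⟩
  apply isTopologicalBasis_of_isOpen_of_nhds
  · exact fun U hU => hB.isOpen (hsub hU)
  · intro x O hxO hO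
    obtain ⟨c2, hc2C, hxc2, hc2O⟩ := hCb.exists_subset_of_mem_open hxO hO
    obtain ⟨U, hUB, hxU, hUc2⟩ := hB.exists_subset_of_mem_open hxc2 (hCb.isOpen hc2C)
    obtain ⟨c1, hc1C, hxc1, hc1U⟩ := hCb.exists_subset_of_mem_open hxU (hB.isOpen hUB)
    have hq : P (c1, c2) := ⟨U, hUB, hc1U, hUc2⟩
    refine ⟨pick (c1, c2), ⟨(c1, c2), ⟨⟨hc1C, hc2C⟩, hq⟩, rfl⟩, ?_, ?_⟩
    · exact (hpickmem _ hq).2.1 hxc1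
    · exact ((hpickmem _ hq).2.2).trans hc2O





/-- If a subspace `s` has a basis whose frontiers (in `s`) map into `A`,
then `s \ A` is zero-dimensional. -/
lemma zd_of_basis {s : Set α} {B : Set (Set s)} (hB : IsTopologicalBasis B) (A : Set α)
    (hfr : ∀ V ∈ B, Subtype.val '' frontier V ⊆ A) : IsZD' ↥(s \ A) := by
  intro x O hO hxO
  rcases isOpen_induced_iff.1 hO with ⟨O', hO', rfl⟩
  have hxs : (x : α) ∈ s := x.2.1
  have hxO' : (⟨x, hxs⟩ : s) ∈ (Subtype.val ⁻¹' O' : Set s) := hxO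
  obtain ⟨W, hWB, hxW, hWO⟩ := hB.exists_subset_of_mem_open hxO'
    (hO'.preimage continuous_subtype_val)
  rcases isOpen_induced_iff.1 (hB.isOpen hWB) with ⟨W', hW', hWeq⟩
  set V : Set ↥(s \ A) := Subtype.val ⁻¹' W' with hV
  have hVopen : IsOpen V := hW'.preimage continuous_subtype_val
  have hvalW : Subtype.val '' W = W' ∩ s := by
    rw [← hWeq]
    simp [Set.image_preimage_eq_inter_range, Subtype.range_coe, Set.inter_comm]
  have hVclosed : IsClosed V := by
    rw [← closure_subset_iff_isClosed]
    intro y hy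
    have hy1 : (y : α) ∈ closure (Subtype.val '' V) := closure_subtype.1 hy
    have himg : (Subtype.val '' V : Set α) ⊆ Subtype.val '' W := by
      rintro _ ⟨z, hz, rfl⟩
      exact hvalW ▸ ⟨hz, z.2.1⟩
    have hy2 : (y : α) ∈ closure (Subtype.val '' W) := closure_mono himg hy1
    by_contra hyV
    have hys : (y : α) ∈ s := y.2.1
    have hyW : (⟨y, hys⟩ : s) ∈ closure W := closure_subtype.2 hy2
    have hynW : (⟨y, hys⟩ : s) ∉ W := by
      intro hc
      apply hyV
      have : (y : α) ∈ W' ∩ s := hvalW ▸ ⟨⟨y, hys⟩, hc, rfl⟩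
      exact this.1
    have hyfr : (⟨y, hys⟩ : s) ∈ frontier W := by
      rw [frontier, (hB.isOpen hWB).interior_eq]
      exact ⟨hyW, hynW⟩
    have : (y : α) ∈ A := hfr W hWB ⟨_, hyfr, rfl⟩
    exact y.2.2 this
  refine ⟨V, ⟨hVclosed, hVopen⟩, ?_, ?_⟩
  · have : (x : α) ∈ W' ∩ s := hvalW ▸ ⟨⟨x, hxs⟩, hxW, rfl⟩
    exact this.1
  · intro y hy
    have hys : (y : α) ∈ s := y.2.1
    have : (⟨y, hys⟩ : s) ∈ W := by rw [← hWeq]; exact hy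
    exact hWO this






lemma basis_of_zdset [SecondCountableTopology α] {A : Set α} (h : ZDSet' Aᶜ) :
    ∃ B : Set (Set α), IsTopologicalBasis B ∧ ∀ U ∈ B, frontier U ⊆ A := by
  refine ⟨{U | IsOpen U ∧ frontier U ⊆ A}, ?_, fun U hU => hU.2⟩
  apply isTopologicalBasis_of_isOpen_of_nhds (fun U hU => hU.1)
  intro x O hxO hO
  obtain ⟨ε, hε, hball⟩ := Metric.isOpen_iff.1 hO x hxO
  have hdisj : Disjoint ({x} : Set α) (Metric.ball x ε)ᶜ :=
    Set.disjoint_left.2 fun y hy hc => hc (by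
      rw [Set.mem_singleton_iff.1 hy]; exact Metric.mem_ball_self hε)
  obtain ⟨U, V, hUo, hVo, hUV, hxU, hFV, hcov⟩ := lemmaA h isClosed_singleton
    Metric.isOpen_ball.isClosed_compl hdisj
  have hUball : U ⊆ Metric.ball x ε := by
    intro y hy
    by_contra hc
    exact Set.disjoint_left.1 hUV hy (hFV hc)
  refine ⟨U, ⟨hUo, ?_⟩, hxU rfl, hUball.trans hball⟩
  intro z hz
  by_contra hzA
  rcases hcov hzA with hzU | hzV
  · refine (hz.2 : z ∉ interior U) ?_
    rw [hUo.interior_eq]; exact hzU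
  · have h0 : V ∩ U = ∅ := by
      apply Set.eq_empty_of_subset_empty
      rintro w ⟨hw1, hw2⟩
      exact Set.disjoint_left.1 hUV hw2 hw1
    have hsub : V ∩ closure U ⊆ closure (V ∩ U) := hVo.inter_closure
    have := hsub ⟨hzV, hz.1⟩
    rw [h0] at this; simpa using this

end Aux

/-- Countable stability of the topological Hausdorff dimension for closed sets. -/
theorem stmt11 (X : Type*) [MetricSpace X] [SeparableSpace X]
    (F : ℕ → Set X) (hcl : ∀ n, IsClosed (F n)) (hU : (⋃ n, F n) = Set.univ) :
    dimTH X = ⨆ n, dimTH (F n) := by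
  haveI : SecondCountableTopology X := UniformSpace.secondCountable_of_separable X
  apply le_antisymm
  · -- hard direction: dimTH X ≤ ⨆ n, dimTH (F n)
    apply le_of_forall_gt_imp_ge_of_dense
    intro d' hd'
    have hn : ∀ n, dimTH ↥(F n) < d' := fun n =>
      lt_of_le_of_lt (le_iSup (fun n => dimTH ↥(F n)) n) hd'
    have hwit : ∀ n, ∃ d : ℝ≥0∞, d < d' ∧ ∃ B : Set (Set ↥(F n)), IsTopologicalBasis B ∧
        ∀ U ∈ B, frontier U = ∅ ∨ dimH (frontier U) + 1 ≤ d := by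
      intro n
      have h1 := hn n
      rw [dimTH] at h1
      obtain ⟨d, hd⟩ := iInf_lt_iff.1 h1
      by_cases hP : ∃ B : Set (Set ↥(F n)), IsTopologicalBasis B ∧
          ∀ U ∈ B, frontier U = ∅ ∨ dimH (frontier U) + 1 ≤ d
      · rw [iInf_pos hP] at hd
        exact ⟨d, hd, hP⟩
      · rw [iInf_neg hP] at hd
        exact absurd hd not_top_lt
    choose d hdlt Bb hBbasis hBcond using hwit
    choose B' hB'sub hB'count hB'basis using fun n => exists_countable_subbasis' (hBbasis n)
    set Ak : (n : ℕ) → Set ↥(F n) := fun n => ⋃ V ∈ B' n, frontier V with hAk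
    set A : Set X := ⋃ n, Subtype.val '' Ak n with hA
    have hfr : ∀ n, ∀ V ∈ B' n, Subtype.val '' frontier V ⊆ A := by
      intro n V hV x hx
      exact Set.mem_iUnion.2 ⟨n, Set.image_mono (Set.subset_biUnion_of_mem hV) hx⟩
    have hzdn : ∀ n, IsZD' ↥(F n \ A) := fun n => zd_of_basis (hB'basis n) A (hfr n)
    have hzdsetn : ∀ n, ZDSet' (F n \ A) := fun n => zdset_of_isZD' (hzdn n)
    have hYzd : IsZD' ↥(Aᶜ) := by
      apply lemmaB (C := fun k => (Subtype.val ⁻¹' (F k) : Set ↥(Aᶜ)))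
      · exact fun k => (hcl k).preimage continuous_subtype_val
      · apply Set.eq_univ_of_forall
        intro y
        have hy : (y : X) ∈ ⋃ k, F k := by rw [hU]; trivial
        obtain ⟨k, hk⟩ := Set.mem_iUnion.1 hy
        exact Set.mem_iUnion.2 ⟨k, hk⟩
      · intro k z hz O hO hzO
        rcases isOpen_induced_iff.1 hO with ⟨O', hO', rfl⟩
        obtain ⟨V, hVo, hzV, hVO, hVfr⟩ := hzdsetn k z.1 ⟨hz, z.2⟩ O' hO' hzO
        refine ⟨Subtype.val ⁻¹' V, hVo.preimage continuous_subtype_val, hzV,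
          fun y hy => hVO hy, ?_⟩
        apply Set.eq_empty_of_subset_empty
        rintro y ⟨hy1, hy2⟩
        have hf1 : (y : X) ∈ frontier V :=
          continuous_subtype_val.frontier_preimage_subset V hy1
        have : (y : X) ∈ frontier V ∩ (F k \ A) := ⟨hf1, hy2, y.2⟩
        rw [hVfr] at this
        exact this
    have hZDSA : ZDSet' Aᶜ := zdset_of_isZD' hYzd
    obtain ⟨B0, hB0basis, hB0fr⟩ := basis_of_zdset hZDSA
    have hcond : ∀ U ∈ B0, frontier U = ∅ ∨ dimH (frontier U) + 1 ≤ d' := by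
      by_cases hd1 : 1 ≤ d'
      · have hAkb : ∀ n, dimH (Subtype.val '' Ak n) ≤ d' - 1 := by
          intro n
          rw [Isometry.dimH_image isometry_subtype_coe, hAk, dimH_bUnion (hB'count n)]
          apply iSup₂_le
          intro V hV
          rcases hBcond n V (hB'sub n hV) with h | h
          · rw [h, dimH_empty]; exact zero_le
          · exact ENNReal.le_sub_of_add_le_right (by simp) (h.trans (hdlt n).le)
        have hAb : dimH A ≤ d' - 1 := by
          rw [hA, dimH_iUnion]; exact iSup_le hAkb
        intro U hUB
        by_cases hfre : frontier U = ∅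
        · exact Or.inl hfre
        · refine Or.inr ?_
          calc dimH (frontier U) + 1 ≤ (d' - 1) + 1 :=
                add_le_add_left ((dimH_mono (hB0fr U hUB)).trans hAb) 1
            _ = d' := tsub_add_cancel_of_le hd1
      · have hAe : A = ∅ := by
          apply Set.eq_empty_of_subset_empty
          intro x hx
          obtain ⟨n, hn2⟩ := Set.mem_iUnion.1 hx
          obtain ⟨y, hy, rfl⟩ := hn2
          obtain ⟨V, hV, hyV⟩ := Set.mem_iUnion₂.1 hy
          rcases hBcond n V (hB'sub n hV) with h | h
          · rw [h] at hyV; exact hyV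
          · have h1 : (1 : ℝ≥0∞) ≤ d n := le_trans le_add_self h
            exact hd1 (h1.trans (hdlt n).le)
        intro U hUB
        refine Or.inl (Set.eq_empty_of_subset_empty ?_)
        rw [← hAe]
        exact hB0fr U hUB
    exact iInf₂_le d' ⟨B0, hB0basis, hcond⟩
  · -- easy direction: monotonicity
    apply iSup_le
    intro n
    refine le_iInf fun dd => le_iInf fun hd => ?_
    obtain ⟨B, hBb, hBc⟩ := hd
    refine iInf₂_le dd ⟨(Subtype.val ⁻¹' ·) '' B,
      hBb.isInducing Topology.IsInducing.subtypeVal, ?_⟩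
    rintro _ ⟨U, hUB, rfl⟩
    have hsub : frontier (Subtype.val ⁻¹' U : Set (F n)) ⊆ Subtype.val ⁻¹' frontier U :=
      continuous_subtype_val.frontier_preimage_subset U
    rcases hBc U hUB with h | h
    · left
      rw [h] at hsub
      apply Set.eq_empty_of_subset_empty
      intro y hy
      exact hsub hy
    · right
      have h1 : dimH (frontier (Subtype.val ⁻¹' U : Set (F n))) ≤ dimH (frontier U) := by
        rw [← Isometry.dimH_image isometry_subtype_coe]
        apply dimH_mono
        rintro _ ⟨y, hy, rfl⟩
        exact hsub hy
      exact (add_le_add_left h1 1).trans h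
end

section
/- The topological Hausdorff dimension is not stable for arbitrary countable unions: dim_tH ℚ = 0 and dim_tH(ℝ \ ℚ) = 0, but dim_tH ℝ = 1. -/
open TopologicalSpace Set ENNReal NNReal MeasureTheory

lemma frontier_Ioo_subset (a b : ℝ) : frontier (Ioo a b) ⊆ {a, b} := by
  rcases lt_or_ge a b with h | h
  · rw [frontier_Ioo h]
  · rw [Ioo_eq_empty (not_lt.mpr h), frontier_empty]
    exact empty_subset _

lemma dimTH_zero_of_dense_compl (S : Set ℝ) (hD : Dense Sᶜ) : dimTH ↥S = 0 := by
  refine le_antisymm ?_ (zero_le)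
  refine iInf₂_le 0 ?_
  set B₀ : Set (Set ℝ) := {U | ∃ a b : ℝ, a ∉ S ∧ b ∉ S ∧ U = Ioo a b} with hB₀
  have hbasis : IsTopologicalBasis B₀ := by
    refine isTopologicalBasis_of_isOpen_of_nhds ?_ ?_
    · rintro u ⟨a, b, _, _, rfl⟩; exact isOpen_Ioo
    · intro x u hxu hu
      rcases Metric.isOpen_iff.mp hu x hxu with ⟨ε, hε, hball⟩
      rcases hD.exists_mem_open isOpen_Ioo (nonempty_Ioo.mpr (by linarith : x - ε < x)) with
        ⟨a, haS, ha1, ha2⟩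
      rcases hD.exists_mem_open isOpen_Ioo (nonempty_Ioo.mpr (by linarith : x < x + ε)) with
        ⟨b, hbS, hb1, hb2⟩
      refine ⟨Ioo a b, ⟨a, b, haS, hbS, rfl⟩, ⟨ha2, hb1⟩, ?_⟩
      intro y hy
      apply hball
      rw [Real.ball_eq_Ioo]
      exact ⟨lt_of_lt_of_le ha1 hy.1.le, lt_of_le_of_lt hy.2.le hb2⟩
  refine ⟨(Subtype.val ⁻¹' ·) '' B₀, hbasis.isInducing Topology.IsInducing.subtypeVal, ?_⟩
  rintro U ⟨V, ⟨a, b, ha, hb, rfl⟩, rfl⟩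
  left
  rw [← subset_empty_iff]
  refine (continuous_subtype_val.frontier_preimage_subset _).trans ?_
  intro ⟨x, hxS⟩ hx
  have : x ∈ ({a, b} : Set ℝ) := frontier_Ioo_subset a b hx
  rcases this with h | h
  · exact ha (h ▸ hxS)
  · exact hb (h ▸ hxS)

lemma dimTH_real : dimTH ℝ = 1 := by
  refine le_antisymm ?_ ?_
  · refine iInf₂_le 1 ?_
    refine ⟨{U | ∃ a b : ℝ, U = Ioo a b}, ?_, ?_⟩
    · refine isTopologicalBasis_of_isOpen_of_nhds ?_ ?_
      · rintro u ⟨a, b, rfl⟩; exact isOpen_Ioo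
      · intro x u hxu hu
        rcases Metric.isOpen_iff.mp hu x hxu with ⟨ε, hε, hball⟩
        exact ⟨Ioo (x - ε) (x + ε), ⟨_, _, rfl⟩,
          ⟨by linarith, by linarith⟩,
          by rw [← Real.ball_eq_Ioo]; exact hball⟩
    · rintro U ⟨a, b, rfl⟩
      right
      have h0 : dimH (frontier (Ioo a b)) = 0 := by
        refine le_antisymm ?_ (zero_le)
        calc dimH (frontier (Ioo a b)) ≤ dimH ({a, b} : Set ℝ) :=
              dimH_mono (frontier_Ioo_subset a b)
          _ = 0 := Set.Countable.dimH_zero (by simp)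
      rw [h0, zero_add]
  · refine le_iInf₂ fun d hd => ?_
    by_contra hlt
    push_neg at hlt
    obtain ⟨B, hB, hcond⟩ := hd
    obtain ⟨U, hUB, h0U, hUsub⟩ :=
      hB.exists_subset_of_mem_open (show (0:ℝ) ∈ Ioo (-1) 1 by norm_num) isOpen_Ioo
    have hfront : frontier U = ∅ := by
      rcases hcond U hUB with h | h
      · exact h
      · exact absurd (le_add_self.trans h) (not_le.mpr hlt)
    have hclopen : IsClopen U := isClopen_iff_frontier_eq_empty.mpr hfront
    rcases isClopen_iff.mp hclopen with h | h
    · simp [h] at h0U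
    · have : (2:ℝ) ∈ Ioo (-1:ℝ) 1 := hUsub (h ▸ mem_univ 2)
      norm_num at this

/-- Failure of stability: `dimTH ℚ = 0`, `dimTH (ℝ \ ℚ) = 0`, yet `dimTH ℝ = 1`. -/
theorem stmt12 :
    dimTH (Set.range ((↑) : ℚ → ℝ)) = 0 ∧
    dimTH ↥((Set.range ((↑) : ℚ → ℝ))ᶜ) = 0 ∧
    dimTH ℝ = 1 := by
  refine ⟨?_, ?_, dimTH_real⟩
  · apply dimTH_zero_of_dense_compl
    exact dense_irrational
  · apply dimTH_zero_of_dense_compl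
    rw [compl_compl]
    exact Rat.denseRange_cast
end

section
/- Let K be a totally disconnected nonempty compact metric space. Then the set of injective functions is comeager in the Banach space C(K) of continuous real-valued functions on K with the supremum norm. -/
open TopologicalSpace Set ENNReal NNReal MeasureTheory

section Aux

variable {K : Type*} [MetricSpace K] [CompactSpace K] [TotallyDisconnectedSpace K]

/-- A fine finite clopen partition of a totally disconnected compact metric space. -/
lemma exists_clopen_partition {r : ℝ} (hr : 0 < r) :
    ∃ (m : ℕ) (A : Fin m → Set K) (p : Fin m → K),
      (∀ i, IsClopen (A i)) ∧ (∀ i, A i ⊆ Metric.ball (p i) r) ∧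
      (∀ x : K, ∃ i, x ∈ A i) ∧ (∀ i j, i ≠ j → Disjoint (A i) (A j)) := by
  classical
  -- choose clopen neighborhoods
  have hV : ∀ x : K, ∃ V : Set K, IsClopen V ∧ x ∈ V ∧ V ⊆ Metric.ball x r := fun x =>
    compact_exists_isClopen_in_isOpen Metric.isOpen_ball (Metric.mem_ball_self hr)
  choose V hVclopen hVmem hVsub using hV
  obtain ⟨t, ht⟩ := isCompact_univ.elim_finite_subcover V (fun x => (hVclopen x).2)
    (fun x _ => mem_iUnion.2 ⟨x, hVmem x⟩)
  set m := t.card with hm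
  set e := t.equivFin with he
  set U : Fin m → Set K := fun i => V ((e.symm i) : K) with hU
  refine ⟨m, fun i => U i \ ⋃ j ∈ {j : Fin m | j < i}, U j, fun i => ((e.symm i) : K), ?_, ?_, ?_, ?_⟩
  · intro i
    exact (hVclopen _).diff (Set.Finite.isClopen_biUnion (Set.toFinite _) fun j _ => hVclopen _)
  · intro i
    exact (Set.diff_subset).trans (hVsub _)
  · intro x
    have hx : x ∈ ⋃ y ∈ t, V y := ht (mem_univ x)
    obtain ⟨y, hyt, hxy⟩ := mem_iUnion₂.1 hx
    have hFne : (Finset.univ.filter (fun i : Fin m => x ∈ U i)).Nonempty := by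
      refine ⟨e ⟨y, hyt⟩, ?_⟩
      simp only [Finset.mem_filter, Finset.mem_univ, true_and, hU, Equiv.symm_apply_apply]
      exact hxy
    set F := Finset.univ.filter (fun i : Fin m => x ∈ U i)
    refine ⟨F.min' hFne, ?_, ?_⟩
    · have := F.min'_mem hFne
      simp only [F, Finset.mem_filter] at this
      exact this.2
    · intro hmem
      obtain ⟨j, hj⟩ := mem_iUnion₂.1 hmem
      obtain ⟨hjlt, hxj⟩ := hj
      have : F.min' hFne ≤ j := Finset.min'_le _ _ (by
        simp only [F, Finset.mem_filter, Finset.mem_univ, true_and]; exact hxj)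
      exact absurd this (not_le.2 hjlt)
  · intro i j hij
    rcases lt_or_gt_of_ne hij with h | h
    · rw [Set.disjoint_right]
      intro x hx hx'
      exact hx.2 (mem_iUnion₂.2 ⟨i, h, hx'.1⟩)
    · rw [Set.disjoint_left]
      intro x hx hx'
      exact hx.2 (mem_iUnion₂.2 ⟨j, h, hx'.1⟩)

/-- Choosing pairwise distinct values close to given values. -/
lemma exists_injective_approx (m : ℕ) (v : Fin m → ℝ) {ε : ℝ} (hε : 0 < ε) :
    ∃ c : Fin m → ℝ, Function.Injective c ∧ ∀ i, |c i - v i| < ε := by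
  have hfin : (Set.range fun p : {p : Fin m × Fin m // p.1 ≠ p.2} =>
      (v p.1.2 - v p.1.1) / ((p.1.1 : ℝ) - (p.1.2 : ℝ))).Finite := Set.finite_range _
  have hpos : (0 : ℝ) < ε / (m + 1) := by positivity
  have hIoo : (Set.Ioo (0 : ℝ) (ε / (m + 1))).Infinite := Set.infinite_coe_iff.1 (Set.Ioo.infinite hpos)
  obtain ⟨t, ht⟩ := (hIoo.diff hfin).nonempty
  obtain ⟨⟨ht0, htε⟩, htB⟩ := ht
  refine ⟨fun i => v i + t * (i : ℕ), ?_, ?_⟩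
  · intro i j hij
    by_contra hne
    apply htB
    have hcast : ((i : ℕ) : ℝ) ≠ ((j : ℕ) : ℝ) := by
      exact_mod_cast fun h => hne (Fin.val_injective (by exact_mod_cast h))
    refine ⟨⟨(i, j), hne⟩, ?_⟩
    show (v j - v i) / (((i : ℕ) : ℝ) - ((j : ℕ) : ℝ)) = t
    rw [div_eq_iff (sub_ne_zero.2 hcast)]
    simp only at hij
    linarith
  · intro i
    have : (0:ℝ) ≤ t * (i : ℕ) := by positivity
    rw [add_sub_cancel_left, abs_of_nonneg this]
    have h1 : ((i : ℕ) : ℝ) ≤ m := by exact_mod_cast (i.2.le)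
    calc t * ((i : ℕ) : ℝ) ≤ t * m := by nlinarith
      _ < ε / (m + 1) * (m + 1) := by
          apply lt_of_le_of_lt (b := t * (m + 1))
          · nlinarith
          · apply mul_lt_mul_of_pos_right htε; positivity
      _ = ε := by field_simp

variable (K) in
/-- The set of functions separating `r`-distant points. -/
def Ur (r : ℝ) : Set C(K, ℝ) := {f : C(K, ℝ) | ∀ x y : K, r ≤ dist x y → f x ≠ f y}

omit [TotallyDisconnectedSpace K] in
lemma isOpen_Ur (r : ℝ) : IsOpen (Ur K r) := by
  rw [Metric.isOpen_iff]
  intro f hf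
  set S : Set (K × K) := {p : K × K | r ≤ dist p.1 p.2} with hS
  rcases S.eq_empty_or_nonempty with hSe | hSne
  · exact ⟨1, one_pos, fun g _ x y hxy => absurd (Set.eq_empty_iff_forall_notMem.1 hSe (x, y)) (by simpa [hS] using hxy)⟩
  · have hScl : IsClosed S := isClosed_le continuous_const (continuous_dist.comp
      (continuous_fst.prodMk continuous_snd))
    have hScomp : IsCompact S := hScl.isCompact
    have hφ : ContinuousOn (fun p : K × K => |f p.1 - f p.2|) S :=
      ((f.continuous.comp continuous_fst).sub (f.continuous.comp continuous_snd)).abs.continuousOn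
    obtain ⟨p₀, hp₀S, hmin⟩ := hScomp.exists_isMinOn hSne hφ
    set d := |f p₀.1 - f p₀.2| with hd
    have hdpos : 0 < d := abs_pos.2 (sub_ne_zero.2 (hf p₀.1 p₀.2 hp₀S))
    refine ⟨d / 2, by positivity, fun g hg x y hxy => ?_⟩
    have hxyS : (x, y) ∈ S := hxy
    have h1 : d ≤ |f x - f y| := hmin hxyS
    have h2 : dist (g x) (f x) ≤ dist g f := ContinuousMap.dist_apply_le_dist x
    have h3 : dist (g y) (f y) ≤ dist g f := ContinuousMap.dist_apply_le_dist y
    have hgf : dist g f < d / 2 := Metric.mem_ball.1 hg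
    rw [Real.dist_eq] at h2 h3
    intro hcontra
    have hsum : f x - f y = (f x - g x) + (g y - f y) := by rw [hcontra]; ring
    have hbound : |f x - f y| ≤ |g x - f x| + |g y - f y| := by
      calc |f x - f y| = |(f x - g x) + (g y - f y)| := by rw [hsum]
        _ ≤ |f x - g x| + |g y - f y| := abs_add_le _ _
        _ = |g x - f x| + |g y - f y| := by rw [abs_sub_comm (f x)]
    linarith

lemma dense_Ur {r : ℝ} (hr : 0 < r) : Dense (Ur K r) := by
  rw [Metric.dense_iff]
  intro f ε hε
  -- uniform continuity of f
  have huc := CompactSpace.uniformContinuous_of_continuous f.continuous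
  obtain ⟨δ, hδ, hδf⟩ := Metric.uniformContinuous_iff.1 huc (ε / 4) (by positivity)
  set r' := min (r / 2) δ with hr'
  have hr'pos : 0 < r' := lt_min (by positivity) hδ
  obtain ⟨m, A, p, hclopen, hsub, hcov, hdisj⟩ := exists_clopen_partition (K := K) hr'pos
  obtain ⟨c, hcinj, hcv⟩ := exists_injective_approx m (fun i => f (p i)) (show (0:ℝ) < ε/4 by positivity)
  choose idx hidx using hcov
  have hidx_unique : ∀ (x : K) (i : Fin m), x ∈ A i → idx x = i := by
    intro x i hxi
    by_contra hne
    exact (hdisj _ _ hne).ne_of_mem (hidx x) hxi rfl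
  have hlc : IsLocallyConstant (fun x => c (idx x)) := by
    rw [IsLocallyConstant.iff_exists_open]
    intro x
    refine ⟨A (idx x), (hclopen _).2, hidx x, fun y hy => ?_⟩
    rw [hidx_unique y _ hy]
  set g : C(K, ℝ) := ⟨fun x => c (idx x), hlc.continuous⟩ with hg
  refine ⟨g, Metric.mem_ball.2 ?_, ?_⟩
  · rw [dist_comm]
    rw [ContinuousMap.dist_lt_iff hε]
    intro x
    have h1 : dist x (p (idx x)) < δ :=
      lt_of_lt_of_le (Metric.mem_ball.1 (hsub _ (hidx x))) (min_le_right _ _)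
    have h2 : |f x - f (p (idx x))| < ε / 4 := by
      have := hδf h1; rwa [Real.dist_eq] at this
    have h3 : |c (idx x) - f (p (idx x))| < ε / 4 := hcv (idx x)
    have hgx : g x = c (idx x) := rfl
    rw [hgx, Real.dist_eq, abs_sub_comm]
    calc |c (idx x) - f x| ≤ |c (idx x) - f (p (idx x))| + |f (p (idx x)) - f x| :=
          abs_sub_le _ _ _
      _ < ε / 4 + ε / 4 := by
          rw [abs_sub_comm (f (p (idx x)))]
          exact add_lt_add h3 h2
      _ ≤ ε := by linarith
  · intro x y hxy
    have hne : idx x ≠ idx y := by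
      intro heq
      have hx := hsub _ (hidx x)
      have hy := hsub _ (hidx y)
      rw [heq] at hx
      have : dist x y < r := by
        have d1 := Metric.mem_ball.1 hx
        have d2 := Metric.mem_ball.1 hy
        have hle : r' ≤ r / 2 := min_le_left _ _
        calc dist x y ≤ dist x (p (idx y)) + dist (p (idx y)) y := dist_triangle _ _ _
          _ < r' + r' := by rw [dist_comm (p (idx y)) y]; exact add_lt_add d1 d2
          _ ≤ r := by linarith
      exact absurd hxy (not_le.2 this)
    exact fun heq => hne (hcinj heq)

end Aux

/-- On a nonempty totally disconnected compact metric space, the generic continuous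
real-valued function is injective. -/
theorem stmt17 (K : Type*) [MetricSpace K] [CompactSpace K] [Nonempty K]
    [TotallyDisconnectedSpace K] :
    {f : C(K, ℝ) | Function.Injective ⇑f} ∈ residual C(K, ℝ) := by
  have key : ∀ n : ℕ, Ur K (1 / (n + 1 : ℝ)) ∈ residual C(K, ℝ) := fun n =>
    residual_of_dense_open (isOpen_Ur _) (dense_Ur (by positivity))
  have hmem : (⋂ n : ℕ, Ur K (1 / (n + 1 : ℝ))) ∈ residual C(K, ℝ) :=
    countable_iInter_mem.2 key
  refine Filter.mem_of_superset hmem ?_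
  intro f hf x y hxy
  by_contra hne
  have hd : 0 < dist x y := dist_pos.2 hne
  obtain ⟨n, hn⟩ := exists_nat_one_div_lt hd
  exact (Set.mem_iInter.1 hf n) x y hn.le hxy
end

section
/- Let K be a nonempty compact metric space such that the set ℱ of 'd-level narrow' functions (continuous f : K → ℝ for which there is a dense set S_f ⊆ ℝ with dim_H f⁻¹(y) ≤ d−1 for all y ∈ S_f) is somewhere dense in C(K). Then for every x₀ ∈ K and r > 0 with ∂U(x₀,r) ≠ ∅ there exists an open set U with x₀ ∈ U ⊆ U(x₀,r) and dim_H(∂U) ≤ d−1; i.e. K has a basis of open sets whose boundaries have Hausdorff dimension at most d−1. -/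
open TopologicalSpace Set ENNReal NNReal MeasureTheory

/-- If the set of `d`-level narrow functions is somewhere dense in `C(K)`, then every
point has arbitrarily small open neighborhoods with boundaries of Hausdorff dimension
at most `d - 1`; in fact `K` has a basis of such sets. -/
theorem stmt19 (K : Type*) [MetricSpace K] [CompactSpace K] [Nonempty K] (d : ℝ≥0∞)
    (hdense : ∃ O : Set C(K, ℝ), IsOpen O ∧ O.Nonempty ∧
      O ⊆ closure {f : C(K, ℝ) | ∃ S : Set ℝ, Dense S ∧
        ∀ y ∈ S, ⇑f ⁻¹' {y} = ∅ ∨ dimH (⇑f ⁻¹' {y}) + 1 ≤ d}) :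
    (∀ (x₀ : K) (r : ℝ), 0 < r → frontier (Metric.ball x₀ r) ≠ ∅ →
      ∃ U : Set K, IsOpen U ∧ x₀ ∈ U ∧ U ⊆ Metric.ball x₀ r ∧
        (frontier U = ∅ ∨ dimH (frontier U) + 1 ≤ d)) ∧
    ∃ B : Set (Set K), IsTopologicalBasis B ∧
      ∀ U ∈ B, frontier U = ∅ ∨ dimH (frontier U) + 1 ≤ d := by
  have main : ∀ (x₀ : K) (r : ℝ), 0 < r →
      ∃ U : Set K, IsOpen U ∧ x₀ ∈ U ∧ U ⊆ Metric.ball x₀ r ∧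
        (frontier U = ∅ ∨ dimH (frontier U) + 1 ≤ d) := by
      intro x₀ r hr
      obtain ⟨O, hO, ⟨f₀, hf₀⟩, hsub⟩ := hdense
      obtain ⟨ε, hε, hball⟩ := Metric.isOpen_iff.1 hO f₀ hf₀
      obtain ⟨r₁, hr₁, hcont⟩ := Metric.continuousAt_iff.1
        (f₀.continuous.continuousAt (x := x₀)) (ε/16) (by positivity)
      set r' : ℝ := min r r₁ / 2 with hr'def
      have hr'pos : 0 < r' := half_pos (lt_min hr hr₁)
      have hr'r : r' ≤ r := le_trans (half_le_self (le_min hr.le hr₁.le)) (by simp [min_le_left r r₁])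
      have hr'r₁ : r' < r₁ := by
        have := min_le_right r r₁
        rw [hr'def]
        linarith
      -- the bump function
      have hφc : Continuous fun x : K => max (1 - dist x x₀ / r') 0 :=
        (continuous_const.sub ((continuous_id.dist continuous_const).div_const r')).max continuous_const
      set φ : C(K, ℝ) := ⟨fun x => max (1 - dist x x₀ / r') 0, hφc⟩ with hφdef
      have hφ01 : ∀ x, 0 ≤ φ x ∧ φ x ≤ 1 := by
        intro x
        constructor
        · exact le_max_right _ _
        · apply max_le _ zero_le_one
          have : 0 ≤ dist x x₀ / r' := div_nonneg dist_nonneg hr'pos.le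
          linarith
      have hφx₀ : φ x₀ = 1 := by
        simp [hφdef]
      have hφsphere : ∀ x, dist x x₀ = r' → φ x = 0 := by
        intro x hx
        simp [hφdef, hx, div_self hr'pos.ne']
      set h : C(K, ℝ) := f₀ - (ε/4) • φ with hhdef
      have hhapp : ∀ x, h x = f₀ x - (ε/4) * φ x := by
        intro x; simp [hhdef]
      have hdisth : dist h f₀ ≤ ε/4 := by
        rw [ContinuousMap.dist_le (by positivity)]
        intro x
        rw [Real.dist_eq, hhapp]
        have := hφ01 x
        rw [abs_of_nonpos (by nlinarith)]
        nlinarith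
      have hhO : h ∈ O := hball (by
        rw [Metric.mem_ball]
        exact lt_of_le_of_lt hdisth (by linarith))
      obtain ⟨g, hgF, hgh⟩ := Metric.mem_closure_iff.1 (hsub hhO) (ε/32) (by positivity)
      obtain ⟨S, hS, hSy⟩ := hgF
      rw [dist_comm] at hgh
      have happrox : ∀ x, |g x - h x| < ε/32 := fun x =>
        lt_of_le_of_lt (by simpa [Real.dist_eq] using ContinuousMap.dist_apply_le_dist (f := g) (g := h) x) hgh
      -- key estimates
      have hgx₀ : g x₀ < f₀ x₀ - 7*ε/32 := by
        have := happrox x₀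
        have h2 := hhapp x₀
        rw [hφx₀] at h2
        have := abs_lt.1 this
        linarith [this.2]
      have hgsphere : ∀ x ∈ Metric.sphere x₀ r', f₀ x₀ - 3*ε/32 < g x := by
        intro x hx
        rw [Metric.mem_sphere] at hx
        have h1 := happrox x
        have h2 := hhapp x
        rw [hφsphere x hx] at h2
        have h3 : dist (f₀ x) (f₀ x₀) < ε/16 := hcont (by rw [hx]; exact hr'r₁)
        rw [Real.dist_eq] at h3
        have h1' := abs_lt.1 h1
        have h3' := abs_lt.1 h3
        linarith [h1'.1, h3'.1]
      obtain ⟨s, hsS, hsI⟩ := hS.exists_between (show f₀ x₀ - 7*ε/32 < f₀ x₀ - 3*ε/32 by linarith)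
      set U : Set K := {x | g x < s} ∩ Metric.ball x₀ r' with hUdef
      have hfr : frontier U ⊆ ⇑g ⁻¹' {s} := by
        intro x hx
        rcases frontier_inter_subset {x | g x < s} (Metric.ball x₀ r') hx with ⟨h1, _⟩ | ⟨h1, h2⟩
        · exact frontier_lt_subset_eq g.continuous continuous_const h1
        · exfalso
          have hle : g x ≤ s := closure_lt_subset_le g.continuous continuous_const h1
          have hx' : x ∈ Metric.sphere x₀ r' := Metric.frontier_ball_subset_sphere h2
          have := hgsphere x hx'
          have := hsI.2
          linarith
      refine ⟨U, (isOpen_lt g.continuous continuous_const).inter Metric.isOpen_ball,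
        ⟨lt_trans hgx₀ hsI.1, Metric.mem_ball_self hr'pos⟩,
        (inter_subset_right).trans (Metric.ball_subset_ball hr'r), ?_⟩
      rcases hSy s hsS with hemp | hdim
      · left
        rw [hemp] at hfr
        exact subset_empty_iff.1 hfr
      · right
        exact le_trans (add_le_add_left (dimH_mono hfr) 1) hdim
  refine ⟨fun x₀ r hr _ => main x₀ r hr, ?_⟩
  refine ⟨{U : Set K | IsOpen U ∧ (frontier U = ∅ ∨ dimH (frontier U) + 1 ≤ d)}, ?_, fun U hU => hU.2⟩
  apply isTopologicalBasis_of_isOpen_of_nhds (fun U hU => hU.1)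
  intro x V hxV hV
  obtain ⟨r, hr, hrball⟩ := Metric.isOpen_iff.1 hV x hxV
  obtain ⟨U, hUo, hxU, hUsub, hcond⟩ := main x r hr
  exact ⟨U, ⟨hUo, hcond⟩, hxU, hUsub.trans hrball⟩
end
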